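/- arXiv:1503.04314 — 5 statements merged into one kernel-verified Lean document; each statement's English description precedes it below -/
import Mathlib

section
/- Uniqueness of the representation (i) in Theorem 1: let λ, λ' ∈ ℂ with Im λ ≥ 0 and Im λ' ≥ 0, let d, d' ∈ ℝ, and let σ, σ' be nonzero finite Borel measures on ℝ with compact infinite supports. If for every z ∈ ℂ with Im z > 0 and z ∉ {λ, λ'} one has (z + d + ∫ dσ(t)/(t−z))/((z−λ)(z−conj λ)) = (z + d' + ∫ dσ'(t)/(t−z))/((z−λ')(z−conj λ')), then λ = λ', d = d', and σ = σ'. -/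
open MeasureTheory Complex Filter

/-- Cauchy transform of a Borel measure on ℝ, at a point `z` (defined off the support). -/
noncomputable def cauchyT (σ : Measure ℝ) (z : ℂ) : ℂ := ∫ t, ((t : ℂ) - z)⁻¹ ∂σ

/-- Topological support of a Borel measure on ℝ. -/
def msupport (σ : Measure ℝ) : Set ℝ := {x | ∀ U ∈ nhds x, σ U ≠ 0}

lemma msupport_compl_null (σ : Measure ℝ) : σ (msupport σ)ᶜ = 0 := by
  apply measure_null_of_locally_null
  intro x hx
  simp only [msupport, Set.mem_compl_iff, Set.mem_setOf_eq, not_forall] at hx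
  obtain ⟨U, hU, hU0⟩ := hx
  push_neg at hU0
  exact ⟨U, nhdsWithin_le_nhds hU, hU0⟩

lemma ae_abs_le (σ : Measure ℝ) {R : ℝ} (hR : ∀ x ∈ msupport σ, |x| ≤ R) :
    ∀ᵐ t ∂σ, |t| ≤ R := by
  rw [ae_iff]
  refine measure_mono_null ?_ (msupport_compl_null σ)
  intro x hx
  simp only [Set.mem_setOf_eq, not_le] at hx
  intro hmem
  exact absurd (hR x hmem) (not_le.mpr hx)

section core
variable (σ : Measure ℝ) [IsFiniteMeasure σ]

lemma norm_inv_le (z : ℂ) (hz : 0 < z.im) (t : ℝ) : ‖((t:ℂ) - z)⁻¹‖ ≤ (z.im)⁻¹ := by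
  rw [norm_inv]
  apply inv_anti₀ hz
  calc z.im = |((t:ℂ) - z).im| := by simp [abs_of_nonpos, hz.le]
  _ ≤ ‖(t:ℂ) - z‖ := Complex.abs_im_le_norm _

lemma continuous_inv_t (z : ℂ) (hz : z.im ≠ 0) : Continuous (fun t : ℝ => ((t:ℂ) - z)⁻¹) := by
  apply Continuous.inv₀ (by continuity)
  intro t h
  apply hz
  have : ((t:ℂ) - z).im = 0 := by rw [h]; simp
  simpa using this.symm

lemma integrable_inv (z : ℂ) (hz : 0 < z.im) :
    Integrable (fun t : ℝ => ((t:ℂ) - z)⁻¹) σ := by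
  refine (integrable_const ((z.im)⁻¹)).mono' ?_ ?_
  · exact (continuous_inv_t z hz.ne').aestronglyMeasurable
  · exact Eventually.of_forall fun t => norm_inv_le z hz t

lemma integrable_pow_mul_inv (z : ℂ) (hz : 0 < z.im) {R : ℝ} (hR : 0 ≤ R)
    (hb : ∀ᵐ t ∂σ, |t| ≤ R) (k : ℕ) :
    Integrable (fun t : ℝ => (t:ℂ)^k * ((t:ℂ) - z)⁻¹) σ := by
  refine (integrable_const (R^k * (z.im)⁻¹)).mono' ?_ ?_
  · exact (Continuous.mul (by continuity) (continuous_inv_t z hz.ne')).aestronglyMeasurable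
  · filter_upwards [hb] with t ht
    rw [norm_mul]
    have h1 : ‖(t:ℂ)^k‖ ≤ R^k := by
      rw [norm_pow]
      simp only [Complex.norm_real, Real.norm_eq_abs]
      exact pow_le_pow_left₀ (abs_nonneg t) ht k
    exact mul_le_mul h1 (norm_inv_le z hz t) (norm_nonneg _) (pow_nonneg hR k)

lemma integrable_pow {R : ℝ} (hb : ∀ᵐ t ∂σ, |t| ≤ R) (k : ℕ) :
    Integrable (fun t : ℝ => t^k) σ := by
  refine (integrable_const (R^k)).mono' (by fun_prop) ?_
  filter_upwards [hb] with t ht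
  calc ‖t^k‖ = |t|^k := by rw [Real.norm_eq_abs, _root_.abs_pow]
    _ ≤ R^k := pow_le_pow_left₀ (abs_nonneg t) ht k

lemma norm_gk_le (z : ℂ) (hz : 0 < z.im) {R : ℝ} (hR : 0 ≤ R)
    (hb : ∀ᵐ t ∂σ, |t| ≤ R) (k : ℕ) :
    ‖∫ t, (t:ℂ)^k * ((t:ℂ) - z)⁻¹ ∂σ‖ ≤ R^k * (σ Set.univ).toReal * (z.im)⁻¹ := by
  have := norm_integral_le_of_norm_le (f := fun t : ℝ => (t:ℂ)^k * ((t:ℂ) - z)⁻¹)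
    (integrable_const (R^k * (z.im)⁻¹) (μ := σ)) ?_
  · rw [integral_const] at this
    calc ‖∫ t, (t:ℂ)^k * ((t:ℂ) - z)⁻¹ ∂σ‖ ≤ (σ Set.univ).toReal • (R^k * (z.im)⁻¹) := this
    _ = R^k * (σ Set.univ).toReal * (z.im)⁻¹ := by rw [smul_eq_mul]; ring
  · filter_upwards [hb] with t ht
    rw [norm_mul]
    have h1 : ‖(t:ℂ)^k‖ ≤ R^k := by
      rw [norm_pow]
      simp only [Complex.norm_real, Real.norm_eq_abs]
      exact pow_le_pow_left₀ (abs_nonneg t) ht k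
    exact mul_le_mul h1 (norm_inv_le z hz t) (norm_nonneg _) (pow_nonneg hR k)
end core

section core2
variable (σ : Measure ℝ) [IsFiniteMeasure σ]

lemma im_cauchyT_nonneg (z : ℂ) (hz : 0 < z.im) : 0 ≤ (cauchyT σ z).im := by
  rw [cauchyT]
  have h : (0:ℝ) ≤ RCLike.im (K := ℂ) (∫ t, ((t:ℂ) - z)⁻¹ ∂σ) := by
    rw [← integral_im (integrable_inv σ z hz)]
    apply integral_nonneg
    intro t
    show 0 ≤ (((t:ℂ) - z)⁻¹).im
    rw [Complex.inv_im]
    apply div_nonneg _ (Complex.normSq_nonneg _)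
    simp only [Complex.sub_im, Complex.ofReal_im, zero_sub, neg_neg]
    exact hz.le
  exact h

lemma im_N_pos (d : ℝ) (z : ℂ) (hz : 0 < z.im) : z.im ≤ (z + (d:ℂ) + cauchyT σ z).im := by
  have := im_cauchyT_nonneg σ z hz
  simp only [Complex.add_im, Complex.ofReal_im]
  linarith

lemma N_ne_zero (d : ℝ) (z : ℂ) (hz : 0 < z.im) : z + (d:ℂ) + cauchyT σ z ≠ 0 := by
  intro h
  have := im_N_pos σ d z hz
  rw [h] at this
  simp at this
  linarith

/-- key algebraic identity between successive moment transforms -/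
lemma gk_succ (z : ℂ) (hz : 0 < z.im) {R : ℝ} (hR : 0 ≤ R) (hb : ∀ᵐ t ∂σ, |t| ≤ R) (k : ℕ) :
    ∫ t, (t:ℂ)^(k+1) * ((t:ℂ) - z)⁻¹ ∂σ
      = z * ∫ t, (t:ℂ)^k * ((t:ℂ) - z)⁻¹ ∂σ + ((∫ t, t^k ∂σ : ℝ) : ℂ) := by
  have hne : ∀ t : ℝ, (t:ℂ) - z ≠ 0 := by
    intro t h
    have : ((t:ℂ) - z).im = 0 := by rw [h]; simp
    simp only [Complex.sub_im, Complex.ofReal_im, zero_sub, neg_eq_zero] at this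
    exact hz.ne' this
  have step1 : ∀ t : ℝ, (t:ℂ)^(k+1) * ((t:ℂ) - z)⁻¹
      = z * ((t:ℂ)^k * ((t:ℂ) - z)⁻¹) + (t:ℂ)^k := by
    intro t
    field_simp [hne t]
    ring
  rw [show (fun t : ℝ => (t:ℂ)^(k+1) * ((t:ℂ) - z)⁻¹)
      = (fun t : ℝ => z * ((t:ℂ)^k * ((t:ℂ) - z)⁻¹) + (t:ℂ)^k) from funext step1]
  have hint1 : Integrable (fun t : ℝ => z * ((t:ℂ)^k * ((t:ℂ) - z)⁻¹)) σ :=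
    (integrable_pow_mul_inv σ z hz hR hb k).const_mul z
  have hint2 : Integrable (fun t : ℝ => (t:ℂ)^k) σ := by
    have : (fun t : ℝ => (t:ℂ)^k) = (fun t : ℝ => ((t^k : ℝ) : ℂ)) := by
      funext t; push_cast; ring
    rw [this]
    exact (integrable_pow σ hb k).ofReal
  rw [integral_add hint1 hint2, MeasureTheory.integral_const_mul]
  congr 1
  have : (fun t : ℝ => (t:ℂ)^k) = (fun t : ℝ => ((t^k : ℝ) : ℂ)) := by
    funext t; push_cast; ring
  rw [this]
  exact integral_ofReal
end core2

section core3
variable (σ : Measure ℝ) [IsFiniteMeasure σ]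

lemma im_yI (y : ℝ) : ((y:ℂ)*I).im = y := by simp

lemma tendsto_gk_atTop {R : ℝ} (hR : 0 ≤ R) (hb : ∀ᵐ t ∂σ, |t| ≤ R) (k : ℕ) :
    Tendsto (fun y : ℝ => ∫ t, (t:ℂ)^k * ((t:ℂ) - (y:ℂ)*I)⁻¹ ∂σ) atTop (nhds 0) := by
  refine squeeze_zero_norm' (a := fun y : ℝ => (R^k * (σ Set.univ).toReal) * y⁻¹) ?_ ?_
  · filter_upwards [eventually_gt_atTop 0] with y hy
    have := norm_gk_le σ ((y:ℂ)*I) (by rw [im_yI]; exact hy) hR hb k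
    rw [im_yI] at this
    linarith [this]
  · simpa using (tendsto_inv_atTop_zero (𝕜 := ℝ)).const_mul (R^k * (σ Set.univ).toReal)

/-- continuity of cauchyT along vertical approach at a point with positive imaginary part -/
lemma tendsto_cauchyT_vert (z₀ : ℂ) (hz₀ : 0 < z₀.im) :
    Tendsto (fun ε : ℝ => cauchyT σ (z₀ + (ε:ℂ)*I)) (nhdsWithin 0 (Set.Ioi 0))
      (nhds (cauchyT σ z₀)) := by
  apply tendsto_integral_filter_of_dominated_convergence (bound := fun _ => (z₀.im)⁻¹)
  · filter_upwards [self_mem_nhdsWithin] with ε (hε : 0 < ε)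
    have him : 0 < (z₀ + (ε:ℂ)*I).im := by simp only [Complex.add_im, Complex.mul_im,
      Complex.ofReal_re, Complex.I_im, Complex.ofReal_im, Complex.I_re]; nlinarith
    exact (continuous_inv_t (z₀ + (ε:ℂ)*I) him.ne').aestronglyMeasurable
  · filter_upwards [self_mem_nhdsWithin] with ε (hε : 0 < ε)
    apply Eventually.of_forall
    intro t
    have him : z₀.im ≤ (z₀ + (ε:ℂ)*I).im := by
      simp only [Complex.add_im, Complex.mul_im, Complex.ofReal_re, Complex.I_im,
        Complex.ofReal_im, Complex.I_re]; nlinarith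
    calc ‖((t:ℂ) - (z₀ + (ε:ℂ)*I))⁻¹‖ ≤ ((z₀ + (ε:ℂ)*I).im)⁻¹ :=
          norm_inv_le _ (lt_of_lt_of_le hz₀ him) t
      _ ≤ (z₀.im)⁻¹ := by
          apply inv_anti₀ hz₀ him
  · exact integrable_const _
  · apply Eventually.of_forall
    intro t
    have hne : (t:ℂ) - z₀ ≠ 0 := by
      intro h
      have : ((t:ℂ) - z₀).im = 0 := by rw [h]; simp
      simp only [Complex.sub_im, Complex.ofReal_im, zero_sub, neg_eq_zero] at this
      exact hz₀.ne' this
    have hcont : ContinuousAt (fun ε : ℝ => ((t:ℂ) - (z₀ + (ε:ℂ)*I))⁻¹) 0 := by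
      apply ContinuousAt.inv₀ (by fun_prop)
      simpa using hne
    have := hcont.tendsto
    simp only [Complex.ofReal_zero, zero_mul, add_zero] at this
    exact this.mono_left nhdsWithin_le_nhds

/-- atom limit: ε I * cauchyT (x₀ + ε I) → -σ({x₀}) -/
lemma tendsto_atom (x₀ : ℝ) :
    Tendsto (fun ε : ℝ => ((ε:ℂ)*I) * cauchyT σ ((x₀:ℂ) + (ε:ℂ)*I)) (nhdsWithin 0 (Set.Ioi 0))
      (nhds (-((σ {x₀}).toReal : ℂ))) := by
  have key : ∀ ε : ℝ, ((ε:ℂ)*I) * cauchyT σ ((x₀:ℂ) + (ε:ℂ)*I)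
      = ∫ t, ((ε:ℂ)*I) * (((t:ℂ) - ((x₀:ℂ) + (ε:ℂ)*I))⁻¹) ∂σ := by
    intro ε
    rw [cauchyT, MeasureTheory.integral_const_mul]
  simp only [key]
  have hlim : -((σ {x₀}).toReal : ℂ)
      = ∫ t, Set.indicator {x₀} (fun _ => (-1:ℂ)) t ∂σ := by
    rw [integral_indicator (measurableSet_singleton x₀), setIntegral_const]
    simp
    rfl
  rw [hlim]
  apply tendsto_integral_filter_of_dominated_convergence (bound := fun _ => (1:ℝ))
  · filter_upwards [self_mem_nhdsWithin] with ε (hε : 0 < ε)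
    have him : 0 < ((x₀:ℂ) + (ε:ℂ)*I).im := by simp [hε]
    exact (continuous_const.mul (continuous_inv_t _ him.ne')).aestronglyMeasurable
  · filter_upwards [self_mem_nhdsWithin] with ε (hε : 0 < ε)
    apply Eventually.of_forall
    intro t
    rw [norm_mul]
    have h1 : ‖(ε:ℂ)*I‖ = ε := by
      simp [abs_of_pos hε]
    have h2 : ε ≤ ‖(t:ℂ) - ((x₀:ℂ) + (ε:ℂ)*I)‖ := by
      calc ε = |((t:ℂ) - ((x₀:ℂ) + (ε:ℂ)*I)).im| := by
            simp [abs_of_nonpos, hε.le, abs_of_pos hε]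
        _ ≤ ‖(t:ℂ) - ((x₀:ℂ) + (ε:ℂ)*I)‖ := Complex.abs_im_le_norm _
    rw [h1, norm_inv]
    rw [mul_inv_le_iff₀ (lt_of_lt_of_le hε h2)]
    nlinarith
  · exact integrable_const _
  · apply Eventually.of_forall
    intro t
    by_cases ht : t = x₀
    · subst ht
      have : ∀ᶠ ε : ℝ in nhdsWithin 0 (Set.Ioi 0),
          ((ε:ℂ)*I) * (((t:ℂ) - ((t:ℂ) + (ε:ℂ)*I))⁻¹) = -1 := by
        filter_upwards [self_mem_nhdsWithin] with ε (hε : 0 < ε)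
        have hne : (ε:ℂ)*I ≠ 0 := by
          simp [Complex.ext_iff, hε.ne']
        rw [show (t:ℂ) - ((t:ℂ) + (ε:ℂ)*I) = -((ε:ℂ)*I) by ring, inv_neg, mul_neg, mul_inv_cancel₀ hne]
      rw [tendsto_congr' this]
      simp [Set.indicator_of_mem]
    · have hind : Set.indicator {x₀} (fun _ => (-1:ℂ)) t = 0 :=
        Set.indicator_of_notMem (s := ({x₀} : Set ℝ)) (by simpa using ht) _
      rw [hind]
      have hne : (t:ℂ) - (x₀:ℂ) ≠ 0 := by
        simp only [ne_eq, sub_eq_zero]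
        exact_mod_cast ht
      have hcont : ContinuousAt (fun ε : ℝ => ((ε:ℂ)*I) * (((t:ℂ) - ((x₀:ℂ) + (ε:ℂ)*I))⁻¹)) 0 := by
        apply ContinuousAt.mul (by fun_prop)
        apply ContinuousAt.inv₀ (by fun_prop)
        simpa using hne
      have := hcont.tendsto
      simp only [Complex.ofReal_zero, zero_mul, add_zero] at this
      simpa using this.mono_left nhdsWithin_le_nhds
end core3

section moments
variable (σ σ' : Measure ℝ) [IsFiniteMeasure σ] [IsFiniteMeasure σ']

lemma mmt_of_gk {y₀ : ℝ} (hy₀ : 0 ≤ y₀) {R : ℝ} (hR : 0 ≤ R)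
    (hb : ∀ᵐ t ∂σ, |t| ≤ R) (hb' : ∀ᵐ t ∂σ', |t| ≤ R) (k : ℕ)
    (hP : ∀ y : ℝ, y₀ < y →
      ∫ t, (t:ℂ)^k * ((t:ℂ) - (y:ℂ)*I)⁻¹ ∂σ = ∫ t, (t:ℂ)^k * ((t:ℂ) - (y:ℂ)*I)⁻¹ ∂σ') :
    ∫ t, t^k ∂σ = ∫ t, t^k ∂σ' := by
  have h1 : ∀ y : ℝ, y₀ < y →
      ((∫ t, t^k ∂σ : ℝ) : ℂ) - ((∫ t, t^k ∂σ' : ℝ) : ℂ)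
        = (∫ t, (t:ℂ)^(k+1) * ((t:ℂ) - (y:ℂ)*I)⁻¹ ∂σ)
          - ∫ t, (t:ℂ)^(k+1) * ((t:ℂ) - (y:ℂ)*I)⁻¹ ∂σ' := by
    intro y hy
    have hz : 0 < ((y:ℂ)*I).im := by rw [im_yI]; linarith
    rw [gk_succ σ _ hz hR hb k, gk_succ σ' _ hz hR hb' k, hP y hy]
    ring
  have h2 : Tendsto (fun y : ℝ =>
      (∫ t, (t:ℂ)^(k+1) * ((t:ℂ) - (y:ℂ)*I)⁻¹ ∂σ)
        - ∫ t, (t:ℂ)^(k+1) * ((t:ℂ) - (y:ℂ)*I)⁻¹ ∂σ') atTop (nhds 0) := by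
    simpa using (tendsto_gk_atTop σ hR hb (k+1)).sub (tendsto_gk_atTop σ' hR hb' (k+1))
  have h3 : Tendsto (fun y : ℝ =>
      (∫ t, (t:ℂ)^(k+1) * ((t:ℂ) - (y:ℂ)*I)⁻¹ ∂σ)
        - ∫ t, (t:ℂ)^(k+1) * ((t:ℂ) - (y:ℂ)*I)⁻¹ ∂σ') atTop
      (nhds (((∫ t, t^k ∂σ : ℝ) : ℂ) - ((∫ t, t^k ∂σ' : ℝ) : ℂ))) := by
    apply Tendsto.congr' _ tendsto_const_nhds
    filter_upwards [eventually_gt_atTop y₀] with y hy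
    exact h1 y hy
  have h4 := tendsto_nhds_unique h3 h2
  rw [sub_eq_zero] at h4
  exact_mod_cast h4

lemma gk_all {y₀ : ℝ} (hy₀ : 0 ≤ y₀) {R : ℝ} (hR : 0 ≤ R)
    (hb : ∀ᵐ t ∂σ, |t| ≤ R) (hb' : ∀ᵐ t ∂σ', |t| ≤ R)
    (hC : ∀ y : ℝ, y₀ < y → cauchyT σ ((y:ℂ)*I) = cauchyT σ' ((y:ℂ)*I)) (k : ℕ) :
    ∀ y : ℝ, y₀ < y →
      ∫ t, (t:ℂ)^k * ((t:ℂ) - (y:ℂ)*I)⁻¹ ∂σ = ∫ t, (t:ℂ)^k * ((t:ℂ) - (y:ℂ)*I)⁻¹ ∂σ' := by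
  induction k with
  | zero =>
    intro y hy
    have e1 : ∀ (τ : Measure ℝ), ∫ t, (t:ℂ)^0 * ((t:ℂ) - (y:ℂ)*I)⁻¹ ∂τ = cauchyT τ ((y:ℂ)*I) := by
      intro τ
      rw [cauchyT]
      congr 1
      funext t
      rw [pow_zero, one_mul]
    rw [e1, e1]
    exact hC y hy
  | succ k ih =>
    intro y hy
    have hz : 0 < ((y:ℂ)*I).im := by rw [im_yI]; linarith
    rw [gk_succ σ _ hz hR hb k, gk_succ σ' _ hz hR hb' k, ih y hy,
      mmt_of_gk σ σ' hy₀ hR hb hb' k ih]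

lemma moments_eq {y₀ : ℝ} (hy₀ : 0 ≤ y₀) {R : ℝ} (hR : 0 ≤ R)
    (hb : ∀ᵐ t ∂σ, |t| ≤ R) (hb' : ∀ᵐ t ∂σ', |t| ≤ R)
    (hC : ∀ y : ℝ, y₀ < y → cauchyT σ ((y:ℂ)*I) = cauchyT σ' ((y:ℂ)*I)) (k : ℕ) :
    ∫ t, t^k ∂σ = ∫ t, t^k ∂σ' :=
  mmt_of_gk σ σ' hy₀ hR hb hb' k (gk_all σ σ' hy₀ hR hb hb' hC k)

lemma integrable_polyeval {R : ℝ} (hb : ∀ᵐ t ∂σ, |t| ≤ R) (p : Polynomial ℝ) :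
    Integrable (fun t => p.eval t) σ := by
  obtain ⟨C, hC⟩ := (isCompact_Icc (a := -R) (b := R)).exists_bound_of_continuousOn
    p.continuous_aeval.continuousOn
  refine (integrable_const C).mono' p.continuous_aeval.aestronglyMeasurable ?_
  filter_upwards [hb] with t ht
  exact hC t (abs_le.mp ht |> fun h => Set.mem_Icc.mpr h)

lemma integral_poly_eq {y₀ : ℝ} (hy₀ : 0 ≤ y₀) {R : ℝ} (hR : 0 ≤ R)
    (hb : ∀ᵐ t ∂σ, |t| ≤ R) (hb' : ∀ᵐ t ∂σ', |t| ≤ R)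
    (hC : ∀ y : ℝ, y₀ < y → cauchyT σ ((y:ℂ)*I) = cauchyT σ' ((y:ℂ)*I)) (p : Polynomial ℝ) :
    ∫ t, p.eval t ∂σ = ∫ t, p.eval t ∂σ' := by
  induction p using Polynomial.induction_on' with
  | add p q hp hq =>
    rw [show (fun t => Polynomial.eval t (p + q)) = fun t => p.eval t + q.eval t by
      funext t; rw [Polynomial.eval_add]]
    rw [integral_add (integrable_polyeval σ hb p) (integrable_polyeval σ hb q),
      integral_add (integrable_polyeval σ' hb' p) (integrable_polyeval σ' hb' q), hp, hq]
  | monomial n a =>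
    rw [show (fun t => Polynomial.eval t (Polynomial.monomial n a)) = fun t => a * t^n by
      funext t; rw [Polynomial.eval_monomial]]
    rw [MeasureTheory.integral_const_mul, MeasureTheory.integral_const_mul,
      moments_eq σ σ' hy₀ hR hb hb' hC n]
end moments

section measext
variable (σ σ' : Measure ℝ) [IsFiniteMeasure σ] [IsFiniteMeasure σ']

lemma measure_eq_of_integral_bc
    (h : ∀ g : ℝ → ℝ, Continuous g → (∃ C, ∀ x, |g x| ≤ C) → ∫ x, g x ∂σ = ∫ x, g x ∂σ') :
    σ = σ' := by
  apply ext_of_forall_lintegral_eq_of_IsFiniteMeasure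
  intro f
  have h1 := BoundedContinuousFunction.toReal_lintegral_coe_eq_integral f σ
  have h2 := BoundedContinuousFunction.toReal_lintegral_coe_eq_integral f σ'
  have hg : ∫ x, ((f x : ℝ)) ∂σ = ∫ x, ((f x : ℝ)) ∂σ' := by
    apply h _ (NNReal.continuous_coe.comp f.continuous)
    refine ⟨(nndist 0 f : ℝ), fun x => ?_⟩
    show |((f x : ℝ))| ≤ _
    rw [_root_.abs_of_nonneg (f x).coe_nonneg]
    exact_mod_cast f.apply_le_nndist_zero x
  have fin1 : ∫⁻ x, (f x : ENNReal) ∂σ ≠ ⊤ :=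
    (BoundedContinuousFunction.lintegral_lt_top_of_nnreal σ f).ne
  have fin2 : ∫⁻ x, (f x : ENNReal) ∂σ' ≠ ⊤ :=
    (BoundedContinuousFunction.lintegral_lt_top_of_nnreal σ' f).ne
  rw [← ENNReal.toReal_eq_toReal_iff' fin1 fin2, h1, h2]
  exact hg

lemma measure_eq_of_cauchyT_eq {y₀ : ℝ} (hy₀ : 0 ≤ y₀) {R : ℝ} (hR : 0 ≤ R)
    (hb : ∀ᵐ t ∂σ, |t| ≤ R) (hb' : ∀ᵐ t ∂σ', |t| ≤ R)
    (hC : ∀ y : ℝ, y₀ < y → cauchyT σ ((y:ℂ)*I) = cauchyT σ' ((y:ℂ)*I)) :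
    σ = σ' := by
  apply measure_eq_of_integral_bc
  intro g hg ⟨C, hgC⟩
  set D := ∫ x, g x ∂σ - ∫ x, g x ∂σ' with hD
  have key : ∀ ε : ℝ, 0 < ε → |D| ≤ ε * ((σ Set.univ).toReal + (σ' Set.univ).toReal) := by
    intro ε hε
    obtain ⟨p, hp⟩ := exists_polynomial_near_of_continuousOn (-R) R g hg.continuousOn ε hε
    have hint : ∀ (τ : Measure ℝ) [IsFiniteMeasure τ], (∀ᵐ t ∂τ, |t| ≤ R) →
        |∫ x, g x ∂τ - ∫ x, p.eval x ∂τ| ≤ ε * (τ Set.univ).toReal := by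
      intro τ _ hbτ
      have hgint : Integrable g τ := by
        refine (integrable_const C).mono' hg.aestronglyMeasurable ?_
        exact Eventually.of_forall fun x => (Real.norm_eq_abs _).le.trans_eq' rfl |>.trans (hgC x)
      rw [← integral_sub hgint (integrable_polyeval τ hbτ p)]
      have h3 := norm_integral_le_of_norm_le (f := fun x => g x - p.eval x)
        (integrable_const ε (μ := τ)) ?_
      · rw [integral_const, smul_eq_mul, mul_comm] at h3
        exact h3
      · filter_upwards [hbτ] with t ht
        rw [Real.norm_eq_abs, abs_sub_comm]
        exact (hp t (Set.mem_Icc.mpr (abs_le.mp ht))).le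
    have hpoly := integral_poly_eq σ σ' hy₀ hR hb hb' hC p
    calc |D| = |(∫ x, g x ∂σ - ∫ x, p.eval x ∂σ)
        - (∫ x, g x ∂σ' - ∫ x, p.eval x ∂σ')| := by rw [hD, hpoly]; ring_nf
      _ ≤ |∫ x, g x ∂σ - ∫ x, p.eval x ∂σ| + |∫ x, g x ∂σ' - ∫ x, p.eval x ∂σ'| :=
          abs_sub _ _
      _ ≤ ε * (σ Set.univ).toReal + ε * (σ' Set.univ).toReal :=
          add_le_add (hint σ hb) (hint σ' hb')
      _ = ε * ((σ Set.univ).toReal + (σ' Set.univ).toReal) := by ring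
  have hD0 : D = 0 := by
    by_contra hne
    have habs : 0 < |D| := abs_pos.mpr hne
    set M := (σ Set.univ).toReal + (σ' Set.univ).toReal with hM
    have hM0 : 0 ≤ M := add_nonneg ENNReal.toReal_nonneg ENNReal.toReal_nonneg
    have := key (|D| / (2 * (M + 1))) (by positivity)
    have h2 : |D| / (2 * (M + 1)) * M < |D| := by
      rw [div_mul_eq_mul_div, div_lt_iff₀ (by positivity)]
      nlinarith
    linarith
  linarith [abs_nonneg D, hD0, sub_eq_zero.mp hD0]
end measext

section lamuniq
variable (σ σ' : Measure ℝ) [IsFiniteMeasure σ] [IsFiniteMeasure σ']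

lemma tendsto_zeps (lam : ℂ) : Tendsto (fun ε : ℝ => lam + (ε:ℂ)*I) (nhdsWithin 0 (Set.Ioi 0))
    (nhds lam) := by
  have : ContinuousAt (fun ε : ℝ => lam + (ε:ℂ)*I) 0 := by fun_prop
  have h := this.tendsto
  simp only [Complex.ofReal_zero, zero_mul, add_zero] at h
  exact h.mono_left nhdsWithin_le_nhds

lemma zeps_ne (lam w : ℂ) (hw : lam ≠ w) {ε : ℝ} (hε : 0 < ε)
    (hδ : ε < ‖lam - w‖) : lam + (ε:ℂ)*I ≠ w := by
  intro h
  have : w - lam = (ε:ℂ)*I := by rw [← h]; ring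
  have habs : ‖w - lam‖ = ε := by
    rw [this]
    rw [norm_mul, Complex.norm_I, Complex.norm_real, Real.norm_eq_abs, mul_one, abs_of_pos hε]
  rw [norm_sub_rev lam w, habs] at hδ
  exact absurd hδ (lt_irrefl ε)

lemma lam_eq_of_im_pos (lam lam' : ℂ) (hlam' : 0 ≤ lam'.im) (d d' : ℝ)
    (him : 0 < lam.im)
    (heq : ∀ z : ℂ, 0 < z.im → z ≠ lam → z ≠ lam' →
      (z + (d : ℂ) + cauchyT σ z) / ((z - lam) * (z - (starRingEnd ℂ) lam)) =
      (z + (d' : ℂ) + cauchyT σ' z) / ((z - lam') * (z - (starRingEnd ℂ) lam'))) :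
    lam = lam' := by
  by_contra hne
  set δ := ‖lam - lam'‖ with hδdef
  have hδ : 0 < δ := by
    rw [hδdef]
    rw [norm_pos_iff]
    exact sub_ne_zero.mpr hne
  have hcross : ∀ᶠ ε : ℝ in nhdsWithin 0 (Set.Ioi 0),
      ((lam + (ε:ℂ)*I) + (d : ℂ) + cauchyT σ (lam + (ε:ℂ)*I))
          * (((lam + (ε:ℂ)*I) - lam') * ((lam + (ε:ℂ)*I) - (starRingEnd ℂ) lam'))
        = ((lam + (ε:ℂ)*I) + (d' : ℂ) + cauchyT σ' (lam + (ε:ℂ)*I))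
          * (((lam + (ε:ℂ)*I) - lam) * ((lam + (ε:ℂ)*I) - (starRingEnd ℂ) lam)) := by
    filter_upwards [Ioo_mem_nhdsGT_of_mem (Set.left_mem_Ico.mpr hδ)] with ε hε
    obtain ⟨hε0, hεδ⟩ := hε
    set z := lam + (ε:ℂ)*I with hz
    have him_z : 0 < z.im := by
      rw [hz]
      simp only [Complex.add_im, Complex.mul_im, Complex.ofReal_re, Complex.I_im,
        Complex.ofReal_im, Complex.I_re]
      nlinarith
    have hz_lam : z ≠ lam := by
      rw [hz]
      intro h
      have : (ε:ℂ)*I = 0 := by linear_combination h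
      simp [Complex.ext_iff] at this
      exact hε0.ne' this
    have hz_lam' : z ≠ lam' := zeps_ne lam lam' hne hε0 hεδ
    have hd1 : (z - lam) * (z - (starRingEnd ℂ) lam) ≠ 0 := by
      apply mul_ne_zero (sub_ne_zero.mpr hz_lam)
      intro h
      have : (z - (starRingEnd ℂ) lam).im = 0 := by rw [h]; simp
      simp only [Complex.sub_im, Complex.conj_im] at this
      nlinarith [him_z]
    have hd2 : (z - lam') * (z - (starRingEnd ℂ) lam') ≠ 0 := by
      apply mul_ne_zero (sub_ne_zero.mpr hz_lam')
      intro h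
      have : (z - (starRingEnd ℂ) lam').im = 0 := by rw [h]; simp
      simp only [Complex.sub_im, Complex.conj_im] at this
      nlinarith [him_z]
    have := heq z him_z hz_lam hz_lam'
    rw [div_eq_div_iff hd1 hd2] at this
    exact this
  -- limits
  have hT1 : Tendsto (fun ε : ℝ =>
      ((lam + (ε:ℂ)*I) + (d : ℂ) + cauchyT σ (lam + (ε:ℂ)*I))
        * (((lam + (ε:ℂ)*I) - lam') * ((lam + (ε:ℂ)*I) - (starRingEnd ℂ) lam')))
      (nhdsWithin 0 (Set.Ioi 0))
      (nhds ((lam + (d : ℂ) + cauchyT σ lam)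
        * ((lam - lam') * (lam - (starRingEnd ℂ) lam')))) := by
    have hz := tendsto_zeps lam
    exact ((hz.add tendsto_const_nhds).add (tendsto_cauchyT_vert σ lam him)).mul
      (((hz.sub tendsto_const_nhds)).mul ((hz.sub tendsto_const_nhds)))
  have hT2 : Tendsto (fun ε : ℝ =>
      ((lam + (ε:ℂ)*I) + (d' : ℂ) + cauchyT σ' (lam + (ε:ℂ)*I))
        * (((lam + (ε:ℂ)*I) - lam) * ((lam + (ε:ℂ)*I) - (starRingEnd ℂ) lam)))
      (nhdsWithin 0 (Set.Ioi 0))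
      (nhds ((lam + (d' : ℂ) + cauchyT σ' lam)
        * ((lam - lam) * (lam - (starRingEnd ℂ) lam)))) := by
    have hz := tendsto_zeps lam
    exact ((hz.add tendsto_const_nhds).add (tendsto_cauchyT_vert σ' lam him)).mul
      (((hz.sub tendsto_const_nhds)).mul ((hz.sub tendsto_const_nhds)))
  have hkey := tendsto_nhds_unique (hT1.congr' hcross) hT2
  rw [sub_self, zero_mul, mul_zero] at hkey
  have hN := N_ne_zero σ d lam him
  have h1 : lam - lam' ≠ 0 := sub_ne_zero.mpr hne
  have h2 : lam - (starRingEnd ℂ) lam' ≠ 0 := by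
    intro h
    have : (lam - (starRingEnd ℂ) lam').im = 0 := by rw [h]; simp
    simp only [Complex.sub_im, Complex.conj_im] at this
    nlinarith
  exact (mul_ne_zero hN (mul_ne_zero h1 h2)) hkey
end lamuniq

section realcase
variable (σ σ' : Measure ℝ) [IsFiniteMeasure σ] [IsFiniteMeasure σ']

lemma re_div_epsI (w : ℂ) (ε : ℝ) (hε : 0 < ε) : (w / ((ε:ℂ)*I)).re = w.im / ε := by
  rw [Complex.div_re]
  simp [Complex.normSq_apply]
  field_simp

lemma real_case (x₀ x₀' : ℝ) (hne : x₀ ≠ x₀') (d d' : ℝ)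
    (heq : ∀ z : ℂ, 0 < z.im → z ≠ ((x₀:ℝ):ℂ) → z ≠ ((x₀':ℝ):ℂ) →
      (z + (d : ℂ) + cauchyT σ z) / ((z - (x₀:ℂ)) * (z - (starRingEnd ℂ) (x₀:ℂ))) =
      (z + (d' : ℂ) + cauchyT σ' z) / ((z - (x₀':ℂ)) * (z - (starRingEnd ℂ) (x₀':ℂ)))) :
    False := by
  set δ := |x₀ - x₀'| with hδdef
  have hδ : 0 < δ := abs_pos.mpr (sub_ne_zero.mpr hne)
  have hnec : ((x₀:ℂ)) ≠ ((x₀':ℂ)) := by exact_mod_cast hne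
  have hBne : ((x₀:ℂ) - (x₀':ℂ)) ≠ 0 := sub_ne_zero.mpr hnec
  -- the identity for Φ
  have hΦ : ∀ᶠ ε : ℝ in nhdsWithin 0 (Set.Ioi 0),
      (((x₀:ℂ) + (ε:ℂ)*I) + (d : ℂ) + cauchyT σ ((x₀:ℂ) + (ε:ℂ)*I)) / ((ε:ℂ)*I)
        = (((ε:ℂ)*I) * (((x₀:ℂ) + (ε:ℂ)*I) + (d' : ℂ) + cauchyT σ' ((x₀:ℂ) + (ε:ℂ)*I)))
          / (((x₀:ℂ) + (ε:ℂ)*I - (x₀':ℂ))^2) := by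
    filter_upwards [Ioo_mem_nhdsGT_of_mem (Set.left_mem_Ico.mpr hδ)] with ε hε
    obtain ⟨hε0, hεδ⟩ := hε
    set z := (x₀:ℂ) + (ε:ℂ)*I with hz
    have him_z : 0 < z.im := by rw [hz]; simp [hε0]
    have hεIne : (ε:ℂ)*I ≠ 0 := by
      simp [Complex.ext_iff]
      exact hε0.ne'
    have hz_lam : z ≠ (x₀:ℂ) := by
      rw [hz]
      intro h
      exact hεIne (by linear_combination h)
    have hδ' : ε < ‖(x₀:ℂ) - (x₀':ℂ)‖ := by
      rwa [← Complex.ofReal_sub, Complex.norm_real, Real.norm_eq_abs]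
    have hz_lam' : z ≠ (x₀':ℂ) := zeps_ne (x₀:ℂ) (x₀':ℂ) hnec hε0 hδ'
    have hzsub' : z - (x₀':ℂ) ≠ 0 := sub_ne_zero.mpr hz_lam'
    have := heq z him_z hz_lam hz_lam'
    rw [Complex.conj_ofReal, Complex.conj_ofReal] at this
    have hzx : z - (x₀:ℂ) = (ε:ℂ)*I := by rw [hz]; ring
    rw [hzx] at this
    rw [div_eq_div_iff (mul_ne_zero hεIne hεIne) (mul_ne_zero hzsub' hzsub')] at this
    rw [div_eq_div_iff hεIne (pow_ne_zero 2 hzsub')]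
    linear_combination this
  -- limit of RHS
  have hz := tendsto_zeps ((x₀:ℂ))
  have hnum : Tendsto (fun ε : ℝ =>
      ((ε:ℂ)*I) * (((x₀:ℂ) + (ε:ℂ)*I) + (d' : ℂ) + cauchyT σ' ((x₀:ℂ) + (ε:ℂ)*I)))
      (nhdsWithin 0 (Set.Ioi 0)) (nhds (-((σ' {x₀}).toReal : ℂ))) := by
    have h1 : Tendsto (fun ε : ℝ => ((ε:ℂ)*I) * (((x₀:ℂ) + (ε:ℂ)*I) + (d' : ℂ)))
        (nhdsWithin 0 (Set.Ioi 0)) (nhds 0) := by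
      have hεI : Tendsto (fun ε : ℝ => (ε:ℂ)*I) (nhdsWithin 0 (Set.Ioi 0)) (nhds 0) := by
        have : ContinuousAt (fun ε : ℝ => (ε:ℂ)*I) 0 := by fun_prop
        have h := this.tendsto
        simp only [Complex.ofReal_zero, zero_mul] at h
        exact h.mono_left nhdsWithin_le_nhds
      simpa using hεI.mul (hz.add tendsto_const_nhds)
    have h2 := tendsto_atom σ' x₀
    have := h1.add h2
    rw [zero_add] at this
    apply this.congr
    intro ε
    ring
  have hden : Tendsto (fun ε : ℝ => (((x₀:ℂ) + (ε:ℂ)*I - (x₀':ℂ))^2))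
      (nhdsWithin 0 (Set.Ioi 0)) (nhds (((x₀:ℂ) - (x₀':ℂ))^2)) :=
    (hz.sub tendsto_const_nhds).pow 2
  have hT : Tendsto (fun ε : ℝ =>
      (((x₀:ℂ) + (ε:ℂ)*I) + (d : ℂ) + cauchyT σ ((x₀:ℂ) + (ε:ℂ)*I)) / ((ε:ℂ)*I))
      (nhdsWithin 0 (Set.Ioi 0))
      (nhds ((-((σ' {x₀}).toReal : ℂ)) / (((x₀:ℂ) - (x₀':ℂ))^2))) := by
    apply Tendsto.congr' (hΦ.mono fun ε h => h.symm)
    exact hnum.div hden (pow_ne_zero 2 hBne)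
  have hTre := (Complex.continuous_re.tendsto _).comp hT
  have hev : ∀ᶠ ε : ℝ in nhdsWithin 0 (Set.Ioi 0),
      1 ≤ ((((x₀:ℂ) + (ε:ℂ)*I) + (d : ℂ) + cauchyT σ ((x₀:ℂ) + (ε:ℂ)*I)) / ((ε:ℂ)*I)).re := by
    filter_upwards [self_mem_nhdsWithin] with ε (hε : 0 < ε)
    rw [re_div_epsI _ ε hε]
    have him_z : ((x₀:ℂ) + (ε:ℂ)*I).im = ε := by simp
    have := im_N_pos σ d ((x₀:ℂ) + (ε:ℂ)*I) (by rw [him_z]; exact hε)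
    rw [him_z] at this
    rw [le_div_iff₀ hε]
    linarith
  have hge := ge_of_tendsto hTre hev
  -- but the limit has nonpositive real part
  have hle : (((-((σ' {x₀}).toReal : ℂ)) / (((x₀:ℂ) - (x₀':ℂ))^2)).re) ≤ 0 := by
    have : (-((σ' {x₀}).toReal : ℂ)) / (((x₀:ℂ) - (x₀':ℂ))^2)
        = (((-(σ' {x₀}).toReal / ((x₀ - x₀')^2) : ℝ)) : ℂ) := by
      push_cast
      ring
    rw [this, Complex.ofReal_re]
    apply div_nonpos_of_nonpos_of_nonneg
    · simp [ENNReal.toReal_nonneg]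
    · positivity
  linarith
end realcase

/-- Uniqueness of the representation (i) in Theorem 1. -/
theorem stmt_2 (lam lam' : ℂ) (hlam : 0 ≤ lam.im) (hlam' : 0 ≤ lam'.im)
    (d d' : ℝ) (σ σ' : Measure ℝ) (hf : IsFiniteMeasure σ) (hf' : IsFiniteMeasure σ')
    (h0 : σ ≠ 0) (h0' : σ' ≠ 0)
    (hc : IsCompact (msupport σ)) (hc' : IsCompact (msupport σ'))
    (hi : (msupport σ).Infinite) (hi' : (msupport σ').Infinite)
    (heq : ∀ z : ℂ, 0 < z.im → z ≠ lam → z ≠ lam' →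
      (z + (d : ℂ) + cauchyT σ z) / ((z - lam) * (z - (starRingEnd ℂ) lam)) =
      (z + (d' : ℂ) + cauchyT σ' z) / ((z - lam') * (z - (starRingEnd ℂ) lam'))) :
    lam = lam' ∧ d = d' ∧ σ = σ' := by
  -- step 1 : lam = lam'
  have hLL : lam = lam' := by
    rcases eq_or_lt_of_le hlam with him0 | him
    · rcases eq_or_lt_of_le hlam' with him0' | him'
      · -- both real
        by_contra hne
        have h1 : lam = ((lam.re : ℝ) : ℂ) := by
          apply Complex.ext <;> simp [← him0]
        have h1' : lam' = ((lam'.re : ℝ) : ℂ) := by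
          apply Complex.ext <;> simp [← him0']
        have hrne : lam.re ≠ lam'.re := by
          intro h
          apply hne
          rw [h1, h1', h]
        rw [h1, h1'] at heq
        exact real_case σ σ' lam.re lam'.re hrne d d' heq
      · -- lam' has positive imaginary part
        exact (lam_eq_of_im_pos σ' σ lam' lam hlam d' d him'
          (fun z hz hz1 hz2 => (heq z hz hz2 hz1).symm)).symm
    · exact lam_eq_of_im_pos σ σ' lam lam' hlam' d d' him heq
  subst hLL
  refine ⟨rfl, ?_⟩
  -- bounds
  obtain ⟨R₁, hR₁⟩ := isBounded_iff_forall_norm_le.mp hc.isBounded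
  obtain ⟨R₂, hR₂⟩ := isBounded_iff_forall_norm_le.mp hc'.isBounded
  set R := max 0 (max R₁ R₂) with hRdef
  have hR : 0 ≤ R := le_max_left 0 _
  have hb : ∀ᵐ t ∂σ, |t| ≤ R := by
    apply ae_abs_le σ
    intro x hx
    calc |x| = ‖x‖ := (Real.norm_eq_abs x).symm
      _ ≤ R₁ := hR₁ x hx
      _ ≤ R := le_trans (le_max_left _ _) (le_max_right _ _)
  have hb' : ∀ᵐ t ∂σ', |t| ≤ R := by
    apply ae_abs_le σ'
    intro x hx
    calc |x| = ‖x‖ := (Real.norm_eq_abs x).symm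
      _ ≤ R₂ := hR₂ x hx
      _ ≤ R := le_trans (le_max_right _ _) (le_max_right _ _)
  -- on the imaginary axis, numerators agree
  set y₀ := max 1 ‖lam‖ with hy₀def
  have hy₀ : 0 ≤ y₀ := le_trans zero_le_one (le_max_left _ _)
  have key : ∀ y : ℝ, y₀ < y →
      ((y:ℂ)*I + (d : ℂ) + cauchyT σ ((y:ℂ)*I)) = ((y:ℂ)*I + (d' : ℂ) + cauchyT σ' ((y:ℂ)*I)) := by
    intro y hy
    have hy1 : (0:ℝ) < y := lt_of_lt_of_le zero_lt_one (le_trans (le_max_left _ _) hy.le)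
    have habs : ‖(y:ℂ)*I‖ = y := by
      rw [norm_mul, Complex.norm_I, Complex.norm_real, Real.norm_eq_abs, mul_one, abs_of_pos hy1]
    have hzlam : (y:ℂ)*I ≠ lam := by
      intro h
      have : ‖lam‖ = y := by rw [← h, habs]
      have : ‖lam‖ ≤ y₀ := le_max_right _ _
      linarith [hy, this, (by rw [← h, habs] : ‖lam‖ = y)]
    have hzconj : (y:ℂ)*I - (starRingEnd ℂ) lam ≠ 0 := by
      intro h
      have h2 : (y:ℂ)*I = (starRingEnd ℂ) lam := by linear_combination h
      have : ‖(starRingEnd ℂ) lam‖ = y := by rw [← h2, habs]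
      rw [Complex.norm_conj] at this
      have h3 : ‖lam‖ ≤ y₀ := le_max_right _ _
      linarith
    have hD : ((y:ℂ)*I - lam) * ((y:ℂ)*I - (starRingEnd ℂ) lam) ≠ 0 :=
      mul_ne_zero (sub_ne_zero.mpr hzlam) hzconj
    have := heq ((y:ℂ)*I) (by rw [im_yI]; exact hy1) hzlam hzlam
    rw [div_eq_div_iff hD hD] at this
    exact mul_right_cancel₀ hD this
  -- cauchyT tends to 0 along the imaginary axis
  have e1 : ∀ (τ : Measure ℝ) (y : ℝ), ∫ t, (t:ℂ)^0 * ((t:ℂ) - (y:ℂ)*I)⁻¹ ∂τ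
      = cauchyT τ ((y:ℂ)*I) := by
    intro τ y
    rw [cauchyT]
    congr 1
    funext t
    rw [pow_zero, one_mul]
  have hc0 : Tendsto (fun y : ℝ => cauchyT σ ((y:ℂ)*I)) atTop (nhds 0) := by
    apply (tendsto_gk_atTop σ hR hb 0).congr
    intro y
    exact e1 σ y
  have hc0' : Tendsto (fun y : ℝ => cauchyT σ' ((y:ℂ)*I)) atTop (nhds 0) := by
    apply (tendsto_gk_atTop σ' hR hb' 0).congr
    intro y
    exact e1 σ' y
  -- d = d'
  have hdd : d = d' := by
    have hT1 : Tendsto (fun y : ℝ => (d : ℂ) + cauchyT σ ((y:ℂ)*I)) atTop (nhds ((d:ℂ))) := by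
      simpa using (tendsto_const_nhds (x := (d:ℂ)) (f := atTop (α := ℝ))).add hc0
    have hT2 : Tendsto (fun y : ℝ => (d' : ℂ) + cauchyT σ' ((y:ℂ)*I)) atTop (nhds ((d':ℂ))) := by
      simpa using (tendsto_const_nhds (x := (d':ℂ)) (f := atTop (α := ℝ))).add hc0'
    have hEq : (fun y : ℝ => (d : ℂ) + cauchyT σ ((y:ℂ)*I))
        =ᶠ[atTop] (fun y : ℝ => (d' : ℂ) + cauchyT σ' ((y:ℂ)*I)) := by
      filter_upwards [eventually_gt_atTop y₀] with y hy
      linear_combination key y hy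
    have := tendsto_nhds_unique (hT1.congr' hEq) hT2
    exact_mod_cast this
  refine ⟨hdd, ?_⟩
  -- cauchy transforms agree on the axis
  have hC : ∀ y : ℝ, y₀ < y → cauchyT σ ((y:ℂ)*I) = cauchyT σ' ((y:ℂ)*I) := by
    intro y hy
    have := key y hy
    rw [hdd] at this
    linear_combination this
  exact measure_eq_of_cauchyT_eq σ σ' hy₀ hR hb hb' hC
end

section
/- The operator H has exactly one eigenvalue of nonpositive type: there exists exactly one λ ∈ ℂ with Im λ ≥ 0 for which there is a nonzero f ∈ ℓ²(ℕ) with H f = λ f and −|f_0|² + Σ_{j=1}^{∞} |f_j|² ≤ 0. -/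
open MeasureTheory Complex Filter

namespace Stmt4Aux
open Complex Filter Finset ComplexConjugate ENNReal Topology
set_option maxHeartbeats 1000000
noncomputable section

def eps (i : ℕ) : ℝ := if i = 0 then -1 else 1

lemma eps_zero : eps 0 = -1 := rfl
lemma eps_pos (i : ℕ) (h : i ≠ 0) : eps i = 1 := if_neg h

/-- tridiagonal entries, with sign flip in row 0 -/
def ent (a b : ℕ → ℝ) (i j : ℕ) : ℝ :=
  if i = j then a i
  else if i + 1 = j then (if i = 0 then -b 0 else b i)
  else if j + 1 = i then b j else 0

lemma ent_symm (a b : ℕ → ℝ) (i j : ℕ) :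
    eps i * ent a b i j = eps j * ent a b j i := by
  unfold ent eps
  split_ifs <;> subst_vars <;> first | ring1 | (exfalso; omega)

variable {N : ℕ}

def Mmat (a b : ℕ → ℝ) (N : ℕ) : Matrix (Fin N) (Fin N) ℂ :=
  fun i j => ((ent a b i j : ℝ) : ℂ)

def T (a b : ℕ → ℝ) (N : ℕ) : Module.End ℂ (Fin N → ℂ) := (Mmat a b N).mulVecLin

def B (x y : Fin N → ℂ) : ℂ := ∑ i : Fin N, ((eps (i:ℕ) : ℝ) : ℂ) * conj (x i) * y i

lemma B_T (a b : ℕ → ℝ) (x y : Fin N → ℂ) :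
    B (T a b N x) y = B x (T a b N y) := by
  unfold B T
  simp only [Matrix.mulVecLin_apply, Matrix.mulVec, dotProduct, Mmat, map_sum, map_mul,
    Complex.conj_ofReal, Finset.sum_mul, Finset.mul_sum]
  rw [Finset.sum_comm]
  refine Finset.sum_congr rfl fun i _ => Finset.sum_congr rfl fun j _ => ?_
  have h := ent_symm a b (j : ℕ) (i : ℕ)
  have h' : ((eps (j:ℕ) : ℝ) : ℂ) * ((ent a b (j:ℕ) (i:ℕ) : ℝ) : ℂ)
      = ((eps (i:ℕ) : ℝ) : ℂ) * ((ent a b (i:ℕ) (j:ℕ) : ℝ) : ℂ) := by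
    push_cast [← Complex.ofReal_mul]
    exact_mod_cast congrArg Complex.ofReal h
  linear_combination (conj (x i) * y j) * h'

lemma B_zero_left (y : Fin N → ℂ) : B (0 : Fin N → ℂ) y = 0 := by simp [B]

lemma B_zero_right (x : Fin N → ℂ) : B x (0 : Fin N → ℂ) = 0 := by simp [B]

lemma B_add_left (x x' y : Fin N → ℂ) : B (x + x') y = B x y + B x' y := by
  unfold B
  rw [← Finset.sum_add_distrib]
  refine Finset.sum_congr rfl fun i _ => ?_
  simp only [Pi.add_apply, map_add]
  ring1

lemma B_add_right (x y y' : Fin N → ℂ) : B x (y + y') = B x y + B x y' := by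
  unfold B
  rw [← Finset.sum_add_distrib]
  refine Finset.sum_congr rfl fun i _ => ?_
  simp only [Pi.add_apply]
  ring1

lemma B_sub_left (x x' y : Fin N → ℂ) : B (x - x') y = B x y - B x' y := by
  unfold B
  rw [← Finset.sum_sub_distrib]
  refine Finset.sum_congr rfl fun i _ => ?_
  simp only [Pi.sub_apply, map_sub]
  ring1

lemma B_sub_right (x y y' : Fin N → ℂ) : B x (y - y') = B x y - B x y' := by
  unfold B
  rw [← Finset.sum_sub_distrib]
  refine Finset.sum_congr rfl fun i _ => ?_
  simp only [Pi.sub_apply]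
  ring1

lemma B_smul_left (c : ℂ) (x y : Fin N → ℂ) : B (c • x) y = conj c * B x y := by
  unfold B
  rw [Finset.mul_sum]
  refine Finset.sum_congr rfl fun i _ => ?_
  simp only [Pi.smul_apply, smul_eq_mul, map_mul]
  ring1

lemma B_smul_right (c : ℂ) (x y : Fin N → ℂ) : B x (c • y) = c * B x y := by
  unfold B
  rw [Finset.mul_sum]
  refine Finset.sum_congr rfl fun i _ => ?_
  simp only [Pi.smul_apply, smul_eq_mul]
  ring1

lemma B_sum_left {ι : Type*} (s : Finset ι) (u : ι → Fin N → ℂ) (y : Fin N → ℂ) :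
    B (∑ i ∈ s, u i) y = ∑ i ∈ s, B (u i) y := by
  classical
  induction s using Finset.induction_on with
  | empty => simp [B_zero_left]
  | insert _ _ hi ih => rw [Finset.sum_insert hi, B_add_left, ih, Finset.sum_insert hi]

lemma B_sum_right {ι : Type*} (s : Finset ι) (x : Fin N → ℂ) (u : ι → Fin N → ℂ) :
    B x (∑ i ∈ s, u i) = ∑ i ∈ s, B x (u i) := by
  classical
  induction s using Finset.induction_on with
  | empty => simp [B_zero_right]
  | insert _ _ hi ih => rw [Finset.sum_insert hi, B_add_right, ih, Finset.sum_insert hi]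

lemma B_shift (a b : ℕ → ℝ) (lam : ℂ) (x y : Fin N → ℂ) :
    B ((T a b N - lam • 1) x) y = B x ((T a b N - conj lam • 1) y) := by
  have hx : (T a b N - lam • 1) x = T a b N x - lam • x := by
    simp [LinearMap.sub_apply, LinearMap.smul_apply]
  have hy : (T a b N - conj lam • 1) y = T a b N y - conj lam • y := by
    simp [LinearMap.sub_apply, LinearMap.smul_apply]
  rw [hx, hy, B_sub_left, B_sub_right, B_smul_left, B_smul_right, B_T]

lemma B_pow (a b : ℕ → ℝ) (lam : ℂ) : ∀ (k : ℕ) (x y : Fin N → ℂ),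
    B (((T a b N - lam • 1) ^ k) x) y = B x (((T a b N - conj lam • 1) ^ k) y) := by
  intro k
  induction k with
  | zero => intro x y; simp
  | succ k ih =>
    intro x y
    rw [pow_succ, Module.End.mul_apply, ih (((T a b N - lam • 1)) x) y, B_shift,
      pow_succ', Module.End.mul_apply]

lemma chain (S : Module.End ℂ (Fin N → ℂ)) : ∀ (m : ℕ) (x : Fin N → ℂ), x ≠ 0 → (S ^ m) x = 0 →
    ∃ k, k < m ∧ (S ^ k) x ≠ 0 ∧ (S ^ (k + 1)) x = 0 := by
  intro m
  induction m with
  | zero => intro x hx h; exact absurd (by simpa using h) hx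
  | succ m ih =>
    intro x hx h
    by_cases hm : (S ^ m) x = 0
    · obtain ⟨k, hk, h1, h2⟩ := ih x hx hm
      exact ⟨k, by omega, h1, h2⟩
    · exact ⟨m, by omega, hm, h⟩

lemma B_orth (a b : ℕ → ℝ) (lam mu : ℂ) (hne : conj lam ≠ mu) :
    ∀ (p q : ℕ) (x y : Fin N → ℂ), ((T a b N - lam • 1) ^ p) x = 0 →
      ((T a b N - mu • 1) ^ q) y = 0 → B x y = 0 := by
  intro p
  induction p with
  | zero =>
    intro q x y hx _
    have : x = 0 := by simpa using hx
    rw [this, B_zero_left]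
  | succ p ihp =>
    intro q
    induction q with
    | zero =>
      intro x y _ hy
      have : y = 0 := by simpa using hy
      rw [this, B_zero_right]
    | succ q ihq =>
      intro x y hx hy
      have hx' : ((T a b N - lam • 1) ^ p) ((T a b N - lam • 1) x) = 0 := by
        rw [← Module.End.mul_apply, ← pow_succ]; exact hx
      have hy' : ((T a b N - mu • 1) ^ q) ((T a b N - mu • 1) y) = 0 := by
        rw [← Module.End.mul_apply, ← pow_succ]; exact hy
      have h1 : B ((T a b N - lam • 1) x) y = 0 := ihp (q + 1) _ y hx' hy
      have h2 : B x ((T a b N - mu • 1) y) = 0 := ihq x _ hx hy'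
      rw [B_shift] at h1
      have e1 : (T a b N - conj lam • 1) y = T a b N y - conj lam • y := by
        simp [LinearMap.sub_apply, LinearMap.smul_apply]
      have e2 : (T a b N - mu • 1) y = T a b N y - mu • y := by
        simp [LinearMap.sub_apply, LinearMap.smul_apply]
      rw [e1, B_sub_right, B_smul_right] at h1
      rw [e2, B_sub_right, B_smul_right] at h2
      have h3 : (mu - conj lam) * B x y = 0 := by linear_combination h1 - h2
      rcases mul_eq_zero.mp h3 with h | h
      · exact absurd (by linear_combination -h) hne
      · exact h

lemma findim_main (a b : ℕ → ℝ) {N : ℕ} (w : Fin N → ℂ) (hw : (B w w).re < 0) :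
    ∃ (lam : ℂ) (v : Fin N → ℂ), v ≠ 0 ∧ T a b N v = lam • v ∧ (B v v).re ≤ 0 := by
  by_cases hcase : ∃ (lam : ℂ) (v : Fin N → ℂ), v ≠ 0 ∧ T a b N v = lam • v ∧ lam.im ≠ 0
  · obtain ⟨lam, v, hv, hev, him⟩ := hcase
    refine ⟨lam, v, hv, hev, ?_⟩
    have h1 : B (T a b N v) v = B v (T a b N v) := B_T a b v v
    rw [hev, B_smul_left, B_smul_right] at h1
    have h3 : conj lam - lam ≠ 0 := by
      intro h
      apply him
      have h4 := congrArg Complex.im (sub_eq_zero.mp h)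
      simp at h4
      linarith
    have h2 : B v v = 0 := by
      rcases mul_eq_zero.mp (show (conj lam - lam) * B v v = 0 by linear_combination h1) with h | h
      · exact absurd h h3
      · exact h
    rw [h2]
    norm_num
  · push_neg at hcase
    by_contra hcon
    push_neg at hcon
    have Eig : ∀ (lam : ℂ) (x : Fin N → ℂ), x ∈ (T a b N).maxGenEigenspace lam →
        T a b N x = lam • x := by
      intro lam x hx
      by_contra hne
      have hx0 : x ≠ 0 := by rintro rfl; exact hne (by simp)
      obtain ⟨m, hm⟩ := (Module.End.mem_maxGenEigenspace _ _ _).mp hx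
      obtain ⟨k, hk, hk1, hk2⟩ := chain (T a b N - lam • 1) m x hx0 hm
      have huev : T a b N (((T a b N - lam • 1) ^ k) x) = lam • (((T a b N - lam • 1) ^ k) x) := by
        have h0 : (T a b N - lam • 1) (((T a b N - lam • 1) ^ k) x) = 0 := by
          rw [← Module.End.mul_apply, ← pow_succ']; exact hk2
        have h0' : T a b N (((T a b N - lam • 1) ^ k) x)
            - lam • (((T a b N - lam • 1) ^ k) x) = 0 := by
          rw [← h0]; simp [LinearMap.sub_apply, LinearMap.smul_apply]
        linear_combination (norm := module) h0'
      have hkpos : 1 ≤ k := by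
        rcases Nat.eq_zero_or_pos k with rfl | h
        · exact absurd (by simpa using huev) hne
        · exact h
      have hlr : lam.im = 0 := hcase lam _ hk1 huev
      have hcj : conj lam = lam := Complex.conj_eq_iff_im.mpr hlr
      have hzero : ((T a b N - lam • 1) ^ k) ((((T a b N - lam • 1)) ^ k) x) = 0 := by
        obtain ⟨k', rfl⟩ : ∃ k', k = k' + 1 := ⟨k - 1, by omega⟩
        rw [← Module.End.mul_apply, ← pow_add]
        have hsplit : (k' + 1) + (k' + 1) = k' + (k' + 1 + 1) := by ring
        rw [hsplit, pow_add, Module.End.mul_apply, hk2, map_zero]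
      have hBu : B (((T a b N - lam • 1) ^ k) x) (((T a b N - lam • 1) ^ k) x) = 0 := by
        rw [B_pow, hcj, hzero, B_zero_right]
      have := hcon lam _ hk1 huev
      rw [hBu] at this
      simp at this
    have hpos : ∀ x : Fin N → ℂ, 0 ≤ (B x x).re := by
      intro x
      have hx : x ∈ ⨆ (mu : ℂ), (T a b N).maxGenEigenspace mu := by
        rw [Module.End.iSup_maxGenEigenspace_eq_top]; trivial
      obtain ⟨c, hcmem, hsum⟩ := (Submodule.mem_iSup_iff_exists_finsupp _ _).mp hx
      have hx' : x = ∑ mu ∈ c.support, c mu := by rw [← hsum]; rfl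
      have horth : ∀ mu ∈ c.support, ∀ nu ∈ c.support, mu ≠ nu → B (c mu) (c nu) = 0 := by
        intro mu _ nu _ hmn
        by_cases h0 : c mu = 0
        · rw [h0, B_zero_left]
        by_cases h1 : c nu = 0
        · rw [h1, B_zero_right]
        have hmur : mu.im = 0 := hcase mu (c mu) h0 (Eig mu (c mu) (hcmem mu))
        obtain ⟨p, hp⟩ := (Module.End.mem_maxGenEigenspace _ _ _).mp (hcmem mu)
        obtain ⟨q, hq⟩ := (Module.End.mem_maxGenEigenspace _ _ _).mp (hcmem nu)
        refine B_orth a b mu nu ?_ p q _ _ hp hq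
        rw [Complex.conj_eq_iff_im.mpr hmur]
        exact hmn
      have hdiag : ∀ mu, 0 ≤ (B (c mu) (c mu)).re := by
        intro mu
        by_cases h0 : c mu = 0
        · rw [h0, B_zero_left]; norm_num
        · exact le_of_lt (hcon mu (c mu) h0 (Eig mu (c mu) (hcmem mu)))
      rw [hx', B_sum_left]
      rw [Complex.re_sum]
      refine Finset.sum_nonneg fun mu hmu => ?_
      rw [B_sum_right, Complex.re_sum]
      rw [Finset.sum_eq_single mu
        (fun nu hnu hne => by rw [horth mu hmu nu hnu (Ne.symm hne)]; norm_num)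
        (fun h => absurd hmu h)]
      exact hdiag mu
    exact absurd (hpos w) (not_le.mpr hw)

def ext {N : ℕ} (v : Fin N → ℂ) : ℕ → ℂ := fun k => if h : k < N then v ⟨k, h⟩ else 0

lemma ent_split (a b : ℕ → ℝ) (i k : ℕ) :
    ((ent a b i k : ℝ) : ℂ) = (if k + 1 = i then ((b k : ℝ) : ℂ) else 0)
      + (if k = i then ((a i : ℝ) : ℂ) else 0)
      + (if k = i + 1 then (((if i = 0 then -b 0 else b i) : ℝ) : ℂ) else 0) := by
  unfold ent
  split_ifs <;> subst_vars <;> first | (push_cast; ring1) | (exfalso; omega)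

lemma rowform (a b : ℕ → ℝ) {N : ℕ} (v : Fin N → ℂ) (i : Fin N) :
    (Mmat a b N).mulVec v i =
      (if (i : ℕ) = 0 then 0 else ((b ((i:ℕ) - 1) : ℝ) : ℂ) * ext v ((i:ℕ) - 1))
      + ((a (i:ℕ) : ℝ) : ℂ) * ext v (i:ℕ)
      + (((if (i:ℕ) = 0 then -b 0 else b (i:ℕ)) : ℝ) : ℂ) * ext v ((i:ℕ) + 1) := by
  have hv : ∀ j : Fin N, v j = ext v (j : ℕ) := by
    intro j
    simp only [ext, j.isLt, dif_pos, Fin.eta]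
  have step1 : (Mmat a b N).mulVec v i
      = ∑ k ∈ Finset.range (N + 2), ((ent a b (i:ℕ) k : ℝ) : ℂ) * ext v k := by
    unfold Matrix.mulVec dotProduct Mmat
    rw [show (∑ j : Fin N, ((ent a b (i:ℕ) (j:ℕ) : ℝ):ℂ) * v j)
        = ∑ j : Fin N, ((ent a b (i:ℕ) ((j:ℕ)) : ℝ):ℂ) * ext v (j:ℕ) from
      Finset.sum_congr rfl fun j _ => by rw [← hv]]
    rw [Fin.sum_univ_eq_sum_range (fun k => ((ent a b (i:ℕ) k : ℝ):ℂ) * ext v k) N]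
    refine Finset.sum_subset (Finset.range_subset_range.mpr (by omega)) ?_
    intro k hk1 hk2
    have hkN : ¬ k < N := by
      simp only [Finset.mem_range] at hk1 hk2
      omega
    simp [ext, hkN]
  rw [step1]
  simp_rw [ent_split a b (i:ℕ), add_mul, Finset.sum_add_distrib, ite_mul, zero_mul]
  have hiN : (i : ℕ) < N := i.isLt
  congr 1
  · congr 1
    · -- subdiagonal sum
      by_cases hi : (i : ℕ) = 0
      · rw [hi]
        simp
      · obtain ⟨m, hm⟩ : ∃ m, (i:ℕ) = m + 1 := ⟨(i:ℕ) - 1, by omega⟩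
        rw [hm]
        rw [if_neg (by omega : ¬ m + 1 = 0)]
        have hcond : ∀ k : ℕ, (k + 1 = m + 1) = (k = m) := fun k => by
          simp [Nat.succ_inj]
        simp_rw [hcond]
        rw [Finset.sum_ite_eq' (Finset.range (N + 2)) m (fun k => ((b k : ℝ):ℂ) * ext v k)]
        rw [if_pos (Finset.mem_range.mpr (by omega))]
        simp
    · rw [Finset.sum_ite_eq' (Finset.range (N + 2)) ((i:ℕ)) (fun k => ((a (i:ℕ) : ℝ):ℂ) * ext v k)]
      rw [if_pos (Finset.mem_range.mpr (by omega))]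
  · rw [Finset.sum_ite_eq' (Finset.range (N + 2)) ((i:ℕ) + 1)
      (fun k => (((if (i:ℕ) = 0 then -b 0 else b (i:ℕ)) : ℝ):ℂ) * ext v k)]
    rw [if_pos (Finset.mem_range.mpr (by omega))]

lemma Bre {N : ℕ} (x : Fin N → ℂ) :
    (B x x).re = ∑ i : Fin N, eps (i:ℕ) * ‖x i‖ ^ 2 := by
  rw [B, Complex.re_sum]
  refine Finset.sum_congr rfl fun i _ => ?_
  have h1 : ((eps (i:ℕ) : ℝ) : ℂ) * conj (x i) * x i
      = (((eps (i:ℕ) * ‖x i‖ ^ 2 : ℝ)) : ℂ) := by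
    rw [mul_assoc, mul_comm (conj (x i)) (x i), Complex.mul_conj']
    push_cast
    ring1
  rw [h1, Complex.ofReal_re]

lemma Tconj (a b : ℕ → ℝ) {N : ℕ} (x : Fin N → ℂ) :
    T a b N (fun i => conj (x i)) = fun i => conj (T a b N x i) := by
  funext i
  simp only [T, Matrix.mulVecLin_apply, Matrix.mulVec, dotProduct, Mmat, map_sum, map_mul,
    Complex.conj_ofReal]

lemma exists_approx (a b : ℕ → ℝ) (Ca Cb : ℝ) (hCa : ∀ j, |a j| ≤ Ca) (hCb : ∀ j, |b j| ≤ Cb)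
    (n : ℕ) :
    ∃ (lam : ℂ) (g : ℕ → ℂ),
      g 0 = 1 ∧ 0 ≤ lam.im ∧ ‖lam‖ ≤ Ca + Cb ∧
      (∀ m : ℕ, ∑ j ∈ Finset.range m, ‖g (j + 1)‖ ^ 2 ≤ 1) ∧
      ((a 0 : ℂ) - (b 0 : ℂ) * g 1 = lam) ∧
      (∀ k : ℕ, k ≤ n → (b k : ℂ) * g k + (a (k+1) : ℂ) * g (k+1) + (b (k+1) : ℂ) * g (k+2)
          = lam * g (k+1)) := by
  classical
  -- a negative vector
  have hw : (B (Pi.single (0 : Fin (n+2)) (1:ℂ)) (Pi.single (0 : Fin (n+2)) (1:ℂ))).re < 0 := by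
    rw [Bre, Fin.sum_univ_succ]
    simp [eps, Pi.single_apply, Fin.succ_ne_zero]
  obtain ⟨lam₀, v₀, hv₀, hev₀, hB₀⟩ := findim_main a b _ hw
  -- fix the sign of the imaginary part
  obtain ⟨lam, v, hv, hev, hB, him⟩ :
      ∃ (lam : ℂ) (v : Fin (n+2) → ℂ), v ≠ 0 ∧ T a b (n+2) v = lam • v ∧ (B v v).re ≤ 0 ∧
        0 ≤ lam.im := by
    rcases le_or_gt 0 lam₀.im with h | h
    · exact ⟨lam₀, v₀, hv₀, hev₀, hB₀, h⟩
    · refine ⟨conj lam₀, fun i => conj (v₀ i), ?_, ?_, ?_, ?_⟩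
      · intro hz
        apply hv₀
        funext i
        simpa using congrFun hz i
      · rw [Tconj, hev₀]
        funext i
        simp [mul_comm]
      · have he : B (fun i => conj (v₀ i)) (fun i => conj (v₀ i)) = B v₀ v₀ := by
          unfold B
          refine Finset.sum_congr rfl fun i _ => ?_
          rw [Complex.conj_conj]
          ring1
        rw [he]
        exact hB₀
      · simp only [Complex.conj_im]
        linarith
  have hsplitgen : ∀ x : Fin (n+2) → ℂ,
      (B x x).re = -‖x 0‖ ^ 2 + ∑ i : Fin (n + 1), ‖x i.succ‖ ^ 2 := by
    intro x
    rw [Bre, Fin.sum_univ_succ]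
    congr 1
    · simp [eps]
    · refine Finset.sum_congr rfl fun i _ => ?_
      rw [eps_pos _ (by simp [Fin.val_succ])]
      ring1
  -- first coordinate is nonzero
  have hv0 : v 0 ≠ 0 := by
    intro h0
    apply hv
    have hs := hsplitgen v
    rw [h0] at hs
    have hsum0 : ∑ i : Fin (n + 1), ‖v i.succ‖ ^ 2 ≤ 0 := by
      simp only [norm_zero] at hs
      have : (0:ℝ)^2 = 0 := by norm_num
      rw [this] at hs
      linarith [hB, le_of_eq hs.symm]
    have hz : ∀ i ∈ Finset.univ, ‖v (Fin.succ i)‖ ^ 2 = (0:ℝ) := by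
      rw [← Finset.sum_eq_zero_iff_of_nonneg (fun i _ => by positivity)]
      exact le_antisymm hsum0 (Finset.sum_nonneg fun i _ => by positivity)
    funext i
    refine Fin.cases h0 (fun j => ?_) i
    have hj := hz j (Finset.mem_univ j)
    have hnn : ‖v j.succ‖ = 0 := by nlinarith [norm_nonneg (v j.succ)]
    simpa using hnn
  -- normalize
  set c : ℂ := (v 0)⁻¹ with hc
  set w : Fin (n+2) → ℂ := c • v with hwdef
  have hw0 : w 0 = 1 := by
    rw [hwdef]
    simp only [Pi.smul_apply, smul_eq_mul, hc]
    exact inv_mul_cancel₀ hv0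
  have hTw : T a b (n+2) w = lam • w := by
    rw [hwdef, _root_.map_smul, hev, smul_comm]
  have hBw : (B w w).re ≤ 0 := by
    have e : B w w = ((‖c‖^2 : ℝ) : ℂ) * B v v := by
      rw [hwdef, B_smul_left, B_smul_right, ← mul_assoc, mul_comm (conj c) c, Complex.mul_conj']
      push_cast
      ring1
    rw [e, Complex.re_ofReal_mul]
    exact mul_nonpos_of_nonneg_of_nonpos (by positivity) hB
  set g : ℕ → ℂ := ext w with hg
  have hg0 : g 0 = 1 := by
    rw [hg]
    have h2 : (0:ℕ) < n + 2 := by omega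
    simp only [ext, h2, dif_pos]
    rw [show (⟨0, h2⟩ : Fin (n+2)) = 0 from rfl]
    exact hw0
  have hgsucc : ∀ i : Fin (n+1), g ((i:ℕ)+1) = w i.succ := by
    intro i
    have h2 : (i:ℕ)+1 < n + 2 := by have := i.isLt; omega
    have hsv : i.succ = (⟨(i:ℕ)+1, h2⟩ : Fin (n+2)) := Fin.ext (by simp [Fin.val_succ])
    rw [hsv]
    simp only [hg, ext, h2, dif_pos]
  have hBsum : ∑ i : Fin (n+1), ‖w i.succ‖^2 ≤ 1 := by
    have hs := hsplitgen w
    rw [hw0] at hs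
    simp only [norm_one, one_pow] at hs
    linarith [hBw, le_of_eq hs.symm]
  have hrange : ∑ j ∈ Finset.range (n+1), ‖g (j+1)‖^2 = ∑ i : Fin (n+1), ‖w i.succ‖^2 := by
    rw [← Fin.sum_univ_eq_sum_range (fun j => ‖g (j+1)‖^2) (n+1)]
    exact Finset.sum_congr rfl fun i _ => by rw [hgsucc i]
  have hzero : ∀ j : ℕ, n+1 ≤ j → g (j+1) = 0 := by
    intro j hj
    have hnl : ¬ (j+1 < n+2) := by omega
    simp [hg, ext, hnl]
  have hpart : ∀ m : ℕ, ∑ j ∈ Finset.range m, ‖g (j+1)‖^2 ≤ 1 := by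
    intro m
    rcases le_total m (n+1) with hm | hm
    · calc ∑ j ∈ Finset.range m, ‖g (j+1)‖^2
          ≤ ∑ j ∈ Finset.range (n+1), ‖g (j+1)‖^2 :=
            Finset.sum_le_sum_of_subset_of_nonneg (Finset.range_subset_range.mpr hm)
              (fun _ _ _ => by positivity)
        _ = ∑ i : Fin (n+1), ‖w i.succ‖^2 := hrange
        _ ≤ 1 := hBsum
    · have he : ∑ j ∈ Finset.range m, ‖g (j+1)‖^2 = ∑ j ∈ Finset.range (n+1), ‖g (j+1)‖^2 := by
        refine (Finset.sum_subset (Finset.range_subset_range.mpr hm) ?_).symm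
        intro k hk1 hk2
        simp only [Finset.mem_range] at hk1 hk2
        rw [hzero k (by omega)]
        norm_num
      rw [he, hrange]
      exact hBsum
  have hcoord : ∀ i : Fin (n+2), (Mmat a b (n+2)).mulVec w i = lam * w i := by
    intro i
    have hcf := congrFun hTw i
    simpa [T, Matrix.mulVecLin_apply] using hcf
  have hext : ∀ k : ℕ, (h : k < n + 2) → w ⟨k, h⟩ = g k := by
    intro k h
    simp [hg, ext, h]
  have hrow0 : (a 0 : ℂ) - (b 0:ℂ) * g 1 = lam := by
    have h := hcoord 0
    rw [rowform] at h
    simp only [Fin.val_zero, if_pos rfl] at h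
    rw [show ext w 0 = g 0 from rfl, show ext w 1 = g 1 from rfl, hg0] at h
    push_cast at h
    rw [show (0 : Fin (n+2)) = ⟨0, by omega⟩ from rfl, hext 0 (by omega), hg0] at h
    linear_combination h
  have hrows : ∀ k : ℕ, k ≤ n →
      (b k:ℂ) * g k + (a (k+1):ℂ) * g (k+1) + (b (k+1):ℂ) * g (k+2) = lam * g (k+1) := by
    intro k hk
    have hlt : k + 1 < n + 2 := by omega
    have h := hcoord ⟨k+1, hlt⟩
    rw [rowform] at h
    simp only at h
    rw [if_neg (by omega : ¬ (k+1) = 0), if_neg (by omega : ¬ (k+1) = 0)] at h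
    rw [show k + 1 - 1 = k from rfl] at h
    rw [show ext w k = g k from rfl, show ext w (k+1) = g (k+1) from rfl,
      show ext w (k+1+1) = g (k+2) from rfl, hext (k+1) hlt] at h
    push_cast at h
    linear_combination h
  have hg1 : ‖g 1‖ ≤ 1 := by
    have h1 := hpart 1
    rw [Finset.sum_range_one] at h1
    nlinarith [norm_nonneg (g 1)]
  have hlamb : ‖lam‖ ≤ Ca + Cb := by
    rw [← hrow0]
    calc ‖(a 0:ℂ) - (b 0:ℂ) * g 1‖ ≤ ‖(a 0:ℂ)‖ + ‖(b 0:ℂ) * g 1‖ := norm_sub_le _ _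
      _ = |a 0| + |b 0| * ‖g 1‖ := by
          rw [norm_mul, Complex.norm_real, Complex.norm_real, Real.norm_eq_abs, Real.norm_eq_abs]
      _ ≤ Ca + Cb * 1 := by
          have hcb0 : (0:ℝ) ≤ Cb := le_trans (abs_nonneg _) (hCb 0)
          have hb0 : |b 0| * ‖g 1‖ ≤ Cb * 1 :=
            mul_le_mul (hCb 0) hg1 (norm_nonneg _) hcb0
          exact add_le_add (hCa 0) hb0
      _ = Ca + Cb := by ring
  exact ⟨lam, g, hg0, him, hlamb, hpart, hrow0, hrows⟩


lemma summable_sq (f : lp (fun _ : ℕ => ℂ) 2) :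
    Summable (fun j : ℕ => ‖(f : ∀ _ : ℕ, ℂ) j‖ ^ 2) := by
  have h := ((lp.memℓp f).summable (by norm_num : 0 < (2:ℝ≥0∞).toReal))
  have he : ∀ j : ℕ, ‖(f : ∀ _ : ℕ, ℂ) j‖ ^ (2:ℝ≥0∞).toReal = ‖(f : ∀ _ : ℕ, ℂ) j‖ ^ 2 := by
    intro j
    rw [show ((2:ℝ≥0∞).toReal) = ((2:ℕ):ℝ) by norm_num, Real.rpow_natCast]
  exact (summable_congr he).mp h

lemma coord_tendsto_zero (f : lp (fun _ : ℕ => ℂ) 2) :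
    Tendsto (fun j : ℕ => ‖(f : ∀ _ : ℕ, ℂ) j‖) atTop (𝓝 0) := by
  have h1 := (summable_sq f).tendsto_atTop_zero
  have h2 : Tendsto (fun j => Real.sqrt (‖(f : ∀ _ : ℕ, ℂ) j‖ ^ 2)) atTop (𝓝 (Real.sqrt 0)) :=
    (Real.continuous_sqrt.tendsto 0).comp h1
  rw [Real.sqrt_zero] at h2
  refine h2.congr fun j => ?_
  rw [Real.sqrt_sq (norm_nonneg _)]

lemma norm_sub_sq' (z w : ℂ) : ‖z - w‖^2 = ‖z‖^2 + ‖w‖^2 - 2 * (conj z * w).re := by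
  rw [Complex.sq_norm,
    Complex.sq_norm, Complex.sq_norm]
  simp only [Complex.normSq_apply, Complex.mul_re, Complex.sub_re, Complex.sub_im,
    Complex.conj_re, Complex.conj_im]
  ring1

lemma eig_unique (a b : ℕ → ℝ) (Cb : ℝ) (hCb : ∀ j, |b j| ≤ Cb)
    (H : lp (fun _ : ℕ => ℂ) 2 →L[ℂ] lp (fun _ : ℕ => ℂ) 2)
    (hH0 : ∀ x : lp (fun _ : ℕ => ℂ) 2,
      (H x : ∀ _ : ℕ, ℂ) 0 = (a 0 : ℂ) * (x : ∀ _ : ℕ, ℂ) 0 - (b 0 : ℂ) * (x : ∀ _ : ℕ, ℂ) 1)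
    (hHk : ∀ x : lp (fun _ : ℕ => ℂ) 2, ∀ k : ℕ,
      (H x : ∀ _ : ℕ, ℂ) (k + 1) = (b k : ℂ) * (x : ∀ _ : ℕ, ℂ) k
        + (a (k + 1) : ℂ) * (x : ∀ _ : ℕ, ℂ) (k + 1) + (b (k + 1) : ℂ) * (x : ∀ _ : ℕ, ℂ) (k + 2))
    (lam mu : ℂ) (f g : lp (fun _ : ℕ => ℂ) 2)
    (hlami : 0 ≤ lam.im) (hmui : 0 ≤ mu.im)
    (hf : f ≠ 0) (hg : g ≠ 0)
    (hfe : H f = lam • f) (hge : H g = mu • g)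
    (hfQ : -‖(f : ∀ _ : ℕ, ℂ) 0‖ ^ 2 + ∑' j : ℕ, ‖(f : ∀ _ : ℕ, ℂ) (j + 1)‖ ^ 2 ≤ 0)
    (hgQ : -‖(g : ∀ _ : ℕ, ℂ) 0‖ ^ 2 + ∑' j : ℕ, ‖(g : ∀ _ : ℕ, ℂ) (j + 1)‖ ^ 2 ≤ 0) :
    lam = mu := by
  by_contra hne
  set F : ℕ → ℂ := (f : ∀ _ : ℕ, ℂ) with hFdef
  set G : ℕ → ℂ := (g : ∀ _ : ℕ, ℂ) with hGdef
  have hFs : Summable (fun j => ‖F j‖^2) := summable_sq f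
  have hGs : Summable (fun j => ‖G j‖^2) := summable_sq g
  have hFs1 : Summable (fun j => ‖F (j+1)‖^2) := (summable_nat_add_iff 1).mpr hFs
  have hGs1 : Summable (fun j => ‖G (j+1)‖^2) := (summable_nat_add_iff 1).mpr hGs
  have hcoord0 : ∀ (h : lp (fun _ : ℕ => ℂ) 2),
      (h : ∀ _ : ℕ, ℂ) 0 ≠ 0 →
      (-‖(h : ∀ _ : ℕ, ℂ) 0‖ ^ 2 + ∑' j : ℕ, ‖(h : ∀ _ : ℕ, ℂ) (j + 1)‖ ^ 2 ≤ 0) → True := fun _ _ _ => trivial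
  have hF0 : F 0 ≠ 0 := by
    intro h0
    apply hf
    apply lp.ext
    have htsum : ∑' j : ℕ, ‖F (j+1)‖^2 ≤ 0 := by
      rw [h0] at hfQ
      simpa using hfQ
    have hall : ∀ j, F (j+1) = 0 := by
      intro j
      have hle := Summable.le_tsum hFs1 j (fun i _ => by positivity)
      have hnz : (0:ℝ) ≤ ‖F (j+1)‖^2 := by positivity
      have h2 : ‖F (j+1)‖ = 0 := by nlinarith [norm_nonneg (F (j+1))]
      exact norm_eq_zero.mp h2
    funext k
    rw [lp.coeFn_zero]
    show F k = 0
    cases k with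
    | zero => exact h0
    | succ j => exact hall j
  have hG0 : G 0 ≠ 0 := by
    intro h0
    apply hg
    apply lp.ext
    have htsum : ∑' j : ℕ, ‖G (j+1)‖^2 ≤ 0 := by
      rw [h0] at hgQ
      simpa using hgQ
    have hall : ∀ j, G (j+1) = 0 := by
      intro j
      have hle := Summable.le_tsum hGs1 j (fun i _ => by positivity)
      have hnz : (0:ℝ) ≤ ‖G (j+1)‖^2 := by positivity
      have h2 : ‖G (j+1)‖ = 0 := by nlinarith [norm_nonneg (G (j+1))]
      exact norm_eq_zero.mp h2
    funext k
    rw [lp.coeFn_zero]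
    show G k = 0
    cases k with
    | zero => exact h0
    | succ j => exact hall j
  -- coordinatewise eigenvalue equations
  have ef0 : (a 0:ℂ) * F 0 - (b 0:ℂ) * F 1 = lam * F 0 := by
    have h := hH0 f
    rw [hfe, lp.coeFn_smul] at h
    simpa using h.symm
  have eg0 : (a 0:ℂ) * G 0 - (b 0:ℂ) * G 1 = mu * G 0 := by
    have h := hH0 g
    rw [hge, lp.coeFn_smul] at h
    simpa using h.symm
  have efk : ∀ k : ℕ, (b k:ℂ) * F k + (a (k+1):ℂ) * F (k+1) + (b (k+1):ℂ) * F (k+2)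
      = lam * F (k+1) := by
    intro k
    have h := hHk f k
    rw [hfe, lp.coeFn_smul] at h
    simpa using h.symm
  have egk : ∀ k : ℕ, (b k:ℂ) * G k + (a (k+1):ℂ) * G (k+1) + (b (k+1):ℂ) * G (k+2)
      = mu * G (k+1) := by
    intro k
    have h := hHk g k
    rw [hge, lp.coeFn_smul] at h
    simpa using h.symm
  have cf0 : (a 0:ℂ) * conj (F 0) - (b 0:ℂ) * conj (F 1) = conj lam * conj (F 0) := by
    have h := congrArg conj ef0
    simpa [map_sub, map_mul, Complex.conj_ofReal] using h
  have cfk : ∀ k : ℕ, (b k:ℂ) * conj (F k) + (a (k+1):ℂ) * conj (F (k+1))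
      + (b (k+1):ℂ) * conj (F (k+2)) = conj lam * conj (F (k+1)) := by
    intro k
    have h := congrArg conj (efk k)
    simpa [map_add, map_mul, Complex.conj_ofReal] using h
  have hcne : conj lam ≠ mu := by
    intro h
    have h1 : mu.im = -lam.im := by rw [← h]; simp
    have h2 : lam.im = 0 := by
      have := hmui
      rw [h1] at this
      linarith
    apply hne
    rw [← h, Complex.conj_eq_iff_im.mpr h2]
  have hne2 : mu - conj lam ≠ 0 := sub_ne_zero.mpr (Ne.symm hcne)
  -- Green/Wronskian telescoping identity
  have key : ∀ m : ℕ, (mu - conj lam)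
        * (-(conj (F 0) * G 0) + ∑ k ∈ Finset.range m, conj (F (k+1)) * G (k+1))
      = (b m:ℂ) * (conj (F m) * G (m+1) - conj (F (m+1)) * G m) := by
    intro m
    induction m with
    | zero =>
      simp only [Finset.range_zero, Finset.sum_empty, add_zero]
      linear_combination (conj (F 0)) * eg0 - (G 0) * cf0
    | succ m ih =>
      rw [Finset.sum_range_succ, show m + 1 + 1 = m + 2 from rfl]
      linear_combination ih - (conj (F (m+1))) * egk m + (G (m+1)) * cfk m
  -- the Wronskian tends to zero
  have hnF := coord_tendsto_zero f
  have hnG := coord_tendsto_zero g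
  have hnF1 : Tendsto (fun m : ℕ => ‖F (m+1)‖) atTop (𝓝 0) := hnF.comp (tendsto_add_atTop_nat 1)
  have hnG1 : Tendsto (fun m : ℕ => ‖G (m+1)‖) atTop (𝓝 0) := hnG.comp (tendsto_add_atTop_nat 1)
  have hWt : Tendsto (fun m : ℕ => (b m:ℂ) * (conj (F m) * G (m+1) - conj (F (m+1)) * G m))
      atTop (𝓝 0) := by
    have hb : Tendsto (fun m : ℕ => Cb * (‖F m‖ * ‖G (m+1)‖ + ‖F (m+1)‖ * ‖G m‖)) atTop
        (𝓝 (Cb * (0*0+0*0))) := ((hnF.mul hnG1).add (hnF1.mul hnG)).const_mul Cb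
    rw [show Cb * (0*0+0*0) = (0:ℝ) by ring] at hb
    refine squeeze_zero_norm (fun m => ?_) hb
    have h1 : ‖(b m:ℂ) * (conj (F m) * G (m+1) - conj (F (m+1)) * G m)‖
        ≤ |b m| * (‖F m‖ * ‖G (m+1)‖ + ‖F (m+1)‖ * ‖G m‖) := by
      rw [norm_mul, Complex.norm_real, Real.norm_eq_abs]
      refine mul_le_mul_of_nonneg_left ?_ (abs_nonneg _)
      refine le_trans (norm_sub_le _ _) ?_
      rw [norm_mul, norm_mul, RCLike.norm_conj, RCLike.norm_conj]
    refine le_trans h1 ?_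
    refine mul_le_mul_of_nonneg_right (hCb m) ?_
    positivity
  have hSt : Tendsto (fun m : ℕ =>
      -(conj (F 0) * G 0) + ∑ k ∈ Finset.range m, conj (F (k+1)) * G (k+1)) atTop (𝓝 0) := by
    have heq : ∀ m : ℕ, -(conj (F 0) * G 0) + ∑ k ∈ Finset.range m, conj (F (k+1)) * G (k+1)
        = (mu - conj lam)⁻¹
          * ((b m:ℂ) * (conj (F m) * G (m+1) - conj (F (m+1)) * G m)) := by
      intro m
      rw [← key m, ← mul_assoc, inv_mul_cancel₀ hne2, one_mul]
    have h2 := hWt.const_mul ((mu - conj lam)⁻¹)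
    rw [mul_zero] at h2
    exact Tendsto.congr (fun m => (heq m).symm) h2
  have hcross : Tendsto (fun m : ℕ => ∑ k ∈ Finset.range m, conj (F (k+1)) * G (k+1)) atTop
      (𝓝 (conj (F 0) * G 0)) := by
    have h2 := hSt.add (tendsto_const_nhds (x := conj (F 0) * G 0))
    rw [zero_add] at h2
    refine Tendsto.congr (fun m => ?_) h2
    ring1
  -- the difference vector
  set D : lp (fun _ : ℕ => ℂ) 2 := (G 0) • f - (F 0) • g with hD
  have hDcoord : ∀ k, (D : ∀ _ : ℕ, ℂ) k = G 0 * F k - F 0 * G k := by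
    intro k
    rw [hD, lp.coeFn_sub, lp.coeFn_smul, lp.coeFn_smul]
    simp [hFdef, hGdef]
  have hDs : Summable (fun j : ℕ => ‖(D : ∀ _:ℕ, ℂ) (j+1)‖^2) :=
    (summable_nat_add_iff 1).mpr (summable_sq D)
  have hTlim : Tendsto (fun m : ℕ => ∑ k ∈ Finset.range m, ‖(D : ∀ _:ℕ, ℂ) (k+1)‖^2) atTop
      (𝓝 (∑' k : ℕ, ‖(D : ∀ _:ℕ, ℂ) (k+1)‖^2)) := hDs.hasSum.tendsto_sum_nat
  have hterm : ∀ k : ℕ, ‖(D : ∀ _:ℕ, ℂ) k‖^2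
      = ‖G 0‖^2 * ‖F k‖^2 + ‖F 0‖^2 * ‖G k‖^2
        - 2 * ((conj (G 0) * F 0) * (conj (F k) * G k)).re := by
    intro k
    rw [hDcoord k, norm_sub_sq', norm_mul, norm_mul, mul_pow, mul_pow]
    have h2 : conj (G 0 * F k) * (F 0 * G k) = (conj (G 0) * F 0) * (conj (F k) * G k) := by
      rw [map_mul]
      ring1
    rw [h2]
  have hexp : ∀ m : ℕ, ∑ k ∈ Finset.range m, ‖(D : ∀ _:ℕ, ℂ) (k+1)‖^2
      = ‖G 0‖^2 * (∑ k ∈ Finset.range m, ‖F (k+1)‖^2)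
        + ‖F 0‖^2 * (∑ k ∈ Finset.range m, ‖G (k+1)‖^2)
        - 2 * ((conj (G 0) * F 0) * (∑ k ∈ Finset.range m, conj (F (k+1)) * G (k+1))).re := by
    intro m
    rw [Finset.mul_sum, Finset.mul_sum, Finset.mul_sum, Complex.re_sum, Finset.mul_sum,
      ← Finset.sum_add_distrib, ← Finset.sum_sub_distrib]
    exact Finset.sum_congr rfl fun k _ => hterm (k+1)
  have hFlim : Tendsto (fun m : ℕ => ∑ k ∈ Finset.range m, ‖F (k+1)‖^2) atTop
      (𝓝 (∑' k : ℕ, ‖F (k+1)‖^2)) := hFs1.hasSum.tendsto_sum_nat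
  have hGlim : Tendsto (fun m : ℕ => ∑ k ∈ Finset.range m, ‖G (k+1)‖^2) atTop
      (𝓝 (∑' k : ℕ, ‖G (k+1)‖^2)) := hGs1.hasSum.tendsto_sum_nat
  have hre : Tendsto (fun m : ℕ =>
      ((conj (G 0) * F 0) * (∑ k ∈ Finset.range m, conj (F (k+1)) * G (k+1))).re) atTop
      (𝓝 (((conj (G 0) * F 0) * (conj (F 0) * G 0)).re)) :=
    (Complex.continuous_re.tendsto _).comp (hcross.const_mul (conj (G 0) * F 0))
  have hLlim : Tendsto (fun m : ℕ => ∑ k ∈ Finset.range m, ‖(D : ∀ _:ℕ, ℂ) (k+1)‖^2) atTop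
      (𝓝 (‖G 0‖^2 * (∑' k : ℕ, ‖F (k+1)‖^2) + ‖F 0‖^2 * (∑' k : ℕ, ‖G (k+1)‖^2)
          - 2 * ((conj (G 0) * F 0) * (conj (F 0) * G 0)).re)) := by
    have h2 := ((hFlim.const_mul (‖G 0‖^2)).add (hGlim.const_mul (‖F 0‖^2))).sub
      (hre.const_mul 2)
    exact Tendsto.congr (fun m => (hexp m).symm) h2
  have htsum_eq : ∑' k : ℕ, ‖(D : ∀ _:ℕ, ℂ) (k+1)‖^2
      = ‖G 0‖^2 * (∑' k : ℕ, ‖F (k+1)‖^2) + ‖F 0‖^2 * (∑' k : ℕ, ‖G (k+1)‖^2)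
        - 2 * ((conj (G 0) * F 0) * (conj (F 0) * G 0)).re :=
    tendsto_nhds_unique hTlim hLlim
  have hu : ((conj (G 0) * F 0) * (conj (F 0) * G 0)).re = ‖F 0‖^2 * ‖G 0‖^2 := by
    have h2 : (conj (G 0) * F 0) * (conj (F 0) * G 0) = (F 0 * conj (F 0)) * (G 0 * conj (G 0)) := by
      ring1
    rw [h2, Complex.mul_conj', Complex.mul_conj', ← Complex.ofReal_pow, ← Complex.ofReal_pow,
      ← Complex.ofReal_mul, Complex.ofReal_re]
  have htf : ∑' k : ℕ, ‖F (k+1)‖^2 ≤ ‖F 0‖^2 := by linarith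
  have htg : ∑' k : ℕ, ‖G (k+1)‖^2 ≤ ‖G 0‖^2 := by linarith
  have htD : ∑' k : ℕ, ‖(D : ∀ _:ℕ, ℂ) (k+1)‖^2 ≤ 0 := by
    rw [htsum_eq, hu]
    nlinarith [sq_nonneg (‖F 0‖), sq_nonneg (‖G 0‖), htf, htg]
  have hallD : ∀ k : ℕ, (D : ∀ _:ℕ, ℂ) (k+1) = 0 := by
    intro k
    have hle := Summable.le_tsum hDs k (fun i _ => by positivity)
    have hnz : (0:ℝ) ≤ ‖(D : ∀ _:ℕ, ℂ) (k+1)‖^2 := by positivity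
    have h2 : ‖(D : ∀ _:ℕ, ℂ) (k+1)‖ = 0 := by nlinarith [norm_nonneg ((D : ∀ _:ℕ, ℂ) (k+1))]
    exact norm_eq_zero.mp h2
  have hprop : ∀ k : ℕ, G 0 * F k = F 0 * G k := by
    intro k
    cases k with
    | zero => ring1
    | succ j =>
      have h2 := hallD j
      rw [hDcoord (j+1)] at h2
      exact sub_eq_zero.mp h2
  have hfin : (lam - mu) * (G 0 * F 0) = 0 := by
    linear_combination -((G 0) * ef0) + (F 0) * eg0 - (b 0:ℂ) * hprop 1 + mu * hprop 0
  rcases mul_eq_zero.mp hfin with h | h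
  · exact hne (sub_eq_zero.mp h)
  · exact absurd h (mul_ne_zero hG0 hF0)

end
end Stmt4Aux

open scoped ENNReal in
/-- The operator `H` has exactly one eigenvalue of nonpositive type. -/
theorem stmt_4
    (a b : ℕ → ℝ) (ha : ∃ C : ℝ, ∀ j, |a j| ≤ C) (hbbd : ∃ C : ℝ, ∀ j, |b j| ≤ C)
    (hb : ∀ j, 0 < b j)
    (H : lp (fun _ : ℕ => ℂ) 2 →L[ℂ] lp (fun _ : ℕ => ℂ) 2)
    (hH0 : ∀ x : lp (fun _ : ℕ => ℂ) 2,
      (H x : ∀ _ : ℕ, ℂ) 0 = (a 0 : ℂ) * (x : ∀ _ : ℕ, ℂ) 0 - (b 0 : ℂ) * (x : ∀ _ : ℕ, ℂ) 1)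
    (hHk : ∀ x : lp (fun _ : ℕ => ℂ) 2, ∀ k : ℕ,
      (H x : ∀ _ : ℕ, ℂ) (k + 1) = (b k : ℂ) * (x : ∀ _ : ℕ, ℂ) k
        + (a (k + 1) : ℂ) * (x : ∀ _ : ℕ, ℂ) (k + 1) + (b (k + 1) : ℂ) * (x : ∀ _ : ℕ, ℂ) (k + 2))
    :
    ∃! lam : ℂ, 0 ≤ lam.im ∧ ∃ f : lp (fun _ : ℕ => ℂ) 2, f ≠ 0 ∧ H f = lam • f ∧
      -‖(f : ∀ _ : ℕ, ℂ) 0‖ ^ 2 + ∑' j : ℕ, ‖(f : ∀ _ : ℕ, ℂ) (j + 1)‖ ^ 2 ≤ 0 := by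
  classical
  obtain ⟨Ca, hCa⟩ := ha
  obtain ⟨Cb, hCb⟩ := hbbd
  choose lamseq gseq h0seq himseq hbndseq hpartseq hrow0seq hrowsseq using
    fun n => Stmt4Aux.exists_approx a b Ca Cb hCa hCb n
  set x : ℕ → (ℕ → ℂ) × ℂ := fun n => (gseq n, lamseq n) with hx
  set K : Set ((ℕ → ℂ) × ℂ) :=
    (Set.univ.pi fun _ : ℕ => Metric.closedBall (0:ℂ) 1) ×ˢ Metric.closedBall (0:ℂ) (Ca + Cb)
    with hKdef
  have hKc : IsCompact K :=
    (isCompact_univ_pi fun _ => isCompact_closedBall _ _).prod (isCompact_closedBall _ _)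
  have hxK : ∀ n, x n ∈ K := by
    intro n
    constructor
    · rw [Set.mem_pi]
      intro j _
      rw [Metric.mem_closedBall, dist_zero_right]
      cases j with
      | zero =>
        show ‖gseq n 0‖ ≤ 1
        rw [h0seq n]
        norm_num
      | succ i =>
        show ‖gseq n (i+1)‖ ≤ 1
        have hsum := hpartseq n (i+1)
        have hterm : ‖gseq n (i+1)‖^2 ≤ 1 := by
          have hle := Finset.single_le_sum (f := fun j => ‖gseq n (j+1)‖^2)
            (fun j _ => by positivity) (Finset.mem_range.mpr (Nat.lt_succ_self i))
          calc ‖gseq n (i+1)‖^2 ≤ ∑ j ∈ Finset.range (i+1), ‖gseq n (j+1)‖^2 := by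
                simpa using hle
            _ ≤ 1 := hsum
        nlinarith [norm_nonneg (gseq n (i+1))]
    · rw [Metric.mem_closedBall, dist_zero_right]
      exact hbndseq n
  have hmap : Filter.map x atTop ≤ Filter.principal K :=
    le_principal_iff.mpr (Filter.mem_map.mpr (Filter.Eventually.of_forall hxK))
  obtain ⟨z, hzK, hz⟩ := hKc.exists_clusterPt hmap
  have hclosed : ∀ s : Set ((ℕ → ℂ) × ℂ), IsClosed s → (∀ᶠ n in atTop, x n ∈ s) → z ∈ s := by
    intro s hs hev
    have h1 : ClusterPt z (Filter.principal s) :=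
      hz.mono (le_principal_iff.mpr (Filter.mem_map.mpr hev))
    rw [← hs.closure_eq]
    exact mem_closure_iff_clusterPt.mpr h1
  have hg0 : z.1 0 = 1 := by
    refine hclosed {p | p.1 0 = 1}
      (isClosed_eq ((continuous_apply 0).comp continuous_fst) continuous_const)
      (Filter.Eventually.of_forall fun n => h0seq n)
  have him : 0 ≤ z.2.im := by
    refine hclosed {p | 0 ≤ p.2.im}
      (isClosed_le continuous_const (Complex.continuous_im.comp continuous_snd))
      (Filter.Eventually.of_forall fun n => himseq n)
  have hpart : ∀ m : ℕ, ∑ j ∈ Finset.range m, ‖z.1 (j+1)‖^2 ≤ 1 := by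
    intro m
    refine hclosed {p | ∑ j ∈ Finset.range m, ‖p.1 (j+1)‖^2 ≤ 1}
      (isClosed_le (continuous_finset_sum _ fun j _ =>
        (((continuous_apply (j+1)).comp continuous_fst).norm.pow 2)) continuous_const)
      (Filter.Eventually.of_forall fun n => hpartseq n m)
  have hrow0 : (a 0 : ℂ) - (b 0 : ℂ) * z.1 1 = z.2 := by
    refine hclosed {p | (a 0 : ℂ) - (b 0 : ℂ) * p.1 1 = p.2}
      (isClosed_eq (continuous_const.sub
        (continuous_const.mul ((continuous_apply 1).comp continuous_fst))) continuous_snd)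
      (Filter.Eventually.of_forall fun n => hrow0seq n)
  have hrows : ∀ k : ℕ, (b k : ℂ) * z.1 k + (a (k+1) : ℂ) * z.1 (k+1)
      + (b (k+1) : ℂ) * z.1 (k+2) = z.2 * z.1 (k+1) := by
    intro k
    refine hclosed {p | (b k : ℂ) * p.1 k + (a (k+1) : ℂ) * p.1 (k+1)
        + (b (k+1) : ℂ) * p.1 (k+2) = p.2 * p.1 (k+1)}
      (isClosed_eq (((continuous_const.mul ((continuous_apply k).comp continuous_fst)).add
        (continuous_const.mul ((continuous_apply (k+1)).comp continuous_fst))).add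
        (continuous_const.mul ((continuous_apply (k+2)).comp continuous_fst)))
        (continuous_snd.mul ((continuous_apply (k+1)).comp continuous_fst)))
      (Filter.eventually_atTop.mpr ⟨k, fun n hn => hrowsseq n k hn⟩)
  -- build the lp element
  have hsumbound : ∀ m : ℕ, ∑ j ∈ Finset.range m, ‖z.1 j‖^2 ≤ 2 := by
    intro m
    have h1 : ∑ j ∈ Finset.range m, ‖z.1 j‖^2 ≤ ∑ j ∈ Finset.range (m+1), ‖z.1 j‖^2 :=
      Finset.sum_le_sum_of_subset_of_nonneg (Finset.range_subset_range.mpr (Nat.le_succ m))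
        (fun _ _ _ => by positivity)
    rw [Finset.sum_range_succ'] at h1
    have h2 := hpart m
    rw [hg0] at h1
    simp only [norm_one, one_pow] at h1
    linarith
  have hmem : Memℓp z.1 2 := by
    apply memℓp_gen
    have hs := summable_of_sum_range_le (c := 2) (fun j => by positivity) hsumbound
    have he : ∀ j : ℕ, ‖z.1 j‖ ^ (2:ℝ≥0∞).toReal = ‖z.1 j‖^2 := fun j => by
      rw [show ((2:ℝ≥0∞).toReal) = ((2:ℕ):ℝ) by norm_num, Real.rpow_natCast]
    exact (summable_congr he).mpr hs
  set fz : lp (fun _ : ℕ => ℂ) 2 := ⟨z.1, hmem⟩ with hfz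
  have hfzco : (fz : ∀ _ : ℕ, ℂ) = z.1 := rfl
  have hfne : fz ≠ 0 := by
    intro h
    have h1 : (fz : ∀ _ : ℕ, ℂ) 0 = 0 := by
      rw [h, lp.coeFn_zero]
      rfl
    rw [hfzco, hg0] at h1
    simpa using h1
  have hfev : H fz = z.2 • fz := by
    apply lp.ext
    funext k
    rw [lp.coeFn_smul]
    cases k with
    | zero =>
      rw [hH0 fz]
      simp only [hfzco, Pi.smul_apply, smul_eq_mul]
      rw [hg0]
      rw [mul_one]
      linear_combination hrow0
    | succ k =>
      rw [hHk fz k]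
      simp only [hfzco, Pi.smul_apply, smul_eq_mul]
      exact hrows k
  have hfQ : -‖(fz : ∀ _ : ℕ, ℂ) 0‖ ^ 2 + ∑' j : ℕ, ‖(fz : ∀ _ : ℕ, ℂ) (j + 1)‖ ^ 2 ≤ 0 := by
    have htsum : ∑' j : ℕ, ‖z.1 (j+1)‖^2 ≤ 1 :=
      Real.tsum_le_of_sum_range_le (fun j => by positivity) hpart
    simp only [hfzco]
    rw [hg0]
    simp only [norm_one, one_pow]
    linarith
  refine ⟨z.2, ⟨him, fz, hfne, hfev, hfQ⟩, ?_⟩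
  rintro y ⟨hyim, gy, h1, h2, h3⟩
  exact Stmt4Aux.eig_unique a b Cb hCb H hH0 hHk y z.2 gy fz hyim him h1 hfne h2 hfev h3 hfQ
end

section
/- The spectrum of H contains at most one point with strictly positive imaginary part, and every spectral point of H with strictly positive imaginary part is an eigenvalue of H. -/
set_option maxHeartbeats 1000000

open MeasureTheory Complex Filter

noncomputable section Stmt5Aux

local notation "E2" => lp (fun _ : ℕ => ℂ) 2

lemma stmt5_sqsum (f : lp (fun _ : ℕ => ℂ) 2) :
    Summable fun k => ‖(f : ∀ _ : ℕ, ℂ) k‖ ^ 2 := by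
  have h := (memℓp_gen_iff (p := 2) (by norm_num)).1 (lp.memℓp f)
  have h2 : ((2 : ENNReal).toReal) = ((2 : ℕ) : ℝ) := by norm_num
  rw [h2] at h
  simpa [Real.rpow_natCast] using h

lemma stmt5_summable_mul_norm {F G : ℕ → ℂ} (hF : Summable fun k => ‖F k‖ ^ 2)
    (hG : Summable fun k => ‖G k‖ ^ 2) : Summable fun k => ‖F k‖ * ‖G k‖ := by
  refine Summable.of_nonneg_of_le (fun k => by positivity) (fun k => ?_)
    ((hF.add hG).div_const 2)
  have h := two_mul_le_add_sq ‖F k‖ ‖G k‖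
  nlinarith [h]

lemma stmt5_summable_cFG {c : ℕ → ℝ} {C : ℝ} (hc : ∀ k, |c k| ≤ C) {F G : ℕ → ℂ}
    (hF : Summable fun k => ‖F k‖ ^ 2) (hG : Summable fun k => ‖G k‖ ^ 2) :
    Summable fun k => (c k : ℂ) * (F k * G k) := by
  refine Summable.of_norm (Summable.of_nonneg_of_le (fun k => norm_nonneg _) (fun k => ?_)
    ((stmt5_summable_mul_norm hF hG).mul_left C))
  have h1 : ‖(c k : ℂ) * (F k * G k)‖ = |c k| * (‖F k‖ * ‖G k‖) := by
    simp [norm_mul, Complex.norm_real, mul_assoc, Real.norm_eq_abs]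
  rw [h1]
  exact mul_le_mul_of_nonneg_right (hc k) (by positivity)


lemma stmt5_bilinear (a b : ℕ → ℝ) {Cb : ℝ} (hbC : ∀ j, |b j| ≤ Cb) {z w : ℂ} (hzw : z ≠ w)
    (F G : ℕ → ℂ)
    (hF2 : Summable fun k => ‖F k‖ ^ 2) (hG2 : Summable fun k => ‖G k‖ ^ 2)
    (hF0 : z * F 0 = (a 0 : ℂ) * F 0 - (b 0 : ℂ) * F 1)
    (hFk : ∀ k, z * F (k + 1) = (b k : ℂ) * F k + (a (k+1) : ℂ) * F (k+1) + (b (k+1) : ℂ) * F (k+2))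
    (hG0 : w * G 0 = (a 0 : ℂ) * G 0 - (b 0 : ℂ) * G 1)
    (hGk : ∀ k, w * G (k + 1) = (b k : ℂ) * G k + (a (k+1) : ℂ) * G (k+1) + (b (k+1) : ℂ) * G (k+2)) :
    ∑' k, F k * G k = 2 * (F 0 * G 0) := by
  have hCb0 : 0 ≤ Cb := le_trans (abs_nonneg _) (hbC 0)
  have hsum : Summable fun k => F k * G k := by
    have h := stmt5_summable_cFG (c := fun _ => (1:ℝ)) (C := 1) (fun k => by norm_num) hF2 hG2
    simpa using h
  have key : ∀ M, (z - w) * (∑ k ∈ Finset.range (M+1), F k * G k) =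
      ((b M : ℂ) * (F (M+1) * G M - F M * G (M+1)))
        - 2 * ((b 0 : ℂ) * (F 1 * G 0 - F 0 * G 1)) := by
    intro M
    induction M with
    | zero =>
      rw [Finset.sum_range_one]
      linear_combination G 0 * hF0 - F 0 * hG0
    | succ M ih =>
      rw [Finset.sum_range_succ, mul_add, ih]
      linear_combination G (M+1) * hFk M - F (M+1) * hGk M
  -- W M tends to zero
  have h1 : Summable fun M => ‖F (M+1)‖ * ‖G M‖ :=
    stmt5_summable_mul_norm ((summable_nat_add_iff 1).2 hF2) hG2
  have h2 : Summable fun M => ‖F M‖ * ‖G (M+1)‖ :=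
    stmt5_summable_mul_norm hF2 ((summable_nat_add_iff 1).2 hG2)
  have hWnorm : Tendsto (fun M => Cb * (‖F (M+1)‖ * ‖G M‖ + ‖F M‖ * ‖G (M+1)‖)) atTop (nhds 0) := by
    have := (h1.tendsto_atTop_zero.add h2.tendsto_atTop_zero).const_mul Cb
    simpa using this
  have hW0 : Tendsto (fun M => (b M : ℂ) * (F (M+1) * G M - F M * G (M+1))) atTop (nhds 0) := by
    rw [tendsto_zero_iff_norm_tendsto_zero]
    refine squeeze_zero (fun M => norm_nonneg _) (fun M => ?_) hWnorm
    have hb : ‖((b M : ℂ))‖ ≤ Cb := by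
      simpa [Complex.norm_real, Real.norm_eq_abs] using hbC M
    calc ‖(b M : ℂ) * (F (M+1) * G M - F M * G (M+1))‖
        = ‖(b M : ℂ)‖ * ‖F (M+1) * G M - F M * G (M+1)‖ := norm_mul _ _
      _ ≤ Cb * (‖F (M+1)‖ * ‖G M‖ + ‖F M‖ * ‖G (M+1)‖) := by
          refine mul_le_mul hb ?_ (norm_nonneg _) hCb0
          refine le_trans (norm_sub_le _ _) ?_
          simp [norm_mul]
  have hps : Tendsto (fun M => ∑ k ∈ Finset.range (M+1), F k * G k) atTop
      (nhds (∑' k, F k * G k)) :=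
    hsum.hasSum.tendsto_sum_nat.comp (tendsto_add_atTop_nat 1)
  have hL1 : Tendsto (fun M => (z - w) * ∑ k ∈ Finset.range (M+1), F k * G k) atTop
      (nhds ((z - w) * ∑' k, F k * G k)) := hps.const_mul _
  have hL2 : Tendsto (fun M => (z - w) * ∑ k ∈ Finset.range (M+1), F k * G k) atTop
      (nhds (0 - 2 * ((b 0 : ℂ) * (F 1 * G 0 - F 0 * G 1)))) := by
    simp only [key]
    exact hW0.sub tendsto_const_nhds
  have hEq := tendsto_nhds_unique hL1 hL2
  have hbase : (z - w) * (F 0 * G 0) = -((b 0 : ℂ) * (F 1 * G 0 - F 0 * G 1)) := by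
    linear_combination G 0 * hF0 - F 0 * hG0
  have : (z - w) * ∑' k, F k * G k = (z - w) * (2 * (F 0 * G 0)) := by
    rw [hEq]; linear_combination -2 * hbase
  exact mul_left_cancel₀ (sub_ne_zero.2 hzw) this

lemma stmt5_conj_sqsum {F : ℕ → ℂ} (h : Summable fun k => ‖F k‖ ^ 2) :
    Summable fun k => ‖(starRingEnd ℂ) (F k)‖ ^ 2 := by
  simpa using h

lemma stmt5_inner_expand (a b : ℕ → ℝ) {Ca Cb : ℝ} (haC : ∀ j, |a j| ≤ Ca) (hbC : ∀ j, |b j| ≤ Cb)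
    (J : E2 →L[ℂ] E2)
    (hJ0 : ∀ y : E2, (J y : ∀ _ : ℕ, ℂ) 0
      = (a 0 : ℂ) * (y : ∀ _ : ℕ, ℂ) 0 + (b 0 : ℂ) * (y : ∀ _ : ℕ, ℂ) 1)
    (hJk : ∀ (y : E2) (k : ℕ), (J y : ∀ _ : ℕ, ℂ) (k+1)
      = (b k : ℂ) * (y : ∀ _ : ℕ, ℂ) k + (a (k+1) : ℂ) * (y : ∀ _ : ℕ, ℂ) (k+1)
        + (b (k+1) : ℂ) * (y : ∀ _ : ℕ, ℂ) (k+2))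
    (x y : E2) :
    (inner ℂ x (J y) : ℂ) =
      (∑' k, (a k : ℂ) * ((starRingEnd ℂ) ((x : ∀ _ : ℕ, ℂ) k) * (y : ∀ _ : ℕ, ℂ) k))
      + (∑' k, (b k : ℂ) * ((starRingEnd ℂ) ((x : ∀ _ : ℕ, ℂ) (k+1)) * (y : ∀ _ : ℕ, ℂ) k))
      + (∑' k, (b k : ℂ) * ((starRingEnd ℂ) ((x : ∀ _ : ℕ, ℂ) k) * (y : ∀ _ : ℕ, ℂ) (k+1))) := by
  set X : ℕ → ℂ := (x : ∀ _ : ℕ, ℂ) with hX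
  set Y : ℕ → ℂ := (y : ∀ _ : ℕ, ℂ) with hY
  have hXs : Summable fun k => ‖X k‖ ^ 2 := stmt5_sqsum x
  have hYs : Summable fun k => ‖Y k‖ ^ 2 := stmt5_sqsum y
  have hXs1 : Summable fun k => ‖X (k+1)‖ ^ 2 := (summable_nat_add_iff 1).2 hXs
  have hYs1 : Summable fun k => ‖Y (k+1)‖ ^ 2 := (summable_nat_add_iff 1).2 hYs
  set f1 : ℕ → ℂ := fun k => (a k : ℂ) * ((starRingEnd ℂ) (X k) * Y k) with hf1
  set f2 : ℕ → ℂ := fun k => (b k : ℂ) * ((starRingEnd ℂ) (X (k+1)) * Y k) with hf2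
  set f3 : ℕ → ℂ := fun k => (b k : ℂ) * ((starRingEnd ℂ) (X k) * Y (k+1)) with hf3
  have s1 : Summable f1 := stmt5_summable_cFG haC (stmt5_conj_sqsum hXs) hYs
  have s2 : Summable f2 := stmt5_summable_cFG hbC (stmt5_conj_sqsum hXs1) hYs
  have s3 : Summable f3 := stmt5_summable_cFG hbC (stmt5_conj_sqsum hXs) hYs1
  set F : ℕ → ℂ := fun k => (starRingEnd ℂ) (X k) * (J y : ∀ _ : ℕ, ℂ) k with hF
  have hFs : Summable F := by
    have h := lp.summable_inner (𝕜 := ℂ) x (J y)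
    simpa [RCLike.inner_apply, hF, mul_comm] using h
  have hI : (inner ℂ x (J y) : ℂ) = ∑' k, F k := by
    rw [lp.inner_eq_tsum]
    simp [RCLike.inner_apply, hF, hX, mul_comm]
  rw [hI, hFs.tsum_eq_zero_add]
  have hF0 : F 0 = f1 0 + f3 0 := by
    simp only [hF, hf1, hf3]
    rw [hJ0 y]
    ring
  have hFsucc : ∀ k, F (k+1) = f2 k + f1 (k+1) + f3 (k+1) := by
    intro k
    simp only [hF, hf1, hf2, hf3]
    rw [hJk y k]
    ring
  have hsum2 : ∑' k, F (k+1) = (∑' k, f2 k) + (∑' k, f1 (k+1)) + (∑' k, f3 (k+1)) := by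
    rw [show (fun k => F (k+1)) = fun k => f2 k + f1 (k+1) + f3 (k+1) from funext hFsucc]
    rw [Summable.tsum_add (s2.add ((summable_nat_add_iff 1).2 s1)) ((summable_nat_add_iff 1).2 s3),
      Summable.tsum_add s2 ((summable_nat_add_iff 1).2 s1)]
  rw [hF0, hsum2, s1.tsum_eq_zero_add, s3.tsum_eq_zero_add]
  ring

lemma stmt5_Jsym (a b : ℕ → ℝ) {Ca Cb : ℝ} (haC : ∀ j, |a j| ≤ Ca) (hbC : ∀ j, |b j| ≤ Cb)
    (J : E2 →L[ℂ] E2)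
    (hJ0 : ∀ y : E2, (J y : ∀ _ : ℕ, ℂ) 0
      = (a 0 : ℂ) * (y : ∀ _ : ℕ, ℂ) 0 + (b 0 : ℂ) * (y : ∀ _ : ℕ, ℂ) 1)
    (hJk : ∀ (y : E2) (k : ℕ), (J y : ∀ _ : ℕ, ℂ) (k+1)
      = (b k : ℂ) * (y : ∀ _ : ℕ, ℂ) k + (a (k+1) : ℂ) * (y : ∀ _ : ℕ, ℂ) (k+1)
        + (b (k+1) : ℂ) * (y : ∀ _ : ℕ, ℂ) (k+2)) :
    IsSelfAdjoint J := by
  rw [ContinuousLinearMap.isSelfAdjoint_iff_isSymmetric]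
  intro x y
  have h2 := stmt5_inner_expand a b haC hbC J hJ0 hJk y x
  have h1 := stmt5_inner_expand a b haC hbC J hJ0 hJk x y
  simp only [ContinuousLinearMap.coe_coe]
  have conj_tsum : ∀ f : ℕ → ℂ, (starRingEnd ℂ) (∑' k, f k) = ∑' k, (starRingEnd ℂ) (f k) :=
    fun f => tsum_star
  calc (inner ℂ (J x) y : ℂ) = (starRingEnd ℂ) (inner ℂ y (J x)) := (inner_conj_symm (J x) y).symm
    _ = (inner ℂ x (J y) : ℂ) := by
        rw [h2, map_add, map_add, conj_tsum, conj_tsum, conj_tsum, h1]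
        have e1 : ∑' k, (starRingEnd ℂ)
            ((a k : ℂ) * ((starRingEnd ℂ) ((y : ∀ _ : ℕ, ℂ) k) * (x : ∀ _ : ℕ, ℂ) k))
            = ∑' k, (a k : ℂ) * ((starRingEnd ℂ) ((x : ∀ _ : ℕ, ℂ) k) * (y : ∀ _ : ℕ, ℂ) k) :=
          tsum_congr fun k => by
            simp only [map_mul, Complex.conj_conj, Complex.conj_ofReal]; ring
        have e2 : ∑' k, (starRingEnd ℂ)
            ((b k : ℂ) * ((starRingEnd ℂ) ((y : ∀ _ : ℕ, ℂ) (k+1)) * (x : ∀ _ : ℕ, ℂ) k))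
            = ∑' k, (b k : ℂ) * ((starRingEnd ℂ) ((x : ∀ _ : ℕ, ℂ) k) * (y : ∀ _ : ℕ, ℂ) (k+1)) :=
          tsum_congr fun k => by
            simp only [map_mul, Complex.conj_conj, Complex.conj_ofReal]; ring
        have e3 : ∑' k, (starRingEnd ℂ)
            ((b k : ℂ) * ((starRingEnd ℂ) ((y : ∀ _ : ℕ, ℂ) k) * (x : ∀ _ : ℕ, ℂ) (k+1)))
            = ∑' k, (b k : ℂ) * ((starRingEnd ℂ) ((x : ∀ _ : ℕ, ℂ) (k+1)) * (y : ∀ _ : ℕ, ℂ) k) :=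
          tsum_congr fun k => by
            simp only [map_mul, Complex.conj_conj, Complex.conj_ofReal]; ring
        rw [e1, e2, e3]
        ring

lemma stmt5_key (a b : ℕ → ℝ) (ha : ∃ C : ℝ, ∀ j, |a j| ≤ C) (hbbd : ∃ C : ℝ, ∀ j, |b j| ≤ C)
    (H : E2 →L[ℂ] E2)
    (hH0 : ∀ x : E2,
      (H x : ∀ _ : ℕ, ℂ) 0 = (a 0 : ℂ) * (x : ∀ _ : ℕ, ℂ) 0 - (b 0 : ℂ) * (x : ∀ _ : ℕ, ℂ) 1)
    (hHk : ∀ x : E2, ∀ k : ℕ,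
      (H x : ∀ _ : ℕ, ℂ) (k + 1) = (b k : ℂ) * (x : ∀ _ : ℕ, ℂ) k
        + (a (k + 1) : ℂ) * (x : ∀ _ : ℕ, ℂ) (k + 1) + (b (k + 1) : ℂ) * (x : ∀ _ : ℕ, ℂ) (k + 2))
    (z : ℂ) (hzim : 0 < z.im) (hzs : z ∈ spectrum ℂ H) :
    ∃ f : E2, f ≠ 0 ∧ H f = z • f := by
  obtain ⟨Ca, haC⟩ := ha
  obtain ⟨Cb, hbC⟩ := hbbd
  set e0 : E2 := lp.single 2 0 (1 : ℂ) with he0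
  set e1 : E2 := lp.single 2 1 (1 : ℂ) with he1
  set K : E2 →L[ℂ] E2 := ((2 : ℂ) * (b 0 : ℂ)) • ((innerSL ℂ e1).smulRight e0) with hKdef
  have hK : ∀ x : E2, K x = (((2 : ℂ) * (b 0 : ℂ)) * (x : ∀ _ : ℕ, ℂ) 1) • e0 := by
    intro x
    simp only [hKdef, ContinuousLinearMap.smul_apply, ContinuousLinearMap.smulRight_apply,
      innerSL_apply_apply]
    rw [lp.inner_single_left]
    simp [RCLike.inner_apply, smul_smul]
  have he0c : ∀ k, (e0 : ∀ _ : ℕ, ℂ) k = if k = 0 then 1 else 0 := by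
    intro k
    by_cases h : k = 0
    · subst h; simp [he0, lp.single_apply_self]
    · simp [he0, lp.single_apply_ne _ _ _ h, h]
  have hKc0 : ∀ x : E2, (K x : ∀ _ : ℕ, ℂ) 0 = (2 : ℂ) * (b 0 : ℂ) * (x : ∀ _ : ℕ, ℂ) 1 := by
    intro x
    rw [hK x, lp.coeFn_smul]
    simp [he0c]
  have hKck : ∀ (x : E2) (k : ℕ), (K x : ∀ _ : ℕ, ℂ) (k+1) = 0 := by
    intro x k
    rw [hK x, lp.coeFn_smul]
    simp [he0c]
  set J : E2 →L[ℂ] E2 := H + K with hJdef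
  have hJ0 : ∀ y : E2, (J y : ∀ _ : ℕ, ℂ) 0
      = (a 0 : ℂ) * (y : ∀ _ : ℕ, ℂ) 0 + (b 0 : ℂ) * (y : ∀ _ : ℕ, ℂ) 1 := by
    intro y
    have : (J y : ∀ _ : ℕ, ℂ) 0 = (H y : ∀ _ : ℕ, ℂ) 0 + (K y : ∀ _ : ℕ, ℂ) 0 := by
      simp [hJdef, lp.coeFn_add]
    rw [this, hH0 y, hKc0 y]
    ring
  have hJk : ∀ (y : E2) (k : ℕ), (J y : ∀ _ : ℕ, ℂ) (k+1)
      = (b k : ℂ) * (y : ∀ _ : ℕ, ℂ) k + (a (k+1) : ℂ) * (y : ∀ _ : ℕ, ℂ) (k+1)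
        + (b (k+1) : ℂ) * (y : ∀ _ : ℕ, ℂ) (k+2) := by
    intro y k
    have : (J y : ∀ _ : ℕ, ℂ) (k+1) = (H y : ∀ _ : ℕ, ℂ) (k+1) + (K y : ∀ _ : ℕ, ℂ) (k+1) := by
      simp [hJdef, lp.coeFn_add]
    rw [this, hHk y k, hKck y k]
    ring
  have hsym : IsSelfAdjoint J := stmt5_Jsym a b haC hbC J hJ0 hJk
  have hzJ : z ∉ spectrum ℂ J := by
    intro hmem
    have h := hsym.mem_spectrum_eq_re hmem
    have : z.im = 0 := by rw [h]; simp
    linarith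
  have hU : IsUnit (algebraMap ℂ (E2 →L[ℂ] E2) z - J) := spectrum.notMem_iff.1 hzJ
  obtain ⟨u, hu⟩ := hU
  set A : E2 →L[ℂ] E2 := algebraMap ℂ (E2 →L[ℂ] E2) z - J with hAdef
  set R : E2 →L[ℂ] E2 := ((u⁻¹ : (E2 →L[ℂ] E2)ˣ) : E2 →L[ℂ] E2) with hRdef
  have hAR : ∀ x : E2, A (R x) = x := by
    intro x
    have h := u.mul_inv
    rw [hu] at h
    calc A (R x) = (A * R) x := rfl
      _ = x := by rw [h]; rfl
  have hAapp : ∀ x : E2, A x = z • x - J x := by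
    intro x
    simp [hAdef, Algebra.algebraMap_eq_smul_one, ContinuousLinearMap.sub_apply]
  set w : E2 := R e0 with hwdef
  have hAw : A w = e0 := hAR e0
  set w1 : ℂ := (w : ∀ _ : ℕ, ℂ) 1 with hw1def
  by_cases hβ : (1 : ℂ) + 2 * (b 0 : ℂ) * w1 = 0
  · refine ⟨w, ?_, ?_⟩
    · intro h0
      rw [h0] at hAw
      have : (e0 : ∀ _ : ℕ, ℂ) 0 = 0 := by
        rw [← hAw]
        simp [map_zero, lp.coeFn_zero]
      rw [he0c 0] at this
      simp at this
    · have hJw : J w = z • w - e0 := by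
        have h := hAapp w
        rw [hAw] at h
        linear_combination (norm := module) h
      have hHw : H w = J w - K w := by
        rw [hJdef]
        simp [ContinuousLinearMap.add_apply]
      have hKw : K w = ((2 : ℂ) * (b 0 : ℂ) * w1) • e0 := hK w
      have hzero : ((1 : ℂ) + 2 * (b 0 : ℂ) * w1) • e0 = 0 := by
        rw [hβ]; exact zero_smul ℂ e0
      rw [hHw, hJw, hKw]
      linear_combination (norm := module) -hzero
  · exfalso
    set S : E2 →L[ℂ] E2 := 1 + R * K with hSdef
    have hS : ∀ x : E2, S x = x + (((2 : ℂ) * (b 0 : ℂ)) * (x : ∀ _ : ℕ, ℂ) 1) • w := by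
      intro x
      simp only [hSdef, ContinuousLinearMap.add_apply, ContinuousLinearMap.one_apply,
        ContinuousLinearMap.mul_apply]
      rw [hK x, ContinuousLinearMap.map_smul, ← hwdef]
    set T : E2 →L[ℂ] E2 := 1 - (((2 : ℂ) * (b 0 : ℂ)) / ((1 : ℂ) + 2 * (b 0 : ℂ) * w1)) •
      ((innerSL ℂ e1).smulRight w) with hTdef
    have hT : ∀ x : E2, T x = x - ((((2 : ℂ) * (b 0 : ℂ)) / ((1 : ℂ) + 2 * (b 0 : ℂ) * w1))
        * (x : ∀ _ : ℕ, ℂ) 1) • w := by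
      intro x
      simp only [hTdef, ContinuousLinearMap.sub_apply, ContinuousLinearMap.one_apply,
        ContinuousLinearMap.smul_apply, ContinuousLinearMap.smulRight_apply, innerSL_apply_apply]
      rw [lp.inner_single_left]
      simp [RCLike.inner_apply, smul_smul]
    have hcoord : ∀ (x : E2) (c : ℂ), ((x + c • w : E2) : ∀ _ : ℕ, ℂ) 1
        = (x : ∀ _ : ℕ, ℂ) 1 + c * w1 := by
      intro x c
      rw [lp.coeFn_add, lp.coeFn_smul]
      simp [hw1def]
    have hcoord' : ∀ (x : E2) (c : ℂ), ((x - c • w : E2) : ∀ _ : ℕ, ℂ) 1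
        = (x : ∀ _ : ℕ, ℂ) 1 - c * w1 := by
      intro x c
      rw [lp.coeFn_sub, lp.coeFn_smul]
      simp [hw1def]
    have hST : S * T = 1 := ContinuousLinearMap.ext fun x => by
      rw [ContinuousLinearMap.mul_apply, ContinuousLinearMap.one_apply]
      have h1 : (T x : ∀ _ : ℕ, ℂ) 1 = (x : ∀ _ : ℕ, ℂ) 1
          - (((2 : ℂ) * (b 0 : ℂ)) / ((1 : ℂ) + 2 * (b 0 : ℂ) * w1)) * (x : ∀ _ : ℕ, ℂ) 1 * w1 := by
        rw [hT x, hcoord']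
      rw [hS (T x), h1, hT x]
      have hc : ((2 : ℂ) * (b 0 : ℂ)) * ((x : ∀ _ : ℕ, ℂ) 1
          - (((2 : ℂ) * (b 0 : ℂ)) / ((1 : ℂ) + 2 * (b 0 : ℂ) * w1)) * (x : ∀ _ : ℕ, ℂ) 1 * w1)
          - (((2 : ℂ) * (b 0 : ℂ)) / ((1 : ℂ) + 2 * (b 0 : ℂ) * w1)) * (x : ∀ _ : ℕ, ℂ) 1 = 0 := by
        field_simp
        all_goals ring
      linear_combination (norm := module) hc • w
    have hTS : T * S = 1 := ContinuousLinearMap.ext fun x => by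
      rw [ContinuousLinearMap.mul_apply, ContinuousLinearMap.one_apply]
      have h1 : (S x : ∀ _ : ℕ, ℂ) 1 = (x : ∀ _ : ℕ, ℂ) 1
          + ((2 : ℂ) * (b 0 : ℂ)) * (x : ∀ _ : ℕ, ℂ) 1 * w1 := by
        rw [hS x, hcoord]
      rw [hT (S x), h1, hS x]
      have hc : ((2 : ℂ) * (b 0 : ℂ)) * (x : ∀ _ : ℕ, ℂ) 1
          - (((2 : ℂ) * (b 0 : ℂ)) / ((1 : ℂ) + 2 * (b 0 : ℂ) * w1)) * ((x : ∀ _ : ℕ, ℂ) 1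
            + ((2 : ℂ) * (b 0 : ℂ)) * (x : ∀ _ : ℕ, ℂ) 1 * w1) = 0 := by
        field_simp
        all_goals ring
      linear_combination (norm := module) hc • w
    have hSunit : IsUnit S := ⟨⟨S, T, hST, hTS⟩, rfl⟩
    have hAunit : IsUnit A := ⟨u, hu⟩
    have hfact : algebraMap ℂ (E2 →L[ℂ] E2) z - H = A * S := by
      have hAS : A * S = A + K := by
        rw [hSdef, mul_add, mul_one, ← mul_assoc]
        have h1 : A * R = 1 := by rw [← hu]; exact u.mul_inv
        rw [h1, one_mul]
      rw [hAS, hAdef, hJdef]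
      abel
    have : IsUnit (algebraMap ℂ (E2 →L[ℂ] E2) z - H) := by
      rw [hfact]
      exact hAunit.mul hSunit
    exact (spectrum.mem_iff.1 hzs) this

/-- The spectrum of `H` contains at most one point with strictly positive imaginary part,
and every such spectral point is an eigenvalue of `H`. -/
theorem stmt_5
    (a b : ℕ → ℝ) (ha : ∃ C : ℝ, ∀ j, |a j| ≤ C) (hbbd : ∃ C : ℝ, ∀ j, |b j| ≤ C)
    (hb : ∀ j, 0 < b j)
    (H : lp (fun _ : ℕ => ℂ) 2 →L[ℂ] lp (fun _ : ℕ => ℂ) 2)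
    (hH0 : ∀ x : lp (fun _ : ℕ => ℂ) 2,
      (H x : ∀ _ : ℕ, ℂ) 0 = (a 0 : ℂ) * (x : ∀ _ : ℕ, ℂ) 0 - (b 0 : ℂ) * (x : ∀ _ : ℕ, ℂ) 1)
    (hHk : ∀ x : lp (fun _ : ℕ => ℂ) 2, ∀ k : ℕ,
      (H x : ∀ _ : ℕ, ℂ) (k + 1) = (b k : ℂ) * (x : ∀ _ : ℕ, ℂ) k
        + (a (k + 1) : ℂ) * (x : ∀ _ : ℕ, ℂ) (k + 1) + (b (k + 1) : ℂ) * (x : ∀ _ : ℕ, ℂ) (k + 2))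
    :
    Set.Subsingleton {z : ℂ | z ∈ spectrum ℂ H ∧ 0 < z.im} ∧
    ∀ z ∈ spectrum ℂ H, 0 < z.im →
      ∃ f : lp (fun _ : ℕ => ℂ) 2, f ≠ 0 ∧ H f = z • f := by
  constructor
  · rintro z ⟨hzs, hzim⟩ w ⟨hws, hwim⟩
    by_contra hne
    obtain ⟨Cb, hbC⟩ := hbbd
    obtain ⟨f, hf0, hfz⟩ := stmt5_key a b ha ⟨Cb, hbC⟩ H hH0 hHk z hzim hzs
    obtain ⟨g, hg0, hgw⟩ := stmt5_key a b ha ⟨Cb, hbC⟩ H hH0 hHk w hwim hws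
    have hfc : ∀ k, (H f : ∀ _ : ℕ, ℂ) k = z * (f : ∀ _ : ℕ, ℂ) k := by
      intro k; rw [hfz, lp.coeFn_smul]; rfl
    have hgc : ∀ k, (H g : ∀ _ : ℕ, ℂ) k = w * (g : ∀ _ : ℕ, ℂ) k := by
      intro k; rw [hgw, lp.coeFn_smul]; rfl
    have hf0' : z * (f : ∀ _ : ℕ, ℂ) 0
        = (a 0 : ℂ) * (f : ∀ _ : ℕ, ℂ) 0 - (b 0 : ℂ) * (f : ∀ _ : ℕ, ℂ) 1 :=
      (hfc 0).symm.trans (hH0 f)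
    have hfk' : ∀ k, z * (f : ∀ _ : ℕ, ℂ) (k+1) = (b k : ℂ) * (f : ∀ _ : ℕ, ℂ) k
        + (a (k+1) : ℂ) * (f : ∀ _ : ℕ, ℂ) (k+1) + (b (k+1) : ℂ) * (f : ∀ _ : ℕ, ℂ) (k+2) :=
      fun k => (hfc (k+1)).symm.trans (hHk f k)
    have hg0' : w * (g : ∀ _ : ℕ, ℂ) 0
        = (a 0 : ℂ) * (g : ∀ _ : ℕ, ℂ) 0 - (b 0 : ℂ) * (g : ∀ _ : ℕ, ℂ) 1 :=
      (hgc 0).symm.trans (hH0 g)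
    have hgk' : ∀ k, w * (g : ∀ _ : ℕ, ℂ) (k+1) = (b k : ℂ) * (g : ∀ _ : ℕ, ℂ) k
        + (a (k+1) : ℂ) * (g : ∀ _ : ℕ, ℂ) (k+1) + (b (k+1) : ℂ) * (g : ∀ _ : ℕ, ℂ) (k+2) :=
      fun k => (hgc (k+1)).symm.trans (hHk g k)
    set F : ℕ → ℂ := fun k => (starRingEnd ℂ) ((f : ∀ _ : ℕ, ℂ) k) with hFdef
    set G : ℕ → ℂ := fun k => (starRingEnd ℂ) ((g : ∀ _ : ℕ, ℂ) k) with hGdef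
    have hFs : Summable fun k => ‖F k‖ ^ 2 := by simpa [hFdef] using stmt5_sqsum f
    have hGs : Summable fun k => ‖G k‖ ^ 2 := by simpa [hGdef] using stmt5_sqsum g
    have hF0c : (starRingEnd ℂ) z * F 0 = (a 0 : ℂ) * F 0 - (b 0 : ℂ) * F 1 := by
      have h := congrArg (starRingEnd ℂ) hf0'
      simpa [hFdef, map_mul, map_sub, Complex.conj_ofReal] using h
    have hFkc : ∀ k, (starRingEnd ℂ) z * F (k+1) = (b k : ℂ) * F k
        + (a (k+1) : ℂ) * F (k+1) + (b (k+1) : ℂ) * F (k+2) := by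
      intro k
      have h := congrArg (starRingEnd ℂ) (hfk' k)
      simpa [hFdef, map_mul, map_add, Complex.conj_ofReal] using h
    have hG0c : (starRingEnd ℂ) w * G 0 = (a 0 : ℂ) * G 0 - (b 0 : ℂ) * G 1 := by
      have h := congrArg (starRingEnd ℂ) hg0'
      simpa [hGdef, map_mul, map_sub, Complex.conj_ofReal] using h
    have hGkc : ∀ k, (starRingEnd ℂ) w * G (k+1) = (b k : ℂ) * G k
        + (a (k+1) : ℂ) * G (k+1) + (b (k+1) : ℂ) * G (k+2) := by
      intro k
      have h := congrArg (starRingEnd ℂ) (hgk' k)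
      simpa [hGdef, map_mul, map_add, Complex.conj_ofReal] using h
    have hzw1 : (starRingEnd ℂ) z ≠ w := by
      intro h
      have := congrArg Complex.im h
      rw [Complex.conj_im] at this
      linarith
    have hzz : (starRingEnd ℂ) z ≠ z := by
      intro h
      have := congrArg Complex.im h
      rw [Complex.conj_im] at this
      linarith
    have hww : (starRingEnd ℂ) w ≠ w := by
      intro h
      have := congrArg Complex.im h
      rw [Complex.conj_im] at this
      linarith
    have B1 := stmt5_bilinear a b hbC hzw1 F (g : ∀ _ : ℕ, ℂ) hFs (stmt5_sqsum g)
      hF0c hFkc hg0' hgk'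
    have B2 := stmt5_bilinear a b hbC hzz F (f : ∀ _ : ℕ, ℂ) hFs (stmt5_sqsum f)
      hF0c hFkc hf0' hfk'
    have B3 := stmt5_bilinear a b hbC hww G (g : ∀ _ : ℕ, ℂ) hGs (stmt5_sqsum g)
      hG0c hGkc hg0' hgk'
    have hIfg : (inner ℂ f g : ℂ) = 2 * (F 0 * (g : ∀ _ : ℕ, ℂ) 0) := by
      rw [lp.inner_eq_tsum, ← B1]
      exact tsum_congr fun k => by simp [RCLike.inner_apply, hFdef, mul_comm]
    have hIff : (inner ℂ f f : ℂ) = 2 * (F 0 * (f : ∀ _ : ℕ, ℂ) 0) := by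
      rw [lp.inner_eq_tsum, ← B2]
      exact tsum_congr fun k => by simp [RCLike.inner_apply, hFdef, mul_comm, Complex.conj_mul', Complex.mul_conj']
    have hIgg : (inner ℂ g g : ℂ) = 2 * (G 0 * (g : ∀ _ : ℕ, ℂ) 0) := by
      rw [lp.inner_eq_tsum, ← B3]
      exact tsum_congr fun k => by simp [RCLike.inner_apply, hGdef, mul_comm, Complex.conj_mul', Complex.mul_conj']
    -- norms
    have hnf : ‖f‖ ^ 2 = 2 * ‖(f : ∀ _ : ℕ, ℂ) 0‖ ^ 2 := by
      have h := hIff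
      rw [inner_self_eq_norm_sq_to_K (𝕜 := ℂ)] at h
      have h2 : F 0 * (f : ∀ _ : ℕ, ℂ) 0 = ((‖(f : ∀ _ : ℕ, ℂ) 0‖ ^ 2 : ℝ) : ℂ) := by
        simp [hFdef, Complex.conj_mul', Complex.normSq_eq_norm_sq]
      rw [h2] at h
      push_cast at h
      simpa [← Complex.ofReal_pow] using congrArg Complex.re h
    have hng : ‖g‖ ^ 2 = 2 * ‖(g : ∀ _ : ℕ, ℂ) 0‖ ^ 2 := by
      have h := hIgg
      rw [inner_self_eq_norm_sq_to_K (𝕜 := ℂ)] at h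
      have h2 : G 0 * (g : ∀ _ : ℕ, ℂ) 0 = ((‖(g : ∀ _ : ℕ, ℂ) 0‖ ^ 2 : ℝ) : ℂ) := by
        simp [hGdef, Complex.conj_mul', Complex.normSq_eq_norm_sq]
      rw [h2] at h
      push_cast at h
      simpa [← Complex.ofReal_pow] using congrArg Complex.re h
    have hnfg : ‖(inner ℂ f g : ℂ)‖ = 2 * (‖(f : ∀ _ : ℕ, ℂ) 0‖ * ‖(g : ∀ _ : ℕ, ℂ) 0‖) := by
      rw [hIfg]
      simp [norm_mul, hFdef, mul_assoc]
    have hCS : ‖(inner ℂ f g : ℂ)‖ = ‖f‖ * ‖g‖ := by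
      have hsq : (‖f‖ * ‖g‖) ^ 2 = (2 * (‖(f : ∀ _ : ℕ, ℂ) 0‖ * ‖(g : ∀ _ : ℕ, ℂ) 0‖)) ^ 2 := by
        rw [mul_pow, hnf, hng]; ring
      have h1 : 0 ≤ ‖f‖ * ‖g‖ := by positivity
      have h2 : (0:ℝ) ≤ 2 * (‖(f : ∀ _ : ℕ, ℂ) 0‖ * ‖(g : ∀ _ : ℕ, ℂ) 0‖) := by positivity
      rw [hnfg, ← Real.sqrt_sq h1, hsq, Real.sqrt_sq h2]
    obtain ⟨r, hr, hgr⟩ := (norm_inner_eq_norm_iff hf0 hg0).1 hCS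
    have hcontr : w • g = z • g := by
      rw [← hgw, hgr, ContinuousLinearMap.map_smul, hfz, smul_comm]
    have : (w - z) • g = 0 := by
      rw [sub_smul, hcontr, sub_self]
    rcases smul_eq_zero.1 this with h | h
    · exact hne (sub_eq_zero.1 h).symm
    · exact hg0 h
  · intro z hzs hzim
    exact stmt5_key a b ha hbbd H hH0 hHk z hzim hzs

end Stmt5Aux
end

section
/- Corollary 1 (convergence of the eigenvalues of nonpositive type): let λ∞ be an eigenvalue of nonpositive type of H, and for each n ≥ 1 let λ_n be an eigenvalue of nonpositive type of H_{[0,n]}. Then λ_n → λ∞ as n → ∞. -/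
open MeasureTheory Complex Filter

/-- The (n+1)×(n+1) truncation H_{[0,n]} of the non-symmetric Jacobi matrix. -/
noncomputable def JacobiH0 (a b : ℕ → ℝ) (n : ℕ) : Matrix (Fin (n + 1)) (Fin (n + 1)) ℂ :=
  Matrix.of fun i j =>
    if (i : ℕ) = (j : ℕ) then (a i : ℂ)
    else if (i : ℕ) + 1 = (j : ℕ) then (if (i : ℕ) = 0 then -(b 0 : ℂ) else (b (i : ℕ) : ℂ))
    else if (j : ℕ) + 1 = (i : ℕ) then (b (j : ℕ) : ℂ)
    else 0

/-- The n×n truncation H_{[1,n]} of the symmetric Jacobi matrix (entries shifted by one). -/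
noncomputable def JacobiH1 (a b : ℕ → ℝ) (n : ℕ) : Matrix (Fin n) (Fin n) ℂ :=
  Matrix.of fun i j =>
    if (i : ℕ) = (j : ℕ) then (a ((i : ℕ) + 1) : ℂ)
    else if (i : ℕ) + 1 = (j : ℕ) then (b ((i : ℕ) + 1) : ℂ)
    else if (j : ℕ) + 1 = (i : ℕ) then (b ((j : ℕ) + 1) : ℂ)
    else 0

/-- `lam` is an eigenvalue of nonpositive type of H_{[0,n]}. -/
def IsNPTev (a b : ℕ → ℝ) (n : ℕ) (lam : ℂ) : Prop :=
  0 ≤ lam.im ∧ ∃ f : Fin (n + 1) → ℂ, f ≠ 0 ∧ (JacobiH0 a b n).mulVec f = lam • f ∧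
    -‖f 0‖ ^ 2 + ∑ j : Fin n, ‖f j.succ‖ ^ 2 ≤ 0

lemma row0_eval (a b : ℕ → ℝ) (n : ℕ) (hn : 1 ≤ n) (f : Fin (n+1) → ℂ) :
    (JacobiH0 a b n).mulVec f ⟨0, by omega⟩
      = (a 0 : ℂ) * f ⟨0, by omega⟩ - (b 0 : ℂ) * f ⟨1, by omega⟩ := by
  have key : ∀ j : Fin (n+1), JacobiH0 a b n ⟨0, by omega⟩ j * f j
      = (if j = (⟨0, by omega⟩ : Fin (n+1)) then (a 0 : ℂ) * f j else 0)
      + (if j = (⟨1, by omega⟩ : Fin (n+1)) then (-(b 0 : ℂ)) * f j else 0) := by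
    intro j
    simp only [JacobiH0, Matrix.of_apply, Fin.ext_iff]
    split_ifs <;> (try contradiction) <;> (try omega) <;> ring
  simp only [Matrix.mulVec, dotProduct]
  rw [Finset.sum_congr rfl (fun j _ => key j), Finset.sum_add_distrib,
    Finset.sum_ite_eq' Finset.univ _ (fun j => (a 0 : ℂ) * f j),
    Finset.sum_ite_eq' Finset.univ _ (fun j => (-(b 0 : ℂ)) * f j)]
  simp; ring

lemma rowk_eval (a b : ℕ → ℝ) (n k : ℕ) (hk : k + 2 ≤ n) (f : Fin (n+1) → ℂ) :
    (JacobiH0 a b n).mulVec f ⟨k+1, by omega⟩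
      = (b k : ℂ) * f ⟨k, by omega⟩ + (a (k+1) : ℂ) * f ⟨k+1, by omega⟩
        + (b (k+1) : ℂ) * f ⟨k+2, by omega⟩ := by
  have key : ∀ j : Fin (n+1), JacobiH0 a b n ⟨k+1, by omega⟩ j * f j
      = (if j = (⟨k, by omega⟩ : Fin (n+1)) then (b k : ℂ) * f j else 0)
      + (if j = (⟨k+1, by omega⟩ : Fin (n+1)) then (a (k+1) : ℂ) * f j else 0)
      + (if j = (⟨k+2, by omega⟩ : Fin (n+1)) then (b (k+1) : ℂ) * f j else 0) := by
    intro j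
    simp only [JacobiH0, Matrix.of_apply, Fin.ext_iff]
    split_ifs <;> (try contradiction) <;> (try omega) <;> (try ring) <;> (rw [show (j:ℕ) = k from by omega]; ring)
  simp only [Matrix.mulVec, dotProduct]
  rw [Finset.sum_congr rfl (fun j _ => key j), Finset.sum_add_distrib, Finset.sum_add_distrib,
    Finset.sum_ite_eq' Finset.univ _ (fun j => (b k : ℂ) * f j),
    Finset.sum_ite_eq' Finset.univ _ (fun j => (a (k+1) : ℂ) * f j),
    Finset.sum_ite_eq' Finset.univ _ (fun j => (b (k+1) : ℂ) * f j)]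
  simp

lemma ev_bound (a b : ℕ → ℝ) (Ca Cb : ℝ) (hCa : ∀ j, |a j| ≤ Ca) (hCb : ∀ j, |b j| ≤ Cb)
    (n : ℕ) (lam : ℂ) (f : Fin (n+1) → ℂ) (hf : f ≠ 0)
    (heig : (JacobiH0 a b n).mulVec f = lam • f) : ‖lam‖ ≤ Ca + 2*Cb := by
  have hCa0 : 0 ≤ Ca := le_trans (abs_nonneg _) (hCa 0)
  have hCb0 : 0 ≤ Cb := le_trans (abs_nonneg _) (hCb 0)
  obtain ⟨i, -, hi⟩ := Finset.exists_max_image (Finset.univ : Finset (Fin (n+1)))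
    (fun j => ‖f j‖) ⟨0, Finset.mem_univ 0⟩
  have hfi : 0 < ‖f i‖ := by
    obtain ⟨j, hj⟩ := Function.ne_iff.1 hf
    calc (0:ℝ) < ‖f j‖ := by simpa [norm_pos_iff] using hj
    _ ≤ ‖f i‖ := hi j (Finset.mem_univ j)
  have hrow : ∀ j : Fin (n+1), ‖JacobiH0 a b n i j‖
      ≤ (if (i:ℕ) = (j:ℕ) then Ca else 0) + (if (i:ℕ)+1 = (j:ℕ) then Cb else 0)
        + (if (j:ℕ)+1 = (i:ℕ) then Cb else 0) := by
    intro j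
    simp only [JacobiH0, Matrix.of_apply]
    split_ifs <;> (try omega) <;>
      simp only [Complex.norm_real, norm_neg, add_zero, zero_add] <;>
      first | exact le_trans (hCa _) (by linarith) | exact le_trans (hCb _) (by linarith)
            | simp | positivity
  -- sum of row bounds
  have hsum1 : ∑ j : Fin (n+1), (if (i:ℕ) = (j:ℕ) then Ca else 0) = Ca := by
    have : ∀ j : Fin (n+1), (if (i:ℕ) = (j:ℕ) then Ca else 0) = (if j = i then Ca else 0) := by
      intro j; congr 1; simp [Fin.ext_iff, eq_comm]
    rw [Finset.sum_congr rfl (fun j _ => this j), Finset.sum_ite_eq' Finset.univ i (fun _ => Ca)]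
    simp
  have hsum2 : ∑ j : Fin (n+1), (if (i:ℕ)+1 = (j:ℕ) then Cb else 0) ≤ Cb := by
    by_cases h : (i:ℕ)+1 ≤ n
    · have : ∀ j : Fin (n+1), (if (i:ℕ)+1 = (j:ℕ) then Cb else 0)
          = (if j = (⟨(i:ℕ)+1, by omega⟩ : Fin (n+1)) then Cb else 0) := by
        intro j; congr 1; simp [Fin.ext_iff, eq_comm]
      rw [Finset.sum_congr rfl (fun j _ => this j), Finset.sum_ite_eq' Finset.univ _ (fun _ => Cb)]
      simp
    · have h0 : ∀ j : Fin (n+1), (if (i:ℕ)+1 = (j:ℕ) then Cb else 0) = 0 := by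
        intro j; have := j.isLt; rw [if_neg]; omega
      rw [Finset.sum_congr rfl (fun j _ => h0 j)]; simpa using hCb0
  have hsum3 : ∑ j : Fin (n+1), (if (j:ℕ)+1 = (i:ℕ) then Cb else 0) ≤ Cb := by
    by_cases h : 1 ≤ (i:ℕ)
    · have : ∀ j : Fin (n+1), (if (j:ℕ)+1 = (i:ℕ) then Cb else 0)
          = (if j = (⟨(i:ℕ)-1, by have := i.isLt; omega⟩ : Fin (n+1)) then Cb else 0) := by
        intro j
        exact if_congr (by simp only [Fin.ext_iff]; omega) rfl rfl
      rw [Finset.sum_congr rfl (fun j _ => this j), Finset.sum_ite_eq' Finset.univ _ (fun _ => Cb)]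
      simp
    · have h0 : ∀ j : Fin (n+1), (if (j:ℕ)+1 = (i:ℕ) then Cb else 0) = 0 := by
        intro j; rw [if_neg]; omega
      rw [Finset.sum_congr rfl (fun j _ => h0 j)]; simpa using hCb0
  have hrowsum : ∑ j : Fin (n+1), ‖JacobiH0 a b n i j‖ ≤ Ca + 2*Cb := by
    calc ∑ j : Fin (n+1), ‖JacobiH0 a b n i j‖
        ≤ ∑ j : Fin (n+1), ((if (i:ℕ) = (j:ℕ) then Ca else 0) + (if (i:ℕ)+1 = (j:ℕ) then Cb else 0)
            + (if (j:ℕ)+1 = (i:ℕ) then Cb else 0)) := Finset.sum_le_sum (fun j _ => hrow j)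
      _ ≤ Ca + 2*Cb := by
          rw [Finset.sum_add_distrib, Finset.sum_add_distrib, hsum1]; linarith
  have hmv : lam * f i = ∑ j : Fin (n+1), JacobiH0 a b n i j * f j := by
    have h1 := congrFun heig i
    simp only [Pi.smul_apply, smul_eq_mul] at h1
    rw [← h1]; simp [Matrix.mulVec, dotProduct]
  have hnorm : ‖lam‖ * ‖f i‖ ≤ (Ca + 2*Cb) * ‖f i‖ := by
    calc ‖lam‖ * ‖f i‖ = ‖lam * f i‖ := (norm_mul _ _).symm
      _ = ‖∑ j : Fin (n+1), JacobiH0 a b n i j * f j‖ := by rw [hmv]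
      _ ≤ ∑ j : Fin (n+1), ‖JacobiH0 a b n i j * f j‖ := norm_sum_le _ _
      _ ≤ ∑ j : Fin (n+1), ‖JacobiH0 a b n i j‖ * ‖f i‖ := by
          refine Finset.sum_le_sum (fun j _ => ?_)
          rw [norm_mul]
          exact mul_le_mul_of_nonneg_left (hi j (Finset.mem_univ j)) (norm_nonneg _)
      _ = (∑ j : Fin (n+1), ‖JacobiH0 a b n i j‖) * ‖f i‖ := by rw [Finset.sum_mul]
      _ ≤ (Ca + 2*Cb) * ‖f i‖ := mul_le_mul_of_nonneg_right hrowsum (norm_nonneg _)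
  exact le_of_mul_le_mul_right hnorm hfi

lemma normalized_ev (a b : ℕ → ℝ) (n : ℕ) (lam : ℂ) (hn : 1 ≤ n)
    (hnpt : IsNPTev a b n lam) :
    ∃ G : ℕ → ℂ, G 0 = 1 ∧ (∀ j, ‖G j‖ ≤ 1) ∧
      (∀ m, ∑ j ∈ Finset.range m, ‖G (j+1)‖^2 ≤ 1) ∧
      ((a 0 : ℂ) * G 0 - (b 0 : ℂ) * G 1 = lam * G 0) ∧
      (∀ k, k + 2 ≤ n → (b k : ℂ) * G k + (a (k+1) : ℂ) * G (k+1) + (b (k+1) : ℂ) * G (k+2)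
        = lam * G (k+1)) := by
  obtain ⟨-, f, hf0, heig, hnp⟩ := hnpt
  have hz : (0 : Fin (n+1)) = ⟨0, by omega⟩ := rfl
  have hfz : f ⟨0, by omega⟩ ≠ 0 := by
    intro h0
    apply hf0
    have hall : ∀ j : Fin n, f j.succ = 0 := by
      intro j
      have hnonneg : ∀ j : Fin n, (0:ℝ) ≤ ‖f j.succ‖^2 := fun j => by positivity
      have hsum0 : ∑ j : Fin n, ‖f j.succ‖ ^ 2 ≤ 0 := by
        rw [hz, h0] at hnp; simpa using hnp
      have := (Finset.sum_eq_zero_iff_of_nonneg (fun j _ => hnonneg j)).1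
        (le_antisymm hsum0 (Finset.sum_nonneg (fun j _ => hnonneg j)))
      have h2 := this j (Finset.mem_univ j)
      have : ‖f j.succ‖ = 0 := by nlinarith [norm_nonneg (f j.succ)]
      simpa using this
    funext i
    refine Fin.cases ?_ ?_ i
    · rw [hz]; exact h0
    · intro j; exact hall j
  classical
  set c := f ⟨0, by omega⟩ with hc
  set G : ℕ → ℂ := fun j => if h : j < n + 1 then f ⟨j, h⟩ / c else 0 with hG
  have hG0 : G 0 = 1 := by
    show (if h : (0:ℕ) < n + 1 then f ⟨0, h⟩ / c else 0) = 1
    rw [dif_pos (by omega : (0:ℕ) < n+1)]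
    exact div_self hfz
  have hcpos : 0 < ‖c‖^2 := pow_pos (norm_pos_iff.2 hfz) 2
  have hkey : ∑ j : Fin n, ‖f j.succ‖ ^ 2 ≤ ‖c‖^2 := by
    rw [hz] at hnp; rw [← hc] at hnp; linarith
  have hzero : ∀ j, n ≤ j → ‖G (j+1)‖^2 = 0 := by
    intro j hj
    have : G (j+1) = 0 := by
      show (if h : j+1 < n + 1 then f ⟨j+1, h⟩ / c else 0) = 0
      rw [dif_neg (by omega)]
    rw [this]; simp
  have hfin : ∑ j ∈ Finset.range n, ‖G (j+1)‖^2 = (∑ j : Fin n, ‖f j.succ‖ ^ 2) / ‖c‖^2 := by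
    rw [Finset.sum_range (fun j => ‖G (j+1)‖^2)]
    rw [Finset.sum_div]
    refine Finset.sum_congr rfl (fun j _ => ?_)
    have hlt : (j:ℕ)+1 < n+1 := by have := j.isLt; omega
    have : G ((j:ℕ)+1) = f j.succ / c := by
      show (if h : (j:ℕ)+1 < n + 1 then f ⟨(j:ℕ)+1, h⟩ / c else 0) = f j.succ / c
      rw [dif_pos hlt]
      congr 1
    rw [this, norm_div, div_pow]
  have hpart : ∀ m, ∑ j ∈ Finset.range m, ‖G (j+1)‖^2 ≤ 1 := by
    intro m
    have e1 : ∑ j ∈ Finset.range m, ‖G (j+1)‖^2 ≤ ∑ j ∈ Finset.range (m+n), ‖G (j+1)‖^2 :=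
      Finset.sum_le_sum_of_subset_of_nonneg (Finset.range_subset_range.2 (by omega))
        (fun j _ _ => by positivity)
    have e2 : ∑ j ∈ Finset.range (m+n), ‖G (j+1)‖^2 = ∑ j ∈ Finset.range n, ‖G (j+1)‖^2 := by
      refine (Finset.sum_subset (Finset.range_subset_range.2 (by omega)) ?_).symm
      intro x hx hnx
      simp only [Finset.mem_range] at hx hnx
      exact hzero x (by omega)
    rw [e2] at e1
    refine le_trans e1 ?_
    rw [hfin]
    exact div_le_one_of_le₀ hkey (le_of_lt hcpos)
  have hbd : ∀ j, ‖G j‖ ≤ 1 := by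
    intro j
    match j with
    | 0 => rw [hG0]; simp
    | (m+1) =>
      have h1 : ‖G (m+1)‖^2 ≤ ∑ j ∈ Finset.range (m+1), ‖G (j+1)‖^2 :=
        Finset.single_le_sum (f := fun j => ‖G (j+1)‖^2) (fun j _ => by positivity)
          (Finset.self_mem_range_succ m)
      nlinarith [hpart (m+1), norm_nonneg (G (m+1))]
  have hGat : ∀ (j : ℕ) (h : j < n+1), G j = f ⟨j, h⟩ / c := by
    intro j h
    show (if h' : j < n + 1 then f ⟨j, h'⟩ / c else 0) = f ⟨j, h⟩ / c
    rw [dif_pos h]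
  refine ⟨G, hG0, hbd, hpart, ?_, ?_⟩
  · have e := congrFun heig ⟨0, by omega⟩
    rw [row0_eval a b n hn f] at e
    simp only [Pi.smul_apply, smul_eq_mul] at e
    rw [hGat 0 (by omega), hGat 1 (by omega)]
    rw [← hc]
    field_simp
    linear_combination e
  · intro k hk
    have e := congrFun heig ⟨k+1, by omega⟩
    rw [rowk_eval a b n k hk f] at e
    simp only [Pi.smul_apply, smul_eq_mul] at e
    rw [hGat k (by omega), hGat (k+1) (by omega), hGat (k+2) (by omega)]
    field_simp
    linear_combination e

lemma unique_npt (a b : ℕ → ℝ) (Cb : ℝ) (hCb : ∀ j, |b j| ≤ Cb)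
    (mu lm : ℂ) (hmu : 0 ≤ mu.im) (hlm : 0 ≤ lm.im)
    (h g : ℕ → ℂ)
    (hh2 : Summable (fun j => ‖h j‖^2)) (hg2 : Summable (fun j => ‖g j‖^2))
    (hh0 : h 0 ≠ 0) (hg0 : g 0 ≠ 0)
    (hrow0h : (a 0:ℂ) * h 0 - (b 0:ℂ) * h 1 = mu * h 0)
    (hrowkh : ∀ k, (b k:ℂ) * h k + (a (k+1):ℂ) * h (k+1) + (b (k+1):ℂ) * h (k+2) = mu * h (k+1))
    (hrow0g : (a 0:ℂ) * g 0 - (b 0:ℂ) * g 1 = lm * g 0)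
    (hrowkg : ∀ k, (b k:ℂ) * g k + (a (k+1):ℂ) * g (k+1) + (b (k+1):ℂ) * g (k+2) = lm * g (k+1))
    (hnph : ∑' j, ‖h (j+1)‖^2 ≤ ‖h 0‖^2)
    (hnpg : ∑' j, ‖g (j+1)‖^2 ≤ ‖g 0‖^2) : mu = lm := by
  classical
  have hcjdef : True := trivial
  -- conjugated recursions for g
  have hconjg : ∀ k, (b k:ℂ) * (starRingEnd ℂ) (g k) + (a (k+1):ℂ) * (starRingEnd ℂ) (g (k+1))
      + (b (k+1):ℂ) * (starRingEnd ℂ) (g (k+2)) = (starRingEnd ℂ) lm * (starRingEnd ℂ) (g (k+1)) := by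
    intro k
    have := congrArg (starRingEnd ℂ) (hrowkg k)
    simpa [map_add, map_mul, Complex.conj_ofReal] using this
  have hconjg0 : (a 0:ℂ) * (starRingEnd ℂ) (g 0) - (b 0:ℂ) * (starRingEnd ℂ) (g 1) = (starRingEnd ℂ) lm * (starRingEnd ℂ) (g 0) := by
    have := congrArg (starRingEnd ℂ) hrow0g
    simpa [map_sub, map_mul, Complex.conj_ofReal] using this
  set D : ℕ → ℂ := fun k => (b k:ℂ) * (h k * (starRingEnd ℂ) (g (k+1)) - h (k+1) * (starRingEnd ℂ) (g k)) with hD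
  have step : ∀ k, (mu - (starRingEnd ℂ) lm) * (h (k+1) * (starRingEnd ℂ) (g (k+1))) = D k - D (k+1) := by
    intro k
    have e1 := hrowkh k
    have e2 := hconjg k
    simp only [hD]
    linear_combination (-((starRingEnd ℂ) (g (k+1)))) * e1 + h (k+1) * e2
  -- summability of w
  have hh2s : Summable (fun k => ‖h (k+1)‖^2) := (summable_nat_add_iff (f := fun j => ‖h j‖^2) 1).2 hh2
  have hg2s : Summable (fun k => ‖g (k+1)‖^2) := (summable_nat_add_iff (f := fun j => ‖g j‖^2) 1).2 hg2
  have hsumw : Summable (fun k => h (k+1) * (starRingEnd ℂ) (g (k+1))) := by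
    refine Summable.of_norm (Summable.of_nonneg_of_le (fun k => norm_nonneg _) (fun k => ?_)
      (((hh2s.add hg2s).div_const 2)))
    rw [norm_mul, RCLike.norm_conj]
    nlinarith [sq_nonneg (‖h (k+1)‖ - ‖g (k+1)‖), norm_nonneg (h (k+1)), norm_nonneg (g (k+1))]
  -- h, g tend to zero
  have htend : Tendsto (fun j => ‖h j‖) atTop (nhds 0) := by
    have h1 : Tendsto (fun j => ‖h j‖^2) atTop (nhds 0) := hh2.tendsto_atTop_zero
    have h2 : Tendsto (fun j => Real.sqrt (‖h j‖^2)) atTop (nhds (Real.sqrt 0)) :=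
      (Real.continuous_sqrt.tendsto 0).comp h1
    simpa [Real.sqrt_sq (norm_nonneg _)] using h2
  have gtend : Tendsto (fun j => ‖g j‖) atTop (nhds 0) := by
    have h1 : Tendsto (fun j => ‖g j‖^2) atTop (nhds 0) := hg2.tendsto_atTop_zero
    have h2 : Tendsto (fun j => Real.sqrt (‖g j‖^2)) atTop (nhds (Real.sqrt 0)) :=
      (Real.continuous_sqrt.tendsto 0).comp h1
    simpa [Real.sqrt_sq (norm_nonneg _)] using h2
  have hDto0 : Tendsto D atTop (nhds 0) := by
    rw [tendsto_zero_iff_norm_tendsto_zero]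
    have hub : ∀ N, ‖D N‖ ≤ Cb * (‖h N‖ * ‖g (N+1)‖ + ‖h (N+1)‖ * ‖g N‖) := by
      intro N
      have h1 : ‖D N‖ ≤ ‖(b N:ℂ)‖ * (‖h N * (starRingEnd ℂ) (g (N+1))‖ + ‖h (N+1) * (starRingEnd ℂ) (g N)‖) := by
        calc ‖D N‖ = ‖(b N:ℂ)‖ * ‖h N * (starRingEnd ℂ) (g (N+1)) - h (N+1) * (starRingEnd ℂ) (g N)‖ :=
              norm_mul _ _
          _ ≤ ‖(b N:ℂ)‖ * (‖h N * (starRingEnd ℂ) (g (N+1))‖ + ‖h (N+1) * (starRingEnd ℂ) (g N)‖) :=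
              mul_le_mul_of_nonneg_left (norm_sub_le _ _) (norm_nonneg _)
      simp only [norm_mul, RCLike.norm_conj] at h1
      refine le_trans h1 ?_
      have hb1 : ‖(b N:ℂ)‖ ≤ Cb := by rw [Complex.norm_real]; exact hCb N
      refine mul_le_mul_of_nonneg_right hb1 ?_
      positivity
    refine squeeze_zero (fun N => norm_nonneg _) hub ?_
    have l1 : Tendsto (fun N => ‖h N‖ * ‖g (N+1)‖ + ‖h (N+1)‖ * ‖g N‖) atTop (nhds 0) := by
      have t1 : Tendsto (fun N => ‖g (N+1)‖) atTop (nhds 0) :=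
        gtend.comp (tendsto_add_atTop_nat 1)
      have t2 : Tendsto (fun N => ‖h (N+1)‖) atTop (nhds 0) :=
        htend.comp (tendsto_add_atTop_nat 1)
      have := (htend.mul t1).add (t2.mul gtend)
      simpa using this
    have := l1.const_mul Cb
    simpa using this
  -- telescoping identity in the limit
  set T : ℂ := ∑' k, h (k+1) * (starRingEnd ℂ) (g (k+1)) with hT
  have keyT : (mu - (starRingEnd ℂ) lm) * T = D 0 := by
    have l1 : Tendsto (fun N => (mu - (starRingEnd ℂ) lm) * ∑ k ∈ Finset.range N, h (k+1) * (starRingEnd ℂ) (g (k+1))) atTop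
        (nhds ((mu - (starRingEnd ℂ) lm) * T)) := hsumw.hasSum.tendsto_sum_nat.const_mul _
    have l2 : Tendsto (fun N => (mu - (starRingEnd ℂ) lm) * ∑ k ∈ Finset.range N, h (k+1) * (starRingEnd ℂ) (g (k+1))) atTop (nhds (D 0)) := by
      have heq : ∀ N, (mu - (starRingEnd ℂ) lm) * ∑ k ∈ Finset.range N, h (k+1) * (starRingEnd ℂ) (g (k+1)) = D 0 - D N := by
        intro N
        rw [Finset.mul_sum]
        rw [Finset.sum_congr rfl (fun k _ => step k)]
        exact Finset.sum_range_sub' D N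
      have : Tendsto (fun N => D 0 - D N) atTop (nhds (D 0 - 0)) :=
        tendsto_const_nhds.sub hDto0
      rw [sub_zero] at this
      exact Tendsto.congr (fun N => (heq N).symm) this
    exact tendsto_nhds_unique l1 l2
  have hD0 : D 0 = (mu - (starRingEnd ℂ) lm) * (h 0 * (starRingEnd ℂ) (g 0)) := by
    simp only [hD]
    linear_combination (starRingEnd ℂ) (g 0) * hrow0h - h 0 * hconjg0
  have hfactor : (mu - (starRingEnd ℂ) lm) * (T - h 0 * (starRingEnd ℂ) (g 0)) = 0 := by
    rw [mul_sub, keyT, hD0]; ring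
  rcases mul_eq_zero.1 hfactor with hcase | hcase
  · have hmueq : mu = (starRingEnd ℂ) lm := sub_eq_zero.1 hcase
    have h1 : mu.im = -lm.im := by rw [hmueq]; simp
    have h2 : lm.im = 0 := by
      have h3 := hmu
      rw [h1] at h3
      linarith
    rw [hmueq]
    exact Complex.conj_eq_iff_im.2 h2
  · have hTeq : T = h 0 * (starRingEnd ℂ) (g 0) := sub_eq_zero.1 hcase
    have nsq : ∀ z : ℂ, ‖z‖^2 = Complex.normSq z := fun z => by
      rw [Complex.sq_norm]
    have hP : ∀ j, ‖g 0 * h (j+1) - h 0 * g (j+1)‖^2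
        = ‖g 0‖^2 * ‖h (j+1)‖^2 + ‖h 0‖^2 * ‖g (j+1)‖^2
          - 2 * ((g 0 * (starRingEnd ℂ) (h 0)) * (h (j+1) * (starRingEnd ℂ) (g (j+1)))).re := by
      intro j
      simp only [nsq]
      simp only [Complex.normSq_apply, Complex.mul_re, Complex.mul_im, Complex.sub_re,
        Complex.sub_im, Complex.conj_re, Complex.conj_im]
      ring
    have s1 : HasSum (fun j => ‖g 0‖^2 * ‖h (j+1)‖^2) (‖g 0‖^2 * ∑' j, ‖h (j+1)‖^2) :=
      hh2s.hasSum.mul_left _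
    have s2 : HasSum (fun j => ‖h 0‖^2 * ‖g (j+1)‖^2) (‖h 0‖^2 * ∑' j, ‖g (j+1)‖^2) :=
      hg2s.hasSum.mul_left _
    have s3c : HasSum (fun j => (g 0 * (starRingEnd ℂ) (h 0)) * (h (j+1) * (starRingEnd ℂ) (g (j+1))))
        ((g 0 * (starRingEnd ℂ) (h 0)) * T) := hsumw.hasSum.mul_left _
    have s3 : HasSum
        (fun j => 2 * ((g 0 * (starRingEnd ℂ) (h 0)) * (h (j+1) * (starRingEnd ℂ) (g (j+1)))).re)
        (2 * ((g 0 * (starRingEnd ℂ) (h 0)) * T).re) := (Complex.hasSum_re s3c).mul_left 2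
    have sw : HasSum (fun j => ‖g 0 * h (j+1) - h 0 * g (j+1)‖^2)
        ((‖g 0‖^2 * ∑' j, ‖h (j+1)‖^2) + (‖h 0‖^2 * ∑' j, ‖g (j+1)‖^2)
          - 2 * ((g 0 * (starRingEnd ℂ) (h 0)) * T).re) := by
      have hs := (s1.add s2).sub s3
      rw [show (fun j => ‖g 0 * h (j+1) - h 0 * g (j+1)‖^2)
        = (fun j => ‖g 0‖^2 * ‖h (j+1)‖^2 + ‖h 0‖^2 * ‖g (j+1)‖^2
          - 2 * ((g 0 * (starRingEnd ℂ) (h 0)) * (h (j+1) * (starRingEnd ℂ) (g (j+1)))).re)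
        from funext hP]
      exact hs
    have hre : ((g 0 * (starRingEnd ℂ) (h 0)) * T).re = ‖g 0‖^2 * ‖h 0‖^2 := by
      rw [hTeq]
      have e : g 0 * (starRingEnd ℂ) (h 0) * (h 0 * (starRingEnd ℂ) (g 0))
          = ((Complex.normSq (g 0) * Complex.normSq (h 0) : ℝ) : ℂ) := by
        push_cast
        rw [← Complex.mul_conj, ← Complex.mul_conj]
        ring
      rw [e, Complex.ofReal_re, nsq, nsq]
    have hSle : (∑' j, ‖g 0 * h (j+1) - h 0 * g (j+1)‖^2) ≤ 0 := by
      rw [sw.tsum_eq, hre]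
      have e1 : ‖g 0‖^2 * ∑' j, ‖h (j+1)‖^2 ≤ ‖g 0‖^2 * ‖h 0‖^2 :=
        mul_le_mul_of_nonneg_left hnph (by positivity)
      have e2 : ‖h 0‖^2 * ∑' j, ‖g (j+1)‖^2 ≤ ‖h 0‖^2 * ‖g 0‖^2 :=
        mul_le_mul_of_nonneg_left hnpg (by positivity)
      nlinarith [e1, e2]
    have hw1 : g 0 * h 1 - h 0 * g 1 = 0 := by
      have hnn : ∀ i : ℕ, (0:ℝ) ≤ ‖g 0 * h (i+1) - h 0 * g (i+1)‖^2 := fun i => by positivity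
      have h0' : ‖g 0 * h (0+1) - h 0 * g (0+1)‖^2 = 0 :=
        le_antisymm (le_trans (Summable.le_tsum sw.summable 0 (fun i _ => hnn i)) hSle) (hnn 0)
      have : ‖g 0 * h (0+1) - h 0 * g (0+1)‖ = 0 := by nlinarith [norm_nonneg (g 0 * h (0+1) - h 0 * g (0+1))]
      simpa using norm_eq_zero.1 this
    have hfin : (mu - lm) * (h 0 * g 0) = 0 := by
      linear_combination (-(g 0)) * hrow0h + h 0 * hrow0g - (b 0:ℂ) * hw1
    rcases mul_eq_zero.1 hfin with hc | hc
    · exact sub_eq_zero.1 hc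
    · exact absurd hc (mul_ne_zero hh0 hg0)

/-- Corollary 1: convergence of the eigenvalues of nonpositive type. -/

theorem stmt_8
    (a b : ℕ → ℝ) (ha : ∃ C : ℝ, ∀ j, |a j| ≤ C) (hbbd : ∃ C : ℝ, ∀ j, |b j| ≤ C)
    (hb : ∀ j, 0 < b j)
    (H : lp (fun _ : ℕ => ℂ) 2 →L[ℂ] lp (fun _ : ℕ => ℂ) 2)
    (hH0 : ∀ x : lp (fun _ : ℕ => ℂ) 2,
      (H x : ∀ _ : ℕ, ℂ) 0 = (a 0 : ℂ) * (x : ∀ _ : ℕ, ℂ) 0 - (b 0 : ℂ) * (x : ∀ _ : ℕ, ℂ) 1)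
    (hHk : ∀ x : lp (fun _ : ℕ => ℂ) 2, ∀ k : ℕ,
      (H x : ∀ _ : ℕ, ℂ) (k + 1) = (b k : ℂ) * (x : ∀ _ : ℕ, ℂ) k
        + (a (k + 1) : ℂ) * (x : ∀ _ : ℕ, ℂ) (k + 1) + (b (k + 1) : ℂ) * (x : ∀ _ : ℕ, ℂ) (k + 2))
    (lamInf : ℂ) (hlamInf : 0 ≤ lamInf.im ∧ ∃ f : lp (fun _ : ℕ => ℂ) 2, f ≠ 0 ∧
      H f = lamInf • f ∧
      -‖(f : ∀ _ : ℕ, ℂ) 0‖ ^ 2 + ∑' j : ℕ, ‖(f : ∀ _ : ℕ, ℂ) (j + 1)‖ ^ 2 ≤ 0)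
    (lam : ℕ → ℂ) (hlam : ∀ n : ℕ, 1 ≤ n → IsNPTev a b n (lam n)) :
    Tendsto lam atTop (nhds lamInf) := by
  classical
  obtain ⟨Ca, hCa⟩ := ha
  obtain ⟨Cb, hCb⟩ := hbbd
  obtain ⟨hlmim, fInf, hfne, hfeig, hfnp⟩ := hlamInf
  set g : ℕ → ℂ := (fInf : ∀ _ : ℕ, ℂ) with hgdef
  have hg2 : Summable (fun j => ‖g j‖^2) := by
    have h1 := (memℓp_gen_iff (by norm_num : 0 < (2:ENNReal).toReal)).1 (lp.memℓp fInf)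
    refine h1.congr (fun j => ?_)
    rw [ENNReal.toReal_ofNat, show ((2:ℝ)) = ((2:ℕ):ℝ) by norm_num, Real.rpow_natCast]
  have hgev : ∀ k, (H fInf : ∀ _ : ℕ, ℂ) k = lamInf * g k := by
    intro k
    rw [hfeig]
    rw [lp.coeFn_smul]
    simp [hgdef]
  have hrow0g : (a 0:ℂ) * g 0 - (b 0:ℂ) * g 1 = lamInf * g 0 := by
    rw [← hgev 0, hH0 fInf]
  have hrowkg : ∀ k, (b k:ℂ) * g k + (a (k+1):ℂ) * g (k+1) + (b (k+1):ℂ) * g (k+2)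
      = lamInf * g (k+1) := by
    intro k
    rw [← hgev (k+1), hHk fInf k]
  have hg2s : Summable (fun j => ‖g (j+1)‖^2) :=
    (summable_nat_add_iff (f := fun j => ‖g j‖^2) 1).2 hg2
  have hnpg : ∑' j, ‖g (j+1)‖^2 ≤ ‖g 0‖^2 := by linarith [hfnp]
  have hg0 : g 0 ≠ 0 := by
    intro h0
    apply hfne
    rw [lp.eq_zero_iff_coeFn_eq_zero]
    have hzero : ∑' j, ‖g (j+1)‖^2 ≤ 0 := by rw [h0] at hnpg; simpa using hnpg
    have hz : ∀ j : ℕ, ‖g (j+1)‖^2 = 0 := by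
      intro j
      have hle := Summable.le_tsum hg2s j (fun i _ => by positivity)
      have hge : (0:ℝ) ≤ ‖g (j+1)‖^2 := by positivity
      linarith
    funext j
    show g j = 0
    match j with
    | 0 => exact h0
    | (m+1) =>
      have h1 := hz m
      have : ‖g (m+1)‖ = 0 := by nlinarith [norm_nonneg (g (m+1))]
      exact norm_eq_zero.1 this
  refine tendsto_of_subseq_tendsto (fun ns hns => ?_)
  obtain ⟨k0, hk0⟩ := (hns.eventually_ge_atTop 1).exists_forall_of_atTop
  set ns' : ℕ → ℕ := fun k => ns (k + k0) with hns'def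
  have hns'1 : ∀ k, 1 ≤ ns' k := fun k => hk0 _ (by omega)
  have hns'T : Tendsto ns' atTop atTop := hns.comp (tendsto_add_atTop_nat k0)
  have hlambd : ∀ k, lam (ns' k) ∈ Metric.closedBall (0:ℂ) (Ca + 2*Cb) := by
    intro k
    obtain ⟨-, f, hf0, heig, -⟩ := hlam (ns' k) (hns'1 k)
    rw [mem_closedBall_zero_iff]
    exact ev_bound a b Ca Cb hCa hCb _ _ f hf0 heig
  obtain ⟨mu, -, φ, hφ, hφconv⟩ :=
    (isCompact_closedBall (0:ℂ) (Ca+2*Cb)).tendsto_subseq hlambd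
  have hGex : ∀ k : ℕ, ∃ G : ℕ → ℂ, G 0 = 1 ∧ (∀ j, ‖G j‖ ≤ 1) ∧
      (∀ m, ∑ j ∈ Finset.range m, ‖G (j+1)‖^2 ≤ 1) ∧
      ((a 0 : ℂ) * G 0 - (b 0 : ℂ) * G 1 = lam (ns' (φ k)) * G 0) ∧
      (∀ i, i + 2 ≤ ns' (φ k) → (b i : ℂ) * G i + (a (i+1) : ℂ) * G (i+1)
        + (b (i+1) : ℂ) * G (i+2) = lam (ns' (φ k)) * G (i+1)) :=
    fun k => normalized_ev a b (ns' (φ k)) (lam (ns' (φ k))) (hns'1 _) (hlam _ (hns'1 _))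
  choose G hG0 hGbd hGpart hGrow0 hGrowk using hGex
  have hGmem : ∀ k, G k ∈ Set.pi Set.univ (fun _ : ℕ => Metric.closedBall (0:ℂ) 1) := by
    intro k
    rw [Set.mem_pi]
    intro j _
    rw [mem_closedBall_zero_iff]
    exact hGbd k j
  obtain ⟨h, -, ψ, hψ, hψconv⟩ :=
    (isCompact_univ_pi (fun _ : ℕ => isCompact_closedBall (0:ℂ) 1)).tendsto_subseq hGmem
  have hptw : ∀ j, Tendsto (fun k => G (ψ k) j) atTop (nhds (h j)) :=
    fun j => tendsto_pi_nhds.1 hψconv j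
  have hμconv : Tendsto (fun k => lam (ns' (φ (ψ k)))) atTop (nhds mu) :=
    hφconv.comp hψ.tendsto_atTop
  have hmT : Tendsto (fun k => ns' (φ (ψ k))) atTop atTop :=
    hns'T.comp (hφ.tendsto_atTop.comp hψ.tendsto_atTop)
  have hh0 : h 0 = 1 := by
    refine tendsto_nhds_unique (hptw 0) ?_
    exact Tendsto.congr (fun k => (hG0 (ψ k)).symm) tendsto_const_nhds
  have hpart : ∀ m, ∑ j ∈ Finset.range m, ‖h (j+1)‖^2 ≤ 1 := by
    intro m
    have hconv : Tendsto (fun k => ∑ j ∈ Finset.range m, ‖G (ψ k) (j+1)‖^2) atTop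
        (nhds (∑ j ∈ Finset.range m, ‖h (j+1)‖^2)) :=
      tendsto_finset_sum _ (fun j _ => ((hptw (j+1)).norm).pow 2)
    exact le_of_tendsto hconv (Eventually.of_forall (fun k => hGpart (ψ k) m))
  have hh2s : Summable (fun j => ‖h (j+1)‖^2) :=
    summable_of_sum_range_le (fun j => by positivity) hpart
  have hh2 : Summable (fun j => ‖h j‖^2) :=
    (summable_nat_add_iff (f := fun j => ‖h j‖^2) 1).1 hh2s
  have hnph : ∑' j, ‖h (j+1)‖^2 ≤ ‖h 0‖^2 := by
    rw [hh0]
    simpa using Summable.tsum_le_of_sum_range_le hh2s hpart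
  have hrow0h : (a 0:ℂ) * h 0 - (b 0:ℂ) * h 1 = mu * h 0 := by
    have l1 : Tendsto (fun k => (a 0:ℂ) * G (ψ k) 0 - (b 0:ℂ) * G (ψ k) 1) atTop
        (nhds ((a 0:ℂ) * h 0 - (b 0:ℂ) * h 1)) :=
      (tendsto_const_nhds.mul (hptw 0)).sub (tendsto_const_nhds.mul (hptw 1))
    have l2 : Tendsto (fun k => (a 0:ℂ) * G (ψ k) 0 - (b 0:ℂ) * G (ψ k) 1) atTop
        (nhds (mu * h 0)) :=
      Tendsto.congr (fun k => (hGrow0 (ψ k)).symm) (hμconv.mul (hptw 0))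
    exact tendsto_nhds_unique l1 l2
  have hrowkh : ∀ k, (b k:ℂ) * h k + (a (k+1):ℂ) * h (k+1) + (b (k+1):ℂ) * h (k+2)
      = mu * h (k+1) := by
    intro k
    have l1 : Tendsto (fun j => (b k:ℂ) * G (ψ j) k + (a (k+1):ℂ) * G (ψ j) (k+1)
        + (b (k+1):ℂ) * G (ψ j) (k+2)) atTop
        (nhds ((b k:ℂ) * h k + (a (k+1):ℂ) * h (k+1) + (b (k+1):ℂ) * h (k+2))) :=
      ((tendsto_const_nhds.mul (hptw k)).add (tendsto_const_nhds.mul (hptw (k+1)))).add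
        (tendsto_const_nhds.mul (hptw (k+2)))
    have hev : ∀ᶠ j in atTop, lam (ns' (φ (ψ j))) * G (ψ j) (k+1)
        = (b k:ℂ) * G (ψ j) k + (a (k+1):ℂ) * G (ψ j) (k+1) + (b (k+1):ℂ) * G (ψ j) (k+2) := by
      filter_upwards [hmT.eventually_ge_atTop (k+2)] with j hj
      exact (hGrowk (ψ j) k hj).symm
    have l2 : Tendsto (fun j => (b k:ℂ) * G (ψ j) k + (a (k+1):ℂ) * G (ψ j) (k+1)
        + (b (k+1):ℂ) * G (ψ j) (k+2)) atTop (nhds (mu * h (k+1))) :=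
      Tendsto.congr' hev (hμconv.mul (hptw (k+1)))
    exact tendsto_nhds_unique l1 l2
  have hmuim : 0 ≤ mu.im := by
    have himconv : Tendsto (fun k => (lam (ns' (φ (ψ k)))).im) atTop (nhds mu.im) :=
      (Complex.continuous_im.tendsto mu).comp hμconv
    exact ge_of_tendsto himconv (Eventually.of_forall (fun k => (hlam _ (hns'1 _)).1))
  have hh0ne : h 0 ≠ 0 := by rw [hh0]; exact one_ne_zero
  have hmueq : mu = lamInf :=
    unique_npt a b Cb hCb mu lamInf hmuim hlmim h g hh2 hg2 hh0ne hg0 hrow0h hrowkh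
      hrow0g hrowkg hnph hnpg
  exact ⟨fun n => φ (ψ n) + k0, hmueq ▸ hμconv⟩
end

section
/- Pontryagin structure of the truncations: for every n ≥ 1, the characteristic polynomial of the matrix H_{[0,n]} has at most two roots (counted with multiplicity) that do not lie on the real axis. -/
open MeasureTheory Complex Filter

namespace Stmt14Aux

open Matrix Polynomial Module

/-- The signature matrix J = diag(-1, 1, ..., 1). -/
noncomputable def Jm (m : ℕ) : Matrix (Fin m) (Fin m) ℂ :=
  Matrix.diagonal (fun i => if (i : ℕ) = 0 then (-1 : ℂ) else 1)

/-- The indefinite inner product `⟨x, J y⟩`. -/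
noncomputable def Bf {m : ℕ} (x y : Fin m → ℂ) : ℂ :=
  star x ⬝ᵥ (Jm m).mulVec y

variable {m : ℕ}

lemma Bf_add_left (x x' y : Fin m → ℂ) : Bf (x + x') y = Bf x y + Bf x' y := by
  simp [Bf, star_add, add_dotProduct]

lemma Bf_add_right (x y y' : Fin m → ℂ) : Bf x (y + y') = Bf x y + Bf x y' := by
  simp [Bf, Matrix.mulVec_add, dotProduct_add]

lemma Bf_smul_left (c : ℂ) (x y : Fin m → ℂ) :
    Bf (c • x) y = (starRingEnd ℂ) c * Bf x y := by
  simp [Bf, star_smul, smul_dotProduct, smul_eq_mul, Complex.star_def]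

lemma Bf_smul_right (c : ℂ) (x y : Fin m → ℂ) : Bf x (c • y) = c * Bf x y := by
  simp [Bf, Matrix.mulVec_smul, dotProduct_smul, smul_eq_mul]

lemma Bf_sub_left (x x' y : Fin m → ℂ) : Bf (x - x') y = Bf x y - Bf x' y := by
  simp [Bf, star_sub, sub_dotProduct]

lemma Bf_sub_right (x y y' : Fin m → ℂ) : Bf x (y - y') = Bf x y - Bf x y' := by
  simp [Bf, Matrix.mulVec_sub, dotProduct_sub]

lemma Bf_zero_left (y : Fin m → ℂ) : Bf 0 y = 0 := by
  simp [Bf]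

lemma Bf_zero_right (x : Fin m → ℂ) : Bf x 0 = 0 := by
  simp [Bf]

lemma Bf_mulVec {M : Matrix (Fin m) (Fin m) ℂ} (hreal : M.map star = M)
    (hsym : Mᵀ * Jm m = Jm m * M) (x y : Fin m → ℂ) :
    Bf (M.mulVec x) y = Bf x (M.mulVec y) := by
  have hE : ∀ j k, star (M j k) = M j k := by
    intro j k
    conv_rhs => rw [← hreal]
    rfl
  have h1 : star (M.mulVec x) = M.mulVec (star x) := by
    funext j
    simp [Matrix.mulVec, dotProduct, star_sum, star_mul', hE]
  have h2 : ∀ v w : Fin m → ℂ, (M.mulVec v) ⬝ᵥ w = v ⬝ᵥ (Mᵀ.mulVec w) := by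
    intro v w
    rw [Matrix.dotProduct_mulVec v Mᵀ w, Matrix.vecMul_transpose, dotProduct_comm,
      Matrix.dotProduct_mulVec, dotProduct_comm]
  calc Bf (M.mulVec x) y = (M.mulVec (star x)) ⬝ᵥ (Jm m).mulVec y := by rw [Bf, h1]
    _ = star x ⬝ᵥ (Mᵀ * Jm m).mulVec y := by rw [h2, Matrix.mulVec_mulVec]
    _ = star x ⬝ᵥ (Jm m).mulVec (M.mulVec y) := by rw [hsym, ← Matrix.mulVec_mulVec]
    _ = Bf x (M.mulVec y) := rfl

/-- Root subspaces for `lam`, `mu` with `conj lam ≠ mu` are `Bf`-orthogonal. -/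
lemma neutral {M : Matrix (Fin m) (Fin m) ℂ} (hreal : M.map star = M)
    (hsym : Mᵀ * Jm m = Jm m * M) {lam mu : ℂ} (h : (starRingEnd ℂ) lam ≠ mu) :
    ∀ (k p q : ℕ) (x y : Fin m → ℂ), p + q ≤ k →
      (((Matrix.toLin' M : Module.End ℂ (Fin m → ℂ)) - lam • 1) ^ p) x = 0 →
      (((Matrix.toLin' M : Module.End ℂ (Fin m → ℂ)) - mu • 1) ^ q) y = 0 →
      Bf x y = 0 := by
  intro k
  induction k with
  | zero =>
    intro p q x y hpq hx hy
    have hp : p = 0 := by omega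
    subst hp
    simp only [pow_zero, Module.End.one_apply] at hx
    rw [hx, Bf_zero_left]
  | succ k ih =>
    intro p q x y hpq hx hy
    rcases p with _ | p
    · simp only [pow_zero, Module.End.one_apply] at hx
      rw [hx, Bf_zero_left]
    rcases q with _ | q
    · simp only [pow_zero, Module.End.one_apply] at hy
      rw [hy, Bf_zero_right]
    set φ : Module.End ℂ (Fin m → ℂ) := (Matrix.toLin' M : Module.End ℂ (Fin m → ℂ)) with hφ
    have hx' : ((φ - lam • 1) ^ p) ((φ - lam • 1) x) = 0 := by
      rw [← Module.End.mul_apply, ← pow_succ]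
      exact hx
    have hy' : ((φ - mu • 1) ^ q) ((φ - mu • 1) y) = 0 := by
      rw [← Module.End.mul_apply, ← pow_succ]
      exact hy
    have e1 : (φ - lam • 1) x = M.mulVec x - lam • x := by
      simp [hφ, Matrix.toLin'_apply]
    have e2 : (φ - mu • 1) y = M.mulVec y - mu • y := by
      simp [hφ, Matrix.toLin'_apply]
    have h1 : Bf (M.mulVec x - lam • x) y = 0 := by
      rw [← e1]
      exact ih p (q + 1) _ _ (by omega) hx' hy
    have h2 : Bf x (M.mulVec y - mu • y) = 0 := by
      rw [← e2]
      exact ih (p + 1) q _ _ (by omega) hx hy'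
    rw [Bf_sub_left, Bf_smul_left, sub_eq_zero] at h1
    rw [Bf_sub_right, Bf_smul_right, sub_eq_zero] at h2
    rw [Bf_mulVec hreal hsym] at h1
    have : ((starRingEnd ℂ) lam - mu) * Bf x y = 0 := by
      rw [sub_mul, h1.symm, h2, sub_self]
    rcases mul_eq_zero.mp this with hc | hc
    · exact absurd (sub_eq_zero.mp hc) h
    · exact hc

lemma neutral_mem {M : Matrix (Fin m) (Fin m) ℂ} (hreal : M.map star = M)
    (hsym : Mᵀ * Jm m = Jm m * M) {lam mu : ℂ} (h : (starRingEnd ℂ) lam ≠ mu)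
    {x y : Fin m → ℂ}
    (hx : x ∈ Module.End.maxGenEigenspace (Matrix.toLin' M : Module.End ℂ (Fin m → ℂ)) lam)
    (hy : y ∈ Module.End.maxGenEigenspace (Matrix.toLin' M : Module.End ℂ (Fin m → ℂ)) mu) :
    Bf x y = 0 := by
  rw [Module.End.mem_maxGenEigenspace] at hx hy
  obtain ⟨p, hp⟩ := hx
  obtain ⟨q, hq⟩ := hy
  exact neutral hreal hsym h (p + q) p q x y le_rfl hp hq

lemma charpoly_toLin' (M : Matrix (Fin m) (Fin m) ℂ) :
    LinearMap.charpoly (Matrix.toLin' M : Module.End ℂ (Fin m → ℂ)) = M.charpoly := by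
  rw [← LinearMap.charpoly_toMatrix (Matrix.toLin' M : Module.End ℂ (Fin m → ℂ))
    (Pi.basisFun ℂ (Fin m)), LinearMap.toMatrix_eq_toMatrix', LinearMap.toMatrix'_toLin']

lemma charpoly_shift (M : Matrix (Fin m) (Fin m) ℂ) (lam : ℂ) :
    (M - lam • 1).charpoly = M.charpoly.comp (X + C lam) := by
  classical
  set τ : ℂ[X] →+* ℂ[X] := eval₂RingHom Polynomial.C (X + C lam) with hτ
  have hcomp : M.charpoly.comp (X + C lam) = τ M.charpoly := rfl
  have hτX : τ X = X + C lam := eval₂_X _ _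
  have hτC : ∀ c : ℂ, τ (C c) = C c := fun c => eval₂_C _ _
  rw [hcomp, Matrix.charpoly, Matrix.charpoly, RingHom.map_det, RingHom.mapMatrix_apply]
  congr 1
  ext i j : 2
  by_cases hij : i = j
  · subst hij
    rw [Matrix.map_apply, charmatrix_apply_eq, charmatrix_apply_eq, map_sub τ, hτX, hτC]
    simp only [Matrix.sub_apply, Matrix.smul_apply, Matrix.one_apply_eq, smul_eq_mul, mul_one,
      Polynomial.C_sub]
    ring
  · rw [Matrix.map_apply, charmatrix_apply_ne _ _ _ hij, charmatrix_apply_ne _ _ _ hij,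
      map_neg τ, hτC]
    simp [Matrix.sub_apply, Matrix.one_apply_ne hij]

lemma toLin'_sub_smul_one (M : Matrix (Fin m) (Fin m) ℂ) (lam : ℂ) :
    (Matrix.toLin' (M - lam • 1) : Module.End ℂ (Fin m → ℂ)) =
      (Matrix.toLin' M : Module.End ℂ (Fin m → ℂ)) - lam • 1 := by
  apply LinearMap.ext
  intro v
  simp [Matrix.toLin'_apply, Matrix.sub_mulVec, Matrix.smul_mulVec, Matrix.one_mulVec]

lemma finrank_maxGen (M : Matrix (Fin m) (Fin m) ℂ) (lam : ℂ) :
    Module.finrank ℂ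
        (Module.End.maxGenEigenspace (Matrix.toLin' M : Module.End ℂ (Fin m → ℂ)) lam)
      = M.charpoly.rootMultiplicity lam := by
  have hspace :
      Module.End.maxGenEigenspace (Matrix.toLin' (M - lam • 1) : Module.End ℂ (Fin m → ℂ)) 0
        = Module.End.maxGenEigenspace (Matrix.toLin' M : Module.End ℂ (Fin m → ℂ)) lam := by
    ext x
    rw [Module.End.mem_maxGenEigenspace, Module.End.mem_maxGenEigenspace]
    simp [toLin'_sub_smul_one]
  rw [rootMultiplicity_eq_natTrailingDegree, ← charpoly_shift, ← charpoly_toLin',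
    ← LinearMap.finrank_maxGenEigenspace_zero_eq, hspace]

lemma Bf_self_ne_zero (z : Fin (m + 1) → ℂ) (h0 : z 0 = 0) (hz : z ≠ 0) : Bf z z ≠ 0 := by
  have hform : Bf z z = ((∑ j, Complex.normSq (z j) : ℝ) : ℂ) := by
    rw [Bf]
    rw [show ((∑ j, Complex.normSq (z j) : ℝ) : ℂ) = ∑ j, ((Complex.normSq (z j) : ℝ) : ℂ) by
      push_cast; ring]
    apply Finset.sum_congr rfl
    intro j _
    simp only [Jm]
    rw [Matrix.mulVec_diagonal]
    by_cases hj : (j : ℕ) = 0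
    · have : j = 0 := by
        ext
        simpa using hj
      subst this
      simp [h0]
    · simp only [hj, if_false, one_mul, Pi.star_apply, Complex.star_def]
      rw [mul_comm, Complex.mul_conj]
  intro hc
  rw [hform] at hc
  have hsum : (∑ j, Complex.normSq (z j)) = 0 := by exact_mod_cast hc
  apply hz
  funext j
  have hj : Complex.normSq (z j) = 0 := by
    have := (Finset.sum_eq_zero_iff_of_nonneg
      (fun i _ => Complex.normSq_nonneg (z i))).mp hsum j (Finset.mem_univ j)
    exact this
  simpa using Complex.normSq_eq_zero.mp hj

lemma no_neutral_pair (x y : Fin (m + 1) → ℂ)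
    (hind : ∀ c d : ℂ, c • x + d • y = 0 → c = 0 ∧ d = 0)
    (hxx : Bf x x = 0) (hxy : Bf x y = 0) (hyx : Bf y x = 0) (hyy : Bf y y = 0) : False := by
  by_cases h0 : x 0 = 0
  · have hx0 : x ≠ 0 := by
      intro h
      have := (hind 1 0 (by simp [h])).1
      simp at this
    exact Bf_self_ne_zero x h0 hx0 hxx
  · set z : Fin (m + 1) → ℂ := (x 0) • y - (y 0) • x with hzdef
    have hz0 : z 0 = 0 := by
      simp [hzdef, mul_comm]
    have hzne : z ≠ 0 := by
      intro h
      have h' : (-(y 0)) • x + (x 0) • y = 0 := by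
        rw [← h, hzdef]
        module
      exact h0 (hind _ _ h').2
    have hzz : Bf z z = 0 := by
      simp only [hzdef, Bf_sub_left, Bf_sub_right, Bf_smul_left, Bf_smul_right,
        hxx, hxy, hyx, hyy]
      ring
    exact Bf_self_ne_zero z hz0 hzne hzz

set_option synthInstance.maxHeartbeats 1000000 in
/-- At most one root (with multiplicity) of the char. polynomial in a region that is
disjoint from its conjugate. -/
lemma card_filter_le_one (M : Matrix (Fin (m + 1)) (Fin (m + 1)) ℂ)
    (hreal : M.map star = M) (hsym : Mᵀ * Jm (m + 1) = Jm (m + 1) * M)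
    (P : ℂ → Prop) [DecidablePred P]
    (hP : ∀ z w, P z → P w → (starRingEnd ℂ) z ≠ w) :
    (Multiset.filter P M.charpoly.roots).card ≤ 1 := by
  by_contra hc
  push_neg at hc
  set F := Multiset.filter P M.charpoly.roots with hF
  have hc2 : 2 ≤ F.card := hc
  have hFne : F ≠ 0 := by
    intro h
    rw [h] at hc2
    simp at hc2
  obtain ⟨z1, hz1⟩ := Multiset.exists_mem_of_ne_zero hFne
  have hcard_erase : 1 ≤ (F.erase z1).card := by
    rw [Multiset.card_erase_of_mem hz1, Nat.pred_eq_sub_one]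
    omega
  have hFene : F.erase z1 ≠ 0 := by
    intro h
    rw [h] at hcard_erase
    simp at hcard_erase
  obtain ⟨z2, hz2⟩ := Multiset.exists_mem_of_ne_zero hFene
  have hz2F : z2 ∈ F := Multiset.mem_of_mem_erase hz2
  have hPz1 : P z1 := (Multiset.mem_filter.mp hz1).2
  have hPz2 : P z2 := (Multiset.mem_filter.mp hz2F).2
  have hroot1 : z1 ∈ M.charpoly.roots := (Multiset.mem_filter.mp hz1).1
  have hroot2 : z2 ∈ M.charpoly.roots := (Multiset.mem_filter.mp hz2F).1
  set φ : Module.End ℂ (Fin (m + 1) → ℂ) := (Matrix.toLin' M : Module.End ℂ (Fin (m + 1) → ℂ))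
    with hφdef
  set E : ℂ → Submodule ℂ (Fin (m + 1) → ℂ) := fun lam => Module.End.maxGenEigenspace φ lam
    with hEdef
  -- produce x ∈ E lam1, y ∈ E lam2, independent, with P lam1, P lam2
  obtain ⟨lam1, lam2, hPl1, hPl2, x, y, hxE, hyE, hind⟩ :
      ∃ lam1 lam2, P lam1 ∧ P lam2 ∧ ∃ x y : Fin (m + 1) → ℂ,
        x ∈ E lam1 ∧ y ∈ E lam2 ∧
        (∀ c d : ℂ, c • x + d • y = 0 → c = 0 ∧ d = 0) := by
    by_cases hzz : z1 = z2
    · -- double root: dim of gen. eigenspace ≥ 2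
      subst hzz
      have hcount : 2 ≤ M.charpoly.roots.count z1 := by
        have h1 : 1 ≤ (F.erase z1).count z1 := Multiset.one_le_count_iff_mem.mpr hz2
        have h2 : F.count z1 = (F.erase z1).count z1 + 1 := by
          rw [← Multiset.count_cons_self z1 (F.erase z1), Multiset.cons_erase hz1]
        have h3 : F.count z1 ≤ M.charpoly.roots.count z1 :=
          Multiset.count_le_of_le z1 (Multiset.filter_le _ _)
        omega
      rw [Polynomial.count_roots] at hcount
      have hdim : 2 ≤ Module.finrank ℂ (E z1) := by
        rw [hEdef]
        rw [finrank_maxGen M z1]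
        exact hcount
      have : FiniteDimensional ℂ (E z1) := inferInstance
      set bb := Module.finBasis ℂ (E z1) with hbb
      set i0 : Fin (Module.finrank ℂ (E z1)) := ⟨0, by omega⟩ with hi0
      set i1 : Fin (Module.finrank ℂ (E z1)) := ⟨1, by omega⟩ with hi1
      have h01 : i0 ≠ i1 := Fin.ne_of_val_ne (by norm_num [hi0, hi1])
      refine ⟨z1, z1, hPz1, hPz1, (bb i0 : E z1), (bb i1 : E z1),
        (bb i0).2, (bb i1).2, ?_⟩
      intro c d hcd
      have hsum : c • bb i0 + d • bb i1 = (0 : E z1) := by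
        apply Subtype.coe_injective
        push_cast
        exact hcd
      constructor
      · have hc := congrArg (bb.coord i0) hsum
        simpa [Basis.coord_apply, map_add, _root_.map_smul, Basis.repr_self,
          Finsupp.single_apply, h01, Ne.symm h01] using hc
      · have hd := congrArg (bb.coord i1) hsum
        simpa [Basis.coord_apply, map_add, _root_.map_smul, Basis.repr_self,
          Finsupp.single_apply, h01, Ne.symm h01] using hd
    · -- two distinct eigenvalues
      have hx : ∃ x : Fin (m + 1) → ℂ, x ∈ E z1 ∧ x ≠ 0 := by
        have hpos : 0 < Module.finrank ℂ (E z1) := by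
          rw [hEdef, finrank_maxGen M z1]
          rw [← Polynomial.count_roots]
          exact Multiset.one_le_count_iff_mem.mpr hroot1
        obtain ⟨⟨x, hxmem⟩, hxne⟩ := Module.finrank_pos_iff_exists_ne_zero.mp hpos
        refine ⟨x, hxmem, ?_⟩
        intro h
        apply hxne
        exact Subtype.coe_injective h
      have hy : ∃ y : Fin (m + 1) → ℂ, y ∈ E z2 ∧ y ≠ 0 := by
        have hpos : 0 < Module.finrank ℂ (E z2) := by
          rw [hEdef, finrank_maxGen M z2]
          rw [← Polynomial.count_roots]
          exact Multiset.one_le_count_iff_mem.mpr hroot2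
        obtain ⟨⟨y, hymem⟩, hyne⟩ := Module.finrank_pos_iff_exists_ne_zero.mp hpos
        refine ⟨y, hymem, ?_⟩
        intro h
        apply hyne
        exact Subtype.coe_injective h
      obtain ⟨x, hxmem, hxne⟩ := hx
      obtain ⟨y, hymem, hyne⟩ := hy
      have hdisj : Disjoint (E z1) (E z2) :=
        (Module.End.independent_maxGenEigenspace φ).pairwiseDisjoint hzz
      refine ⟨z1, z2, hPz1, hPz2, x, y, hxmem, hymem, ?_⟩
      intro c d hcd
      have hmem1 : c • x ∈ E z1 := Submodule.smul_mem _ _ hxmem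
      have hmem2 : c • x ∈ E z2 := by
        have : c • x = -(d • y) := by
          rw [eq_neg_iff_add_eq_zero]
          exact hcd
        rw [this]
        exact Submodule.neg_mem _ (Submodule.smul_mem _ _ hymem)
      have hcx : c • x = 0 := Submodule.disjoint_def.mp hdisj (c • x) hmem1 hmem2
      have hc0 : c = 0 := by
        rcases smul_eq_zero.mp hcx with h | h
        · exact h
        · exact absurd h hxne
      refine ⟨hc0, ?_⟩
      rw [hc0, zero_smul, zero_add] at hcd
      rcases smul_eq_zero.mp hcd with h | h
      · exact h
      · exact absurd h hyne
  -- now derive the contradiction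
  have hBxx : Bf x x = 0 := neutral_mem hreal hsym (hP lam1 lam1 hPl1 hPl1) hxE hxE
  have hBxy : Bf x y = 0 := neutral_mem hreal hsym (hP lam1 lam2 hPl1 hPl2) hxE hyE
  have hByx : Bf y x = 0 := neutral_mem hreal hsym (hP lam2 lam1 hPl2 hPl1) hyE hxE
  have hByy : Bf y y = 0 := neutral_mem hreal hsym (hP lam2 lam2 hPl2 hPl2) hyE hyE
  exact no_neutral_pair x y hind hBxx hBxy hByx hByy

end Stmt14Aux

open Stmt14Aux Matrix Polynomial in
/-- Pontryagin structure of the truncations: at most two non-real roots of the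
characteristic polynomial, counted with multiplicity. -/
theorem stmt_14 (a b : ℕ → ℝ) (hb : ∀ j, 0 < b j) (n : ℕ) (hn : 1 ≤ n) :
    (Multiset.filter (fun z => z.im ≠ 0) (JacobiH0 a b n).charpoly.roots).card ≤ 2 := by
  classical
  set M := JacobiH0 a b n with hM
  have hreal : M.map star = M := by
    ext i j
    simp only [hM, JacobiH0, Matrix.map_apply, Matrix.of_apply]
    split_ifs <;> simp [Complex.star_def, Complex.conj_ofReal]
  have hsym : Mᵀ * Jm (n + 1) = Jm (n + 1) * M := by
    ext i j
    obtain ⟨iv, hi⟩ := i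
    obtain ⟨jv, hj⟩ := j
    simp only [Jm, Matrix.mul_diagonal, Matrix.diagonal_mul, Matrix.transpose_apply, hM,
      JacobiH0, Matrix.of_apply, Fin.val_mk]
    split_ifs <;> subst_vars <;> first | (exfalso; omega) | ring
  have hP1 : (Multiset.filter (fun z : ℂ => 0 < z.im) M.charpoly.roots).card ≤ 1 := by
    apply card_filter_le_one M hreal hsym
    intro z w hz hw heq
    rw [← heq] at hw
    simp only [Complex.conj_im] at hw
    linarith
  have hP2 : (Multiset.filter (fun z : ℂ => z.im < 0) M.charpoly.roots).card ≤ 1 := by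
    apply card_filter_le_one M hreal hsym
    intro z w hz hw heq
    rw [← heq] at hw
    simp only [Complex.conj_im] at hw
    linarith
  set s := M.charpoly.roots with hs
  have hsplit :
      (Multiset.filter (fun z : ℂ => z.im ≠ 0) s).card =
        (Multiset.filter (fun z : ℂ => 0 < z.im)
            (Multiset.filter (fun z : ℂ => z.im ≠ 0) s)).card +
        (Multiset.filter (fun z : ℂ => ¬ 0 < z.im)
            (Multiset.filter (fun z : ℂ => z.im ≠ 0) s)).card := by
    rw [← Multiset.card_add, Multiset.filter_add_not]
  have hle1 : (Multiset.filter (fun z : ℂ => 0 < z.im)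
      (Multiset.filter (fun z : ℂ => z.im ≠ 0) s)).card ≤
      (Multiset.filter (fun z : ℂ => 0 < z.im) s).card :=
    Multiset.card_le_card (Multiset.filter_le_filter _ (Multiset.filter_le _ s))
  have hle2 : (Multiset.filter (fun z : ℂ => ¬ 0 < z.im)
      (Multiset.filter (fun z : ℂ => z.im ≠ 0) s)).card ≤
      (Multiset.filter (fun z : ℂ => z.im < 0) s).card := by
    apply Multiset.card_le_card
    rw [Multiset.filter_filter]
    apply Multiset.monotone_filter_right
    intro z hz
    rcases hz with ⟨h1, h2⟩
    rcases lt_trichotomy z.im 0 with h | h | h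
    · exact h
    · exact absurd h h2
    · exact absurd h h1
  omega
end
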